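/- arXiv:1410.4638 — 6 statements merged into one kernel-verified Lean document; each statement's English description precedes it below -/
import Mathlib

section
/- Let $\chi \colon E^\times \to \mathbb{C}^\times$ be a group homomorphism trivial on $\mathbb{Q}_p^\times$ with conductor exponent $n > 0$. Then for every integer $k$ with $0 \le k \le n$: the value $\chi(1 + b\theta)$, for $b \in p^k\mathbb{Z}_p$ with $1+b \in \mathbb{Z}_p^\times$, depends only on the class of $b$ modulo $p^n\mathbb{Z}_p$, and the sum $\sum_b \chi(1+b\theta)^{-1}$, taken over a complete set of representatives $b$ of $p^k\mathbb{Z}_p / p^n\mathbb{Z}_p$ subject to $1+b \in \mathbb{Z}_p^\times$, equals $0$ if $k \le n-1$ and equals $1$ if $k = n$. -/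
open scoped Classical

namespace ArakawaSplit

variable (p : ℕ) [Fact p.Prime]

/-- The split quadratic étale algebra `E = ℚ_p × ℚ_p`, with `ℚ_p` embedded diagonally. -/
abbrev E := ℚ_[p] × ℚ_[p]

/-- `θ = (1,0) ∈ E`. -/
noncomputable def θ : E p := (1, 0)

/-- The inclusion `ℤ_p → E` (diagonal). -/
noncomputable def ι : ℤ_[p] →+* E p := algebraMap ℤ_[p] (E p)

/-- Membership in `𝒪_E = ℤ_p × ℤ_p ⊆ E`. -/
def MemOE (z : E p) : Prop := (∃ x : ℤ_[p], z.1 = x) ∧ (∃ y : ℤ_[p], z.2 = y)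

/-- Membership in `𝒪_{E,i} = ℤ_p + p^i 𝒪_E ⊆ E`. -/
def MemOEi (i : ℕ) (z : E p) : Prop :=
  ∃ a w₁ w₂ : ℤ_[p],
    z = ((a : ℚ_[p]) + (p : ℚ_[p]) ^ i * w₁, (a : ℚ_[p]) + (p : ℚ_[p]) ^ i * w₂)

/-- Membership of a unit `u ∈ Eˣ` in `𝒪_{E,i}^× = 𝒪_{E,i} ∩ 𝒪_E^×`. -/
def MemOEiUnits (i : ℕ) (u : (E p)ˣ) : Prop :=
  MemOEi p i ↑u ∧ MemOE p ↑u ∧ MemOE p ↑u⁻¹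

/-- `χ : E^× → ℂ^×` is trivial on the diagonally embedded `ℚ_p^×`. -/
def TrivialOnQp (χ : (E p)ˣ →* ℂˣ) : Prop :=
  ∀ t : ℚ_[p]ˣ, χ (Units.map (algebraMap ℚ_[p] (E p)).toMonoidHom t) = 1

/-- `χ` has conductor exponent `n`: it is trivial on `𝒪_{E,n}^×` and, when `n > 0`,
nontrivial on `𝒪_{E,n-1}^×`. -/
def CondExp (χ : (E p)ˣ →* ℂˣ) (n : ℕ) : Prop :=
  (∀ u : (E p)ˣ, MemOEiUnits p n u → χ u = 1) ∧
  (0 < n → ∃ u : (E p)ˣ, MemOEiUnits p (n - 1) u ∧ χ u ≠ 1)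

/-- The value of `χ` at an element of `E`, with junk value `0` at non-units. -/
noncomputable def chiV (χ : (E p)ˣ →* ℂˣ) (z : E p) : ℂ :=
  if h : IsUnit z then (χ h.unit : ℂ) else 0

end ArakawaSplit

open ArakawaSplit

namespace Lem341
variable (p : ℕ) [Fact p.Prime]

/-- monoid hom `ℤ_p →* E`, `x ↦ (x,1)`. -/
noncomputable def mh : ℤ_[p] →* E p where
  toFun x := ((x : ℚ_[p]), 1)
  map_one' := by simp [Prod.ext_iff]
  map_mul' x y := by simp [Prod.ext_iff]

noncomputable def Uh : ℤ_[p]ˣ →* (E p)ˣ := Units.map (mh p)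

lemma Uh_val (v : ℤ_[p]ˣ) : ((Uh p v : (E p)ˣ) : E p) = (((v : ℤ_[p]) : ℚ_[p]), 1) := rfl

lemma Uh_inv_val (v : ℤ_[p]ˣ) :
    ((Uh p v)⁻¹ : (E p)ˣ).val = ((((v⁻¹ : ℤ_[p]ˣ) : ℤ_[p]) : ℚ_[p]), 1) := by
  rw [← map_inv]; rfl

lemma chi_Uh_one (χ : (E p)ˣ →* ℂˣ) {n : ℕ} (hχn : CondExp p χ n) (v : ℤ_[p]ˣ)
    (hv : (p : ℤ_[p]) ^ n ∣ ((v : ℤ_[p]) - 1)) : χ (Uh p v) = 1 := by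
  obtain ⟨w, hw⟩ := hv
  apply hχn.1
  refine ⟨⟨1, w, 0, ?_⟩, ⟨⟨(v : ℤ_[p]), rfl⟩, ⟨1, by simp [Uh_val]⟩⟩,
    ⟨⟨((v⁻¹ : ℤ_[p]ˣ) : ℤ_[p]), by rw [Uh_inv_val]⟩, ⟨1, by rw [Uh_inv_val]; simp⟩⟩⟩
  rw [Uh_val]
  have : (v : ℤ_[p]) = 1 + (p : ℤ_[p]) ^ n * w := by linear_combination hw
  refine Prod.ext ?_ ?_ <;> simp
  · exact_mod_cast congrArg (fun x : ℤ_[p] => (x : ℚ_[p])) this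

lemma chi_Uh_congr (χ : (E p)ˣ →* ℂˣ) {n : ℕ} (hχn : CondExp p χ n) (v v' : ℤ_[p]ˣ)
    (h : (p : ℤ_[p]) ^ n ∣ ((v : ℤ_[p]) - (v' : ℤ_[p]))) : χ (Uh p v) = χ (Uh p v') := by
  have h2 : (p : ℤ_[p]) ^ n ∣ ((v * v'⁻¹ : ℤ_[p]ˣ) : ℤ_[p]) - 1 := by
    have he : ((v * v'⁻¹ : ℤ_[p]ˣ) : ℤ_[p]) - 1
        = ((v : ℤ_[p]) - v') * ((v'⁻¹ : ℤ_[p]ˣ) : ℤ_[p]) := by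
      have hm : (v' : ℤ_[p]) * ((v'⁻¹ : ℤ_[p]ˣ) : ℤ_[p]) = 1 := v'.mul_inv
      push_cast
      linear_combination hm
    rw [he]; exact h.mul_right _
  have h3 := chi_Uh_one p χ hχn (v * v'⁻¹) h2
  rw [map_mul, map_mul, map_inv, map_inv, mul_inv_eq_one] at h3
  exact h3

lemma exists_bad (χ : (E p)ˣ →* ℂˣ) (hχQ : TrivialOnQp p χ) {n : ℕ}
    (hχn : CondExp p χ n) (hn : 0 < n) :
    ∃ v : ℤ_[p]ˣ, (p : ℤ_[p]) ^ (n - 1) ∣ ((v : ℤ_[p]) - 1) ∧ χ (Uh p v) ≠ 1 := by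
  obtain ⟨u, ⟨⟨a, w₁, w₂, hu⟩, ⟨⟨x, hx⟩, ⟨y, hy⟩⟩, ⟨⟨xi, hxi⟩, ⟨yi, hyi⟩⟩⟩, hne⟩ := hχn.2 hn
  have hmul : ((u : E p) * ((u⁻¹ : (E p)ˣ) : E p)) = 1 := u.mul_inv
  have hx1 : x * xi = 1 := by
    have h1 := congrArg Prod.fst hmul
    simp only [Prod.fst_mul, Prod.fst_one, hx, hxi] at h1
    apply Subtype.coe_inj.mp; push_cast; exact h1
  have hy1 : y * yi = 1 := by
    have h1 := congrArg Prod.snd hmul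
    simp only [Prod.snd_mul, Prod.snd_one, hy, hyi] at h1
    apply Subtype.coe_inj.mp; push_cast; exact h1
  have hxa : x = a + (p : ℤ_[p]) ^ (n - 1) * w₁ := by
    have h1 : ((u : E p)).1 = (a : ℚ_[p]) + (p : ℚ_[p]) ^ (n - 1) * w₁ := by rw [hu]
    rw [hx] at h1
    apply Subtype.coe_inj.mp; push_cast; exact h1
  have hya : y = a + (p : ℤ_[p]) ^ (n - 1) * w₂ := by
    have h1 : ((u : E p)).2 = (a : ℚ_[p]) + (p : ℚ_[p]) ^ (n - 1) * w₂ := by rw [hu]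
    rw [hy] at h1
    apply Subtype.coe_inj.mp; push_cast; exact h1
  set yu : ℤ_[p]ˣ := ⟨y, yi, hy1, by rw [mul_comm]; exact hy1⟩ with hyu
  set xu : ℤ_[p]ˣ := ⟨x, xi, hx1, by rw [mul_comm]; exact hx1⟩ with hxu
  have hval : ((xu * yu⁻¹ : ℤ_[p]ˣ) : ℤ_[p]) = x * yi := rfl
  refine ⟨xu * yu⁻¹, ?_, ?_⟩
  · have he : ((xu * yu⁻¹ : ℤ_[p]ˣ) : ℤ_[p]) - 1 = (x - y) * yi := by
      rw [hval]; linear_combination hy1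
    rw [he, hxa, hya]
    have h2 : (a + (p : ℤ_[p]) ^ (n - 1) * w₁ - (a + (p : ℤ_[p]) ^ (n - 1) * w₂)) * yi
        = (p : ℤ_[p]) ^ (n - 1) * ((w₁ - w₂) * yi) := by ring
    rw [h2]; exact Dvd.intro _ rfl
  · have hyq : (y : ℚ_[p]) * (yi : ℚ_[p]) = 1 := by exact_mod_cast congrArg (Subtype.val) hy1
    have key : u = Units.map (algebraMap ℚ_[p] (E p)).toMonoidHom
        (Units.map (algebraMap ℤ_[p] ℚ_[p]).toMonoidHom yu) * Uh p (xu * yu⁻¹) := by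
      apply Units.ext
      rw [Units.val_mul, Uh_val, hval]
      have hmapval : ((Units.map (algebraMap ℚ_[p] (E p)).toMonoidHom
          (Units.map (algebraMap ℤ_[p] ℚ_[p]).toMonoidHom yu) : (E p)ˣ) : E p)
          = ((y : ℚ_[p]), (y : ℚ_[p])) := by
        simp [Prod.algebraMap_apply, PadicInt.algebraMap_apply]
        rfl
      rw [hmapval]
      have hup : (u : E p) = ((x : ℚ_[p]), (y : ℚ_[p])) := by
        refine Prod.ext ?_ ?_
        · rw [hx]
        · rw [hy]
      rw [hup, Prod.mk_mul_mk]
      refine Prod.ext ?_ ?_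
      · show (x : ℚ_[p]) = (y : ℚ_[p]) * ((x * yi : ℤ_[p]) : ℚ_[p])
        push_cast
        linear_combination -(x : ℚ_[p]) * hyq
      · show (y : ℚ_[p]) = (y : ℚ_[p]) * 1
        rw [mul_one]
    intro hc
    apply hne
    rw [key, map_mul, hχQ, one_mul, hc]

lemma chiV_eq (χ : (E p)ˣ →* ℂˣ) (b : ℤ_[p]) (h : IsUnit (1 + b)) :
    chiV p χ (1 + ι p b * θ p) = (χ (Uh p h.unit) : ℂ) := by
  have hz : (1 + ι p b * θ p) = ((Uh p h.unit : (E p)ˣ) : E p) := by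
    rw [Uh_val, IsUnit.unit_spec]
    show (1 : E p) + algebraMap ℤ_[p] (E p) b * (1, 0) = _
    refine Prod.ext ?_ ?_ <;> simp [Prod.algebraMap_apply]
  rw [hz, chiV]
  have hu : IsUnit ((Uh p h.unit : (E p)ˣ) : E p) := (Uh p h.unit).isUnit
  rw [dif_pos hu]
  have h2 : hu.unit = Uh p h.unit := Units.ext hu.unit_spec
  rw [h2]

end Lem341

/-- **Lemma 3.4(1)** (split prime case). Let `χ : E^× → ℂ^×` be trivial on `ℚ_p^×`
with conductor exponent `n > 0`, and let `0 ≤ k ≤ n`. Then the value `χ(1+bθ)`, for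
`b ∈ p^k ℤ_p` with `1+b ∈ ℤ_p^×`, depends only on `b mod p^n ℤ_p`, and the sum
`∑_b χ(1+bθ)⁻¹` over a complete set of representatives `b` of `p^k ℤ_p / p^n ℤ_p`
subject to `1+b ∈ ℤ_p^×` equals `0` if `k ≤ n-1` and `1` if `k = n`. -/
theorem lemma_3_4_1 (p : ℕ) [Fact p.Prime] (χ : (E p)ˣ →* ℂˣ)
    (hχQ : TrivialOnQp p χ) (n : ℕ) (hn : 0 < n) (hχn : CondExp p χ n)
    (k : ℕ) (hk : k ≤ n) :
    (∀ b b' : ℤ_[p],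
        (p : ℤ_[p]) ^ k ∣ b → IsUnit (1 + b) →
        (p : ℤ_[p]) ^ k ∣ b' → IsUnit (1 + b') →
        (p : ℤ_[p]) ^ n ∣ (b - b') →
        chiV p χ (1 + ι p b * θ p) = chiV p χ (1 + ι p b' * θ p)) ∧
    (∀ T : Finset ℤ_[p],
        (∀ b ∈ T, (p : ℤ_[p]) ^ k ∣ b ∧ IsUnit (1 + b)) →
        (∀ x : ℤ_[p], (p : ℤ_[p]) ^ k ∣ x → IsUnit (1 + x) →
          ∃! b, b ∈ T ∧ (p : ℤ_[p]) ^ n ∣ (x - b)) →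
        (k < n → ∑ b ∈ T, (chiV p χ (1 + ι p b * θ p))⁻¹ = 0) ∧
        (k = n → ∑ b ∈ T, (chiV p χ (1 + ι p b * θ p))⁻¹ = 1)) := by

  classical
  constructor
  · intro b b' hb hub hb' hub' hd
    rw [Lem341.chiV_eq p χ b hub, Lem341.chiV_eq p χ b' hub']
    refine congrArg Units.val (Lem341.chi_Uh_congr p χ hχn _ _ ?_)
    rw [IsUnit.unit_spec, IsUnit.unit_spec]
    have he : (1 + b) - (1 + b') = b - b' := by ring
    rw [he]; exact hd
  · intro T hT hrep
    have uniqT : ∀ b ∈ T, ∀ b' ∈ T, (p : ℤ_[p]) ^ n ∣ b - b' → b = b' := by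
      intro b hb b' hb' hd
      exact (hrep b (hT b hb).1 (hT b hb).2).unique ⟨hb, by simp⟩ ⟨hb', hd⟩
    constructor
    · -- k < n : sum is 0
      intro hkn
      obtain ⟨v₀, hv₀d, hv₀ne⟩ := Lem341.exists_bad p χ hχQ hχn hn
      have hkd : ∀ vv : ℤ_[p]ˣ, (p : ℤ_[p]) ^ (n - 1) ∣ ((vv : ℤ_[p]) - 1) →
          (p : ℤ_[p]) ^ k ∣ ((vv : ℤ_[p]) - 1) :=
        fun vv h => dvd_trans (pow_dvd_pow _ (by omega)) h
      have hv₀inv : (p : ℤ_[p]) ^ (n - 1) ∣ (((v₀⁻¹ : ℤ_[p]ˣ) : ℤ_[p]) - 1) := by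
        have hm : (v₀ : ℤ_[p]) * ((v₀⁻¹ : ℤ_[p]ˣ) : ℤ_[p]) = 1 := v₀.mul_inv
        have he : ((v₀⁻¹ : ℤ_[p]ˣ) : ℤ_[p]) - 1
            = -(((v₀ : ℤ_[p]) - 1) * ((v₀⁻¹ : ℤ_[p]ˣ) : ℤ_[p])) := by
          linear_combination hm
        rw [he]
        exact dvd_neg.mpr (hv₀d.mul_right _)
      have step : ∀ (vv : ℤ_[p]ˣ), (p : ℤ_[p]) ^ k ∣ ((vv : ℤ_[p]) - 1) →
          ∀ b ∈ T, ∃! b', b' ∈ T ∧ (p : ℤ_[p]) ^ n ∣ ((vv : ℤ_[p]) * (1 + b) - 1 - b') := by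
        intro vv hv b hb
        apply hrep
        · have he : (vv : ℤ_[p]) * (1 + b) - 1 = ((vv : ℤ_[p]) - 1) + (vv : ℤ_[p]) * b := by
            ring
          rw [he]; exact dvd_add hv ((hT b hb).1.mul_left _)
        · have he : (1 : ℤ_[p]) + ((vv : ℤ_[p]) * (1 + b) - 1) = (vv : ℤ_[p]) * (1 + b) := by
            ring
          rw [he]; exact vv.isUnit.mul (hT b hb).2
      have key : ∀ (vv ww : ℤ_[p]ˣ), (ww : ℤ_[p]) * vv = 1 →
          ∀ b ∈ T, ∀ c ∈ T, ∀ d ∈ T,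
          (p : ℤ_[p]) ^ n ∣ ((vv : ℤ_[p]) * (1 + b) - 1 - c) →
          (p : ℤ_[p]) ^ n ∣ ((ww : ℤ_[p]) * (1 + c) - 1 - d) → d = b := by
        intro vv ww hvw b hb c hc d hd h1 h2
        apply uniqT d hd b hb
        have he : d - b = -(((ww : ℤ_[p]) * (1 + c) - 1) - d)
            - (ww : ℤ_[p]) * (((vv : ℤ_[p]) * (1 + b) - 1) - c) := by
          linear_combination (1 + b : ℤ_[p]) * hvw
        rw [he]
        have h2' : (p : ℤ_[p]) ^ n ∣ (((ww : ℤ_[p]) * (1 + c) - 1) - d) := by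
          have : ((ww : ℤ_[p]) * (1 + c) - 1) - d = (ww : ℤ_[p]) * (1 + c) - 1 - d := by ring
          rw [this]; exact h2
        exact dvd_sub (dvd_neg.mpr h2') (h1.mul_left _)
      set F : (b : ℤ_[p]) → b ∈ T → ℤ_[p] :=
        fun b hb => ((step v₀ (hkd _ hv₀d) b hb).exists).choose with hF
      set G : (b : ℤ_[p]) → b ∈ T → ℤ_[p] :=
        fun b hb => ((step v₀⁻¹ (hkd _ hv₀inv) b hb).exists).choose with hG
      have hFspec : ∀ b (hb : b ∈ T), F b hb ∈ T ∧
          (p : ℤ_[p]) ^ n ∣ ((v₀ : ℤ_[p]) * (1 + b) - 1 - F b hb) :=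
        fun b hb => ((step v₀ (hkd _ hv₀d) b hb).exists).choose_spec
      have hGspec : ∀ b (hb : b ∈ T), G b hb ∈ T ∧
          (p : ℤ_[p]) ^ n ∣ (((v₀⁻¹ : ℤ_[p]ˣ) : ℤ_[p]) * (1 + b) - 1 - G b hb) :=
        fun b hb => ((step v₀⁻¹ (hkd _ hv₀inv) b hb).exists).choose_spec
      have hsum : ∑ b ∈ T, (chiV p χ (1 + ι p b * θ p))⁻¹
          = ∑ b ∈ T, ((χ (Lem341.Uh p v₀) : ℂ) * (chiV p χ (1 + ι p b * θ p))⁻¹) := by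
        refine Finset.sum_bij' F G (fun b hb => (hFspec b hb).1) (fun b hb => (hGspec b hb).1)
          ?_ ?_ ?_
        · intro b hb
          exact key v₀ v₀⁻¹ v₀.inv_mul b hb (F b hb) (hFspec b hb).1 _
            (hGspec (F b hb) (hFspec b hb).1).1 (hFspec b hb).2
            (hGspec (F b hb) (hFspec b hb).1).2
        · intro b hb
          exact key v₀⁻¹ v₀ v₀.mul_inv b hb (G b hb) (hGspec b hb).1 _
            (hFspec (G b hb) (hGspec b hb).1).1 (hGspec b hb).2
            (hFspec (G b hb) (hGspec b hb).1).2
        · intro b hb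
          have hub : IsUnit ((1 : ℤ_[p]) + b) := (hT b hb).2
          have huc : IsUnit ((1 : ℤ_[p]) + F b hb) := (hT _ (hFspec b hb).1).2
          rw [Lem341.chiV_eq p χ b hub, Lem341.chiV_eq p χ (F b hb) huc]
          have hcl : χ (Lem341.Uh p huc.unit)
              = χ (Lem341.Uh p v₀) * χ (Lem341.Uh p hub.unit) := by
            rw [← map_mul, ← map_mul]
            apply Lem341.chi_Uh_congr p χ hχn
            rw [Units.val_mul, IsUnit.unit_spec, IsUnit.unit_spec]
            have he : (1 + F b hb) - (v₀ : ℤ_[p]) * (1 + b)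
                = -((v₀ : ℤ_[p]) * (1 + b) - 1 - F b hb) := by ring
            rw [he]
            exact dvd_neg.mpr (hFspec b hb).2
          rw [hcl, Units.val_mul, mul_inv, ← mul_assoc,
            mul_inv_cancel₀ (Units.ne_zero _), one_mul]
      rw [← Finset.mul_sum] at hsum
      have hz : ((χ (Lem341.Uh p v₀) : ℂ) - 1)
          * ∑ b ∈ T, (chiV p χ (1 + ι p b * θ p))⁻¹ = 0 := by
        linear_combination -hsum
      rcases mul_eq_zero.mp hz with h | h
      · exact absurd (Units.val_eq_one.mp (by linear_combination h)) hv₀ne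
      · exact h
    · -- k = n : sum is 1
      intro hkn
      subst hkn
      obtain ⟨b₀, ⟨hb₀T, hb₀d⟩, _⟩ := hrep 0 (dvd_zero _) (by simp)
      have hb₀ : (p : ℤ_[p]) ^ k ∣ b₀ := by
        have : (0 : ℤ_[p]) - b₀ = -b₀ := by ring
        rw [this] at hb₀d
        exact (dvd_neg.mp hb₀d)
      have hTeq : T = {b₀} := by
        apply Finset.eq_singleton_iff_unique_mem.mpr
        refine ⟨hb₀T, fun b hb => uniqT b hb b₀ hb₀T ?_⟩
        exact dvd_sub (hT b hb).1 hb₀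
      rw [hTeq, Finset.sum_singleton]
      have hu : IsUnit ((1 : ℤ_[p]) + b₀) := (hT b₀ hb₀T).2
      rw [Lem341.chiV_eq p χ b₀ hu]
      have h1 : χ (Lem341.Uh p hu.unit) = 1 := by
        apply Lem341.chi_Uh_one p χ hχn
        rw [IsUnit.unit_spec]
        have he : (1 + b₀) - 1 = b₀ := by ring
        rw [he]; exact hb₀
      rw [h1]
      simp
end

section
/- Let $\chi \colon E^\times \to \mathbb{C}^\times$ be a group homomorphism trivial on $\mathbb{Q}_p^\times$ with conductor exponent $n > 0$. For an integer $k$ with $0 \le k \le n$, let $S_k$ denote the sum $\sum_b \chi(1+b\theta)^{-1}$ taken over a complete set of representatives $b$ of $\mathbb{Z}_p/p^n\mathbb{Z}_p$ such that $1+b \in \mathbb{Z}_p^\times$ and $\mathrm{ord}_p(b) = k$ (where, for $k = n$, the condition $\mathrm{ord}_p(b)=n$ means $b \equiv 0 \bmod p^n$). Then $S_k = 0$ if $k \le n-2$, $S_{n-1} = -1$, and $S_n = 1$. -/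
open scoped Classical

open ArakawaSplit


section Aux

variable (p : ℕ) [Fact p.Prime]

/-- The unit `(u, 1)` of `E`. -/
noncomputable def eU (u : ℚ_[p]ˣ) : (E p)ˣ :=
  ⟨((u : ℚ_[p]), 1), (((u⁻¹ : ℚ_[p]ˣ) : ℚ_[p]), 1),
    by simp [Prod.ext_iff], by simp [Prod.ext_iff]⟩

lemma eU_val (u : ℚ_[p]ˣ) : ((eU p u : (E p)ˣ) : E p) = ((u : ℚ_[p]), 1) := rfl

lemma eU_inv_val (u : ℚ_[p]ˣ) :
    (((eU p u)⁻¹ : (E p)ˣ) : E p) = (((u⁻¹ : ℚ_[p]ˣ) : ℚ_[p]), 1) := rfl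

lemma eU_mul (u v : ℚ_[p]ˣ) : eU p (u * v) = eU p u * eU p v := by
  apply Units.ext
  simp [eU, Prod.ext_iff]

/-- The character `x ↦ χ((x,1))` on `ℤ_[p]ˣ`. -/
noncomputable def gz (χ : (E p)ˣ →* ℂˣ) (x : ℤ_[p]ˣ) : ℂˣ :=
  χ (eU p (Units.map (PadicInt.Coe.ringHom (p := p)).toMonoidHom x))

lemma gz_mul (χ : (E p)ˣ →* ℂˣ) (x y : ℤ_[p]ˣ) :
    gz p χ (x * y) = gz p χ x * gz p χ y := by
  rw [gz, map_mul, eU_mul, map_mul]; rfl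

end Aux

section Aux2

variable (p : ℕ) [Fact p.Prime]

lemma uZ_val (x : ℤ_[p]ˣ) :
    ((Units.map (PadicInt.Coe.ringHom (p := p)).toMonoidHom x : ℚ_[p]ˣ) : ℚ_[p])
      = ((x : ℤ_[p]) : ℚ_[p]) := rfl

lemma eUZ_val (x : ℤ_[p]ˣ) :
    ((eU p (Units.map (PadicInt.Coe.ringHom (p := p)).toMonoidHom x) : (E p)ˣ) : E p)
      = (((x : ℤ_[p]) : ℚ_[p]), 1) := rfl

lemma eUZ_inv_val (x : ℤ_[p]ˣ) :
    (((eU p (Units.map (PadicInt.Coe.ringHom (p := p)).toMonoidHom x))⁻¹ : (E p)ˣ) : E p)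
      = ((((x⁻¹ : ℤ_[p]ˣ) : ℤ_[p]) : ℚ_[p]), 1) := rfl

lemma gz_one_of (χ : (E p)ˣ →* ℂˣ) (n : ℕ)
    (hχ1 : ∀ u : (E p)ˣ, MemOEiUnits p n u → χ u = 1)
    (x : ℤ_[p]ˣ) (t : ℤ_[p]) (hx : (x : ℤ_[p]) = 1 + (p : ℤ_[p]) ^ n * t) :
    gz p χ x = 1 := by
  apply hχ1
  refine ⟨⟨1, t, 0, ?_⟩, ⟨⟨(x : ℤ_[p]), ?_⟩, ⟨1, ?_⟩⟩,
    ⟨⟨((x⁻¹ : ℤ_[p]ˣ) : ℤ_[p]), ?_⟩, ⟨1, ?_⟩⟩⟩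
  · rw [eUZ_val]
    refine Prod.ext ?_ ?_ <;> simp [hx] <;> push_cast <;> ring
  · rw [eUZ_val]
  · rw [eUZ_val]; simp
  · rw [eUZ_inv_val]
  · rw [eUZ_inv_val]; simp

lemma gz_congr (χ : (E p)ˣ →* ℂˣ) (n : ℕ)
    (hχ1 : ∀ u : (E p)ˣ, MemOEiUnits p n u → χ u = 1)
    (x y : ℤ_[p]ˣ) (h : (p : ℤ_[p]) ^ n ∣ ((x : ℤ_[p]) - (y : ℤ_[p]))) :
    gz p χ x = gz p χ y := by
  obtain ⟨s, hs⟩ := h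
  have hxy : x = y * (y⁻¹ * x) := by group
  have hxv : (x : ℤ_[p]) = (y : ℤ_[p]) + (p : ℤ_[p]) ^ n * s := by
    linear_combination hs
  have h1 : gz p χ (y⁻¹ * x) = 1 := by
    refine gz_one_of p χ n hχ1 _ (((y⁻¹ : ℤ_[p]ˣ) : ℤ_[p]) * s) ?_
    rw [Units.val_mul, hxv, mul_add, Units.inv_mul]
    ring
  conv_lhs => rw [hxy]
  rw [gz_mul, h1, mul_one]

lemma chiV_eq (χ : (E p)ˣ →* ℂˣ) (b : ℤ_[p]) (x : ℤ_[p]ˣ)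
    (hx : (x : ℤ_[p]) = 1 + b) :
    chiV p χ (1 + ι p b * θ p) = ((gz p χ x : ℂˣ) : ℂ) := by
  have hz : (1 : E p) + ι p b * θ p =
      ((eU p (Units.map (PadicInt.Coe.ringHom (p := p)).toMonoidHom x) : (E p)ˣ) : E p) := by
    rw [eUZ_val]
    refine Prod.ext ?_ ?_ <;>
      simp [ι, θ, Prod.algebraMap_apply, hx,
        Prod.fst_mul, Prod.snd_mul, Prod.fst_add, Prod.snd_add] <;>
      push_cast <;> ring
  have hu : IsUnit ((1 : E p) + ι p b * θ p) := hz ▸ (Units.isUnit _)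
  rw [chiV, dif_pos hu]
  congr 2
  exact Units.ext (by rw [IsUnit.unit_spec, hz])

end Aux2

section Aux3

variable (p : ℕ) [Fact p.Prime]

lemma sum_shift (χ : (E p)ˣ →* ℂˣ) (n : ℕ)
    (hχ1 : ∀ u : (E p)ˣ, MemOEiUnits p n u → χ u = 1)
    (c : ℤ_[p]) (hc : IsUnit ((1 : ℤ_[p]) + c)) (hgc : gz p χ hc.unit ≠ 1)
    (S : Finset ℤ_[p]) (hSu : ∀ b ∈ S, IsUnit ((1 : ℤ_[p]) + b))
    (hScl : ∀ b ∈ S, ∃ b' ∈ S, (p : ℤ_[p]) ^ n ∣ (b + c + b * c) - b')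
    (hSuniq : ∀ b₁ ∈ S, ∀ b₂ ∈ S, (p : ℤ_[p]) ^ n ∣ b₁ - b₂ → b₁ = b₂) :
    ∑ b ∈ S, (chiV p χ (1 + ι p b * θ p))⁻¹ = 0 := by
  classical
  have hScl' : ∀ b : ℤ_[p], ∃ b', b ∈ S → b' ∈ S ∧ (p : ℤ_[p]) ^ n ∣ (b + c + b * c) - b' := by
    intro b
    by_cases hb : b ∈ S
    · obtain ⟨b', h1, h2⟩ := hScl b hb
      exact ⟨b', fun _ => ⟨h1, h2⟩⟩
    · exact ⟨0, fun h => absurd h hb⟩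
  choose σ hσ using hScl'
  have hinj : Set.InjOn σ S := by
    intro b₁ h₁ b₂ h₂ he
    apply hSuniq b₁ h₁ b₂ h₂
    have d1 := (hσ b₁ h₁).2
    have d2 := (hσ b₂ h₂).2
    rw [he] at d1
    have hd : (p : ℤ_[p]) ^ n ∣ (b₁ - b₂) * (1 + c) := by
      have := dvd_sub d1 d2
      convert this using 1
      ring
    exact (hc.dvd_mul_right).mp hd
  have himg : S.image σ = S :=
    Finset.eq_of_subset_of_card_le (Finset.image_subset_iff.2 fun b hb => (hσ b hb).1)
      (le_of_eq (Finset.card_image_of_injOn hinj).symm)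
  set gc : ℂ := ((gz p χ hc.unit : ℂˣ) : ℂ) with hgcdef
  have key : ∀ b ∈ S, (chiV p χ (1 + ι p (σ b) * θ p))⁻¹
      = gc⁻¹ * (chiV p χ (1 + ι p b * θ p))⁻¹ := by
    intro b hb
    have hbu := hSu b hb
    have hσS := (hσ b hb).1
    have hσu := hSu _ hσS
    rw [chiV_eq p χ b hbu.unit hbu.unit_spec, chiV_eq p χ (σ b) hσu.unit hσu.unit_spec]
    have hmulu : gz p χ hσu.unit = gz p χ (hbu.unit * hc.unit) := by
      refine gz_congr p χ n hχ1 _ _ ?_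
      have heq : ((hσu.unit : ℤ_[p]) - ((hbu.unit * hc.unit : ℤ_[p]ˣ) : ℤ_[p]))
          = -((b + c + b * c) - σ b) := by
        rw [Units.val_mul, hσu.unit_spec, hbu.unit_spec, hc.unit_spec]
        ring
      rw [heq]
      exact dvd_neg.mpr (hσ b hb).2
    rw [hmulu, gz_mul, Units.val_mul, mul_inv, mul_comm]
  have h1 : ∑ b ∈ S, (chiV p χ (1 + ι p b * θ p))⁻¹
      = gc⁻¹ * ∑ b ∈ S, (chiV p χ (1 + ι p b * θ p))⁻¹ := by
    conv_lhs => rw [← himg]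
    rw [Finset.sum_image (fun x hx y hy h => hinj hx hy h),
      Finset.sum_congr rfl key, ← Finset.mul_sum]
  have hgc' : gc⁻¹ ≠ 1 := by
    intro hh
    apply hgc
    apply Units.ext
    have : gc = 1 := by rwa [inv_eq_one] at hh
    simpa [hgcdef] using this
  have h2 : (1 - gc⁻¹) * (∑ b ∈ S, (chiV p χ (1 + ι p b * θ p))⁻¹) = 0 := by
    linear_combination h1
  rcases mul_eq_zero.mp h2 with h | h
  · exact absurd (by linear_combination -h : gc⁻¹ = 1) hgc'
  · exact h

lemma exists_c (χ : (E p)ˣ →* ℂˣ) (n : ℕ) (hχQ : TrivialOnQp p χ)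
    (hnt : ∃ u : (E p)ˣ, MemOEiUnits p (n - 1) u ∧ χ u ≠ 1) :
    ∃ (c : ℤ_[p]) (hc : IsUnit ((1 : ℤ_[p]) + c)),
      (p : ℤ_[p]) ^ (n - 1) ∣ c ∧ gz p χ hc.unit ≠ 1 := by
  obtain ⟨u, ⟨⟨a, w₁, w₂, hu⟩, _, hOEinv⟩, hune⟩ := hnt
  obtain ⟨y₁, hy₁⟩ := hOEinv.1
  obtain ⟨y₂, hy₂⟩ := hOEinv.2
  set α : ℤ_[p] := a + (p : ℤ_[p]) ^ (n - 1) * w₁ with hα_def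
  set β : ℤ_[p] := a + (p : ℤ_[p]) ^ (n - 1) * w₂ with hβ_def
  have huv : (u : E p) = ((α : ℚ_[p]), (β : ℚ_[p])) := by
    rw [hu]
    refine Prod.ext ?_ ?_ <;> simp [hα_def, hβ_def] <;> push_cast <;> ring
  have hmul : (u : E p) * ((u⁻¹ : (E p)ˣ) : E p) = 1 := by
    rw [← Units.val_mul, mul_inv_cancel, Units.val_one]
  have hα : α * y₁ = 1 := by
    have h1 := congrArg Prod.fst hmul
    rw [huv] at h1
    simp only [Prod.fst_mul, Prod.fst_one] at h1
    rw [hy₁] at h1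
    exact Subtype.coe_injective (by push_cast; exact h1)
  have hβ : β * y₂ = 1 := by
    have h1 := congrArg Prod.snd hmul
    rw [huv] at h1
    simp only [Prod.snd_mul, Prod.snd_one] at h1
    rw [hy₂] at h1
    exact Subtype.coe_injective (by push_cast; exact h1)
  set c : ℤ_[p] := (p : ℤ_[p]) ^ (n - 1) * (w₁ - w₂) * y₂ with hc_def
  have h1c : (1 : ℤ_[p]) + c = α * y₂ := by
    rw [hc_def, hα_def]
    linear_combination -hβ
  have hc : IsUnit ((1 : ℤ_[p]) + c) := by
    rw [h1c]
    exact (IsUnit.of_mul_eq_one (a := α) y₁ hα).mul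
      (IsUnit.of_mul_eq_one (a := y₂) β (by rw [mul_comm]; exact hβ))
  refine ⟨c, hc, ⟨(w₁ - w₂) * y₂, by ring⟩, ?_⟩
  intro hgz
  apply hune
  have hβu : IsUnit β := IsUnit.of_mul_eq_one (a := β) y₂ hβ
  have hueq : u = eU p (Units.map (PadicInt.Coe.ringHom (p := p)).toMonoidHom hc.unit) *
      Units.map (algebraMap ℚ_[p] (E p)).toMonoidHom
        (Units.map (PadicInt.Coe.ringHom (p := p)).toMonoidHom hβu.unit) := by
    apply Units.ext
    rw [Units.val_mul, huv, eUZ_val]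
    have hβval : ((Units.map (algebraMap ℚ_[p] (E p)).toMonoidHom
        (Units.map (PadicInt.Coe.ringHom (p := p)).toMonoidHom hβu.unit) : (E p)ˣ) : E p)
        = ((β : ℚ_[p]), (β : ℚ_[p])) := by
      rw [Units.coe_map]
      simp [uZ_val, hβu.unit_spec, Prod.algebraMap_apply]
      rfl
    rw [hβval]
    have hcβ : ((1 : ℤ_[p]) + c) * β = α := by
      rw [h1c]
      linear_combination α * hβ
    refine Prod.ext ?_ ?_ <;> simp [hc.unit_spec, Prod.fst_mul, Prod.snd_mul]
    · rw [← hcβ]; push_cast; ring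
  rw [hueq, map_mul]
  have : χ (eU p (Units.map (PadicInt.Coe.ringHom (p := p)).toMonoidHom hc.unit))
      = gz p χ hc.unit := rfl
  rw [this, hgz, one_mul]
  exact hχQ _

end Aux3



/-- **Lemma 3.4(2)** (split prime case). Let `χ : E^× → ℂ^×` be trivial on `ℚ_p^×`
with conductor exponent `n > 0`, and let `0 ≤ k ≤ n`. Let `S_k = ∑_b χ(1+bθ)⁻¹`, the
sum over a complete set of representatives `b` of `ℤ_p/p^n ℤ_p` with `1+b ∈ ℤ_p^×` and
`ord_p(b) = k` (for `k = n` the latter means `b ≡ 0 mod p^n`). Then `S_k = 0` if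
`k ≤ n-2`, `S_{n-1} = -1`, and `S_n = 1`. -/
theorem lemma_3_4_2 (p : ℕ) [Fact p.Prime] (χ : (E p)ˣ →* ℂˣ)
    (hχQ : TrivialOnQp p χ) (n : ℕ) (hn : 0 < n) (hχn : CondExp p χ n)
    (k : ℕ) (hk : k ≤ n) (T : Finset ℤ_[p])
    (hTmem : ∀ b ∈ T,
      ((p : ℤ_[p]) ^ k ∣ b ∧ (k < n → ¬ (p : ℤ_[p]) ^ (k + 1) ∣ b)) ∧ IsUnit (1 + b))
    (hTrep : ∀ x : ℤ_[p],
      ((p : ℤ_[p]) ^ k ∣ x ∧ (k < n → ¬ (p : ℤ_[p]) ^ (k + 1) ∣ x)) → IsUnit (1 + x) →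
      ∃! b, b ∈ T ∧ (p : ℤ_[p]) ^ n ∣ (x - b)) :
    (k + 1 < n → ∑ b ∈ T, (chiV p χ (1 + ι p b * θ p))⁻¹ = 0) ∧
    (k + 1 = n → ∑ b ∈ T, (chiV p χ (1 + ι p b * θ p))⁻¹ = -1) ∧
    (k = n → ∑ b ∈ T, (chiV p χ (1 + ι p b * θ p))⁻¹ = 1) := by
  classical
  obtain ⟨hχ1, hχ2⟩ := hχn
  obtain ⟨c, hc, hcdvd, hgc⟩ := exists_c p χ n hχQ (hχ2 hn)
  refine ⟨?_, ?_, ?_⟩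
  · -- k + 1 < n
    intro hkn
    refine sum_shift p χ n hχ1 c hc hgc T (fun b hb => (hTmem b hb).2) ?_ ?_
    · intro b hb
      obtain ⟨⟨hdvd, hndvd⟩, hbu⟩ := hTmem b hb
      have hkc : (p : ℤ_[p]) ^ (k + 1) ∣ c := dvd_trans (pow_dvd_pow _ (by omega)) hcdvd
      have hkc0 : (p : ℤ_[p]) ^ k ∣ c := dvd_trans (pow_dvd_pow _ (by omega)) hcdvd
      have hbu' : IsUnit ((1 : ℤ_[p]) + (b + c + b * c)) := by
        have hfac : (1 : ℤ_[p]) + (b + c + b * c) = (1 + b) * (1 + c) := by ring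
        rw [hfac]; exact hbu.mul hc
      have h1 : (p : ℤ_[p]) ^ k ∣ b + c + b * c :=
        (hdvd.add hkc0).add (hdvd.mul_right c)
      have h2 : ¬ (p : ℤ_[p]) ^ (k + 1) ∣ b + c + b * c := by
        intro h
        apply hndvd (by omega)
        have h3 := dvd_sub (dvd_sub h hkc) (hkc.mul_left b)
        convert h3 using 1; ring
      obtain ⟨b', ⟨hb'T, hb'd⟩, -⟩ := hTrep (b + c + b * c) ⟨h1, fun _ => h2⟩ hbu'
      exact ⟨b', hb'T, hb'd⟩
    · intro b₁ h₁ b₂ h₂ hd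
      obtain ⟨bb, -, huni⟩ := hTrep b₁ (hTmem b₁ h₁).1 (hTmem b₁ h₁).2
      exact (huni b₁ ⟨h₁, by simp⟩).trans (huni b₂ ⟨h₂, hd⟩).symm
  · -- k + 1 = n
    intro hkn
    obtain rfl : n = k + 1 := hkn.symm
    have hkk : k < k + 1 := Nat.lt_succ_self k
    have hdc : (p : ℤ_[p]) ^ k ∣ c := by simpa using hcdvd
    have h0T : (0 : ℤ_[p]) ∉ T := fun h => (hTmem 0 h).1.2 hkk (dvd_zero _)
    have hu : ∀ b ∈ insert (0 : ℤ_[p]) T, IsUnit ((1 : ℤ_[p]) + b) := by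
      intro b hb
      rcases Finset.mem_insert.mp hb with rfl | hb
      · simpa using isUnit_one
      · exact (hTmem b hb).2
    have hdvdall : ∀ b ∈ insert (0 : ℤ_[p]) T, (p : ℤ_[p]) ^ k ∣ b := by
      intro b hb
      rcases Finset.mem_insert.mp hb with rfl | hb
      · exact dvd_zero _
      · exact (hTmem b hb).1.1
    have hcl : ∀ b ∈ insert (0 : ℤ_[p]) T,
        ∃ b' ∈ insert (0 : ℤ_[p]) T, (p : ℤ_[p]) ^ (k + 1) ∣ (b + c + b * c) - b' := by
      intro b hb
      have hy : (p : ℤ_[p]) ^ k ∣ b + c + b * c :=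
        ((hdvdall b hb).add hdc).add ((hdvdall b hb).mul_right c)
      have hyu : IsUnit ((1 : ℤ_[p]) + (b + c + b * c)) := by
        have hfac : (1 : ℤ_[p]) + (b + c + b * c) = (1 + b) * (1 + c) := by ring
        rw [hfac]; exact (hu b hb).mul hc
      by_cases hpn : (p : ℤ_[p]) ^ (k + 1) ∣ b + c + b * c
      · exact ⟨0, Finset.mem_insert_self _ _, by simpa using hpn⟩
      · obtain ⟨b', ⟨hb'T, hb'd⟩, -⟩ := hTrep (b + c + b * c) ⟨hy, fun _ => hpn⟩ hyu
        exact ⟨b', Finset.mem_insert_of_mem hb'T, hb'd⟩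
    have huq : ∀ b₁ ∈ insert (0 : ℤ_[p]) T, ∀ b₂ ∈ insert (0 : ℤ_[p]) T,
        (p : ℤ_[p]) ^ (k + 1) ∣ b₁ - b₂ → b₁ = b₂ := by
      intro b₁ h₁ b₂ h₂ hd
      rcases Finset.mem_insert.mp h₁ with rfl | h₁T <;>
        rcases Finset.mem_insert.mp h₂ with rfl | h₂T
      · rfl
      · exfalso
        rw [zero_sub, dvd_neg] at hd
        exact (hTmem b₂ h₂T).1.2 hkk hd
      · exfalso
        rw [sub_zero] at hd
        exact (hTmem b₁ h₁T).1.2 hkk hd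
      · obtain ⟨bb, -, huni⟩ := hTrep b₁ (hTmem b₁ h₁T).1 (hTmem b₁ h₁T).2
        exact (huni b₁ ⟨h₁T, by simp⟩).trans (huni b₂ ⟨h₂T, hd⟩).symm
    have hsum := sum_shift p χ (k + 1) hχ1 c hc hgc (insert 0 T) hu hcl huq
    rw [Finset.sum_insert h0T] at hsum
    have hf0 : (chiV p χ (1 + ι p 0 * θ p))⁻¹ = 1 := by
      rw [chiV_eq p χ 0 1 (by simp),
        gz_one_of p χ (k + 1) hχ1 1 0 (by simp)]
      simp
    rw [hf0] at hsum
    linear_combination hsum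
  · -- k = n
    intro hkn
    subst hkn
    have hall : ∀ b ∈ T, (chiV p χ (1 + ι p b * θ p))⁻¹ = 1 := by
      intro b hb
      obtain ⟨⟨hdvd, -⟩, hbu⟩ := hTmem b hb
      obtain ⟨t, ht⟩ := hdvd
      rw [chiV_eq p χ b hbu.unit hbu.unit_spec,
        gz_one_of p χ k hχ1 hbu.unit t (by rw [hbu.unit_spec, ht])]
      simp
    rw [Finset.sum_congr rfl hall]
    obtain ⟨b₀, ⟨hb₀T, -⟩, huni⟩ :=
      hTrep 0 ⟨dvd_zero _, fun h => absurd h (lt_irrefl _)⟩ (by simpa using isUnit_one)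
    have hT : T = {b₀} := by
      apply Finset.eq_singleton_iff_unique_mem.mpr
      refine ⟨hb₀T, fun b hb => huni b ⟨hb, ?_⟩⟩
      rw [zero_sub, dvd_neg]
      exact (hTmem b hb).1.1
    rw [hT]
    simp
end

section
/- Fix an integer $i \ge 1$ and set $\varpi_1 = (p,1) \in E^\times$. Then every $x \in E^\times$ belongs to the double coset $\mathbb{Q}_p^\times\, \varpi_1^{\,m}\, (1 + b\theta)\, \mathcal{O}_{E,i}^\times$ for exactly one pair consisting of an integer $m \in \mathbb{Z}$ and a class $\bar{b} \in \mathbb{Z}_p/p^i\mathbb{Z}_p$ whose representatives $b$ satisfy $1+b \in \mathbb{Z}_p^\times$ (the double coset of $1+b\theta$ depending only on $\bar b$). -/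
open scoped Classical

namespace ArakawaSplit

variable (p : ℕ) [Fact p.Prime]

/-- `ϖ₁ = (p, 1) ∈ E^×`. -/
noncomputable def varpi1 : (E p)ˣ :=
  MulEquiv.prodUnits.symm
    (Units.mk0 (p : ℚ_[p])
      (Nat.cast_ne_zero.mpr (Fact.out : p.Prime).ne_zero), 1)

/-- The unit of `E` determined by a unit element `z ∈ E` (junk value `1` otherwise). -/
noncomputable def unitOf (z : E p) : (E p)ˣ :=
  if h : IsUnit z then h.unit else 1

/-- `x` lies in the double coset `ℚ_p^× y 𝒪_{E,i}^×` inside `E^×`. -/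
def InCoset (i : ℕ) (y x : (E p)ˣ) : Prop :=
  ∃ t : ℚ_[p]ˣ, ∃ u : (E p)ˣ, MemOEiUnits p i u ∧
    x = Units.map (algebraMap ℚ_[p] (E p)).toMonoidHom t * y * u

end ArakawaSplit

open ArakawaSplit

namespace ArakawaSplit

variable {p : ℕ} [Fact p.Prime]

lemma hp_cast_ne : ((p:ℚ_[p])) ≠ 0 :=
  Nat.cast_ne_zero.mpr (Fact.out : p.Prime).ne_zero

/-- components of a unit of `E` are nonzero -/
lemma fst_ne_zero (x : (E p)ˣ) : (x : E p).1 ≠ 0 := by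
  have h : ((x : E p) * ((x⁻¹ : (E p)ˣ) : E p)).1 = 1 := by
    rw [← Units.val_mul, mul_inv_cancel]; rfl
  exact left_ne_zero_of_mul_eq_one h

lemma snd_ne_zero (x : (E p)ˣ) : (x : E p).2 ≠ 0 := by
  have h : ((x : E p) * ((x⁻¹ : (E p)ˣ) : E p)).2 = 1 := by
    rw [← Units.val_mul, mul_inv_cancel]; rfl
  exact left_ne_zero_of_mul_eq_one h

/-- a unit of `E` whose value is `((a:ℚ_p), (c:ℚ_p))` with `a c : ℤ_p` units -/
lemma memOEiUnits_iff (i : ℕ) (u : (E p)ˣ) :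
    MemOEiUnits p i u ↔ ∃ a c : ℤ_[p], IsUnit a ∧ IsUnit c ∧
      (p:ℤ_[p])^i ∣ (a - c) ∧ (u : E p) = ((a:ℚ_[p]), (c:ℚ_[p])) := by
  constructor
  · rintro ⟨⟨a0, w1, w2, heq⟩, ⟨⟨a, ha⟩, ⟨c, hc⟩⟩, ⟨⟨a', ha'⟩, ⟨c', hc'⟩⟩⟩
    have hmul : ((u : E p) * ((u⁻¹ : (E p)ˣ) : E p)) = 1 := by
      rw [← Units.val_mul, mul_inv_cancel]; rfl
    have h1 : (a:ℚ_[p]) * (a':ℚ_[p]) = 1 := by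
      rw [← ha, ← ha']; exact congrArg Prod.fst hmul
    have h2 : (c:ℚ_[p]) * (c':ℚ_[p]) = 1 := by
      rw [← hc, ← hc']; exact congrArg Prod.snd hmul
    have hua : IsUnit a := IsUnit.of_mul_eq_one (a := a) a' (Subtype.ext (by push_cast; exact h1))
    have huc : IsUnit c := IsUnit.of_mul_eq_one (a := c) c' (Subtype.ext (by push_cast; exact h2))
    have ea : a = a0 + (p:ℤ_[p])^i * w1 := by
      apply Subtype.ext
      push_cast
      rw [← ha]
      exact congrArg Prod.fst heq
    have ec : c = a0 + (p:ℤ_[p])^i * w2 := by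
      apply Subtype.ext
      push_cast
      rw [← hc]
      exact congrArg Prod.snd heq
    refine ⟨a, c, hua, huc, ⟨w1 - w2, by rw [ea, ec]; ring⟩, ?_⟩
    exact Prod.ext ha hc
  · rintro ⟨a, c, ha, hc, ⟨d, hd⟩, hval⟩
    obtain ⟨a', ha'⟩ := ha.exists_right_inv
    obtain ⟨c', hc'⟩ := hc.exists_right_inv
    refine ⟨⟨a, 0, -d, ?_⟩, ⟨⟨a, congrArg Prod.fst hval⟩, ⟨c, congrArg Prod.snd hval⟩⟩,
      ⟨⟨a', ?_⟩, ⟨c', ?_⟩⟩⟩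
    · rw [hval]
      have : c = a - (p:ℤ_[p])^i * d := by rw [← hd]; ring
      refine Prod.ext ?_ ?_ <;> simp only []
      · push_cast; ring
      · rw [this]; push_cast; ring
    · -- (u⁻¹).1 = a'
      have hmul : ((u : E p) * ((u⁻¹ : (E p)ˣ) : E p)) = 1 := by
        rw [← Units.val_mul, mul_inv_cancel]; rfl
      have h1 : (u : E p).1 * ((u⁻¹ : (E p)ˣ) : E p).1 = 1 := congrArg Prod.fst hmul
      rw [hval] at h1
      have hane : (a:ℚ_[p]) ≠ 0 := by
        intro h0
        simp only [h0, zero_mul] at h1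
        exact zero_ne_one h1
      have h1' : (a:ℚ_[p]) * (a':ℚ_[p]) = 1 := by exact_mod_cast congrArg (fun z : ℤ_[p] => (z:ℚ_[p])) ha'
      exact (mul_left_cancel₀ hane (h1.trans h1'.symm))
    · have hmul : ((u : E p) * ((u⁻¹ : (E p)ˣ) : E p)) = 1 := by
        rw [← Units.val_mul, mul_inv_cancel]; rfl
      have h2 : (u : E p).2 * ((u⁻¹ : (E p)ˣ) : E p).2 = 1 := congrArg Prod.snd hmul
      rw [hval] at h2
      have hcne : (c:ℚ_[p]) ≠ 0 := by
        intro h0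
        simp only [h0, zero_mul] at h2
        exact zero_ne_one h2
      have h2' : (c:ℚ_[p]) * (c':ℚ_[p]) = 1 := by exact_mod_cast congrArg (fun z : ℤ_[p] => (z:ℚ_[p])) hc'
      exact (mul_left_cancel₀ hcne (h2.trans h2'.symm))

/-- the value of `1 + b·θ` -/
lemma one_add_btheta (b : ℤ_[p]) : (1 + ι p b * θ p : E p) = ((1:ℚ_[p]) + (b:ℚ_[p]), 1) := by
  show ((1:ℚ_[p]), (1:ℚ_[p])) + ((b:ℚ_[p]),(b:ℚ_[p])) * ((1:ℚ_[p]), (0:ℚ_[p])) = _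
  refine Prod.ext ?_ ?_ <;> simp

lemma isUnit_one_add_btheta {b : ℤ_[p]} (hb : IsUnit (1 + b)) :
    IsUnit (1 + ι p b * θ p : E p) := by
  rw [one_add_btheta]
  have h1 : ((1:ℚ_[p]) + (b:ℚ_[p])) ≠ 0 := by
    have : ((1 + b : ℤ_[p]) : ℚ_[p]) ≠ 0 := by
      exact_mod_cast fun h => hb.ne_zero (Subtype.ext (by push_cast; exact_mod_cast h))
    push_cast at this
    exact this
  exact ⟨MulEquiv.prodUnits.symm (Units.mk0 _ h1, 1), rfl⟩

/-- value of `ϖ₁^m · (1+bθ)` -/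
lemma y_val (m : ℤ) {b : ℤ_[p]} (hb : IsUnit (1 + b)) :
    ((varpi1 p ^ m * unitOf p (1 + ι p b * θ p) : (E p)ˣ) : E p)
      = ((p:ℚ_[p])^m * ((1:ℚ_[p]) + (b:ℚ_[p])), 1) := by
  have hu := isUnit_one_add_btheta hb
  have h2 : ((unitOf p (1 + ι p b * θ p) : (E p)ˣ) : E p) = ((1:ℚ_[p]) + (b:ℚ_[p]), 1) := by
    rw [unitOf, dif_pos hu, hu.unit_spec, one_add_btheta]
  have h1 : ((varpi1 p ^ m : (E p)ˣ) : E p) = ((p:ℚ_[p])^m, 1) := by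
    have hfst : ∀ z : (E p)ˣ, ((Units.map (MonoidHom.fst ℚ_[p] ℚ_[p])) z : ℚ_[p]) = (z : E p).1 :=
      fun z => rfl
    have hsnd : ∀ z : (E p)ˣ, ((Units.map (MonoidHom.snd ℚ_[p] ℚ_[p])) z : ℚ_[p]) = (z : E p).2 :=
      fun z => rfl
    refine Prod.ext ?_ ?_
    · rw [← hfst, map_zpow]
      have : (Units.map (MonoidHom.fst ℚ_[p] ℚ_[p])) (varpi1 p)
          = Units.mk0 (p : ℚ_[p]) hp_cast_ne := by
        ext; rfl
      rw [this, Units.val_zpow_eq_zpow_val]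
      rfl
    · rw [← hsnd, map_zpow]
      have : (Units.map (MonoidHom.snd ℚ_[p] ℚ_[p])) (varpi1 p) = 1 := by
        ext; rfl
      rw [this, one_zpow]
      rfl
  rw [Units.val_mul, h1, h2]
  refine Prod.ext ?_ ?_ <;> simp

/-- main characterization of the double coset -/
lemma inCoset_iff (i : ℕ) (m : ℤ) {b : ℤ_[p]} (hb : IsUnit (1 + b)) (x : (E p)ˣ) :
    InCoset p i (varpi1 p ^ m * unitOf p (1 + ι p b * θ p)) x ↔
    ∃ w : ℤ_[p], IsUnit w ∧ (p:ℤ_[p])^i ∣ (w - 1) ∧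
      (x : E p).1 = (x : E p).2 * ((p:ℚ_[p])^m * ((1:ℚ_[p]) + (b:ℚ_[p])) * (w:ℚ_[p])) := by
  constructor
  · rintro ⟨t, u, hu, hx⟩
    obtain ⟨a, c, ha, hc, ⟨d, hd⟩, hval⟩ := (memOEiUnits_iff i u).1 hu
    obtain ⟨c', hc'⟩ := hc.exists_right_inv
    have hxval : (x : E p) =
        ((t : ℚ_[p]) * ((p:ℚ_[p])^m * ((1:ℚ_[p]) + (b:ℚ_[p]))) * (a:ℚ_[p]),
         (t : ℚ_[p]) * 1 * (c:ℚ_[p])) := by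
      rw [hx, Units.val_mul, Units.val_mul, y_val m hb, hval]
      rfl
    have h1 : (x : E p).1 = (t : ℚ_[p]) * ((p:ℚ_[p])^m * ((1:ℚ_[p]) + (b:ℚ_[p]))) * (a:ℚ_[p]) :=
      congrArg Prod.fst hxval
    have h2 : (x : E p).2 = (t : ℚ_[p]) * 1 * (c:ℚ_[p]) := congrArg Prod.snd hxval
    refine ⟨a * c', ha.mul (IsUnit.of_mul_eq_one (a := c') c (by rw [mul_comm]; exact hc')),
      ⟨d * c', ?_⟩, ?_⟩
    · have : a * c' - 1 = (a - c) * c' := by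
        have : c * c' = 1 := hc'
        calc a * c' - 1 = a * c' - c * c' := by rw [this]
        _ = (a - c) * c' := by ring
      rw [this, hd]; ring
    · have hcc : (c:ℚ_[p]) * (c':ℚ_[p]) = 1 := by
        exact_mod_cast congrArg (fun z : ℤ_[p] => (z:ℚ_[p])) hc'
      rw [h1, h2]
      push_cast
      linear_combination (-(t : ℚ_[p]) * ((p:ℚ_[p])^m * ((1:ℚ_[p]) + (b:ℚ_[p]))) * (a:ℚ_[p])) * hcc
  · rintro ⟨w, hw, hdvd, heq⟩
    have hwne : (w : ℚ_[p]) ≠ 0 := by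
      exact_mod_cast fun h => hw.ne_zero (Subtype.ext (by exact_mod_cast h))
    refine ⟨Units.mk0 (x : E p).2 (snd_ne_zero x),
      MulEquiv.prodUnits.symm (Units.mk0 (w:ℚ_[p]) hwne, 1), ?_, ?_⟩
    · rw [memOEiUnits_iff]
      exact ⟨w, 1, hw, isUnit_one, by simpa using hdvd, rfl⟩
    · ext : 1
      rw [Units.val_mul, Units.val_mul, y_val m hb]
      refine Prod.ext ?_ ?_
      · show (x : E p).1 = (x : E p).2 * ((p:ℚ_[p])^m * ((1:ℚ_[p]) + (b:ℚ_[p]))) * (w:ℚ_[p])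
        rw [heq]; ring
      · show (x : E p).2 = (x : E p).2 * 1 * 1
        ring

end ArakawaSplit

open ArakawaSplit

/-- **Double coset decomposition `ℚ_p^× \ E^× / 𝒪_{E,i}^×`** (Section 3.2(1), split
prime case). For `i ≥ 1` and `ϖ₁ = (p,1)`, every `x ∈ E^×` lies in the double coset
`ℚ_p^× ϖ₁^m (1+bθ) 𝒪_{E,i}^×` for exactly one pair `(m, b̄)` with `m ∈ ℤ` and
`b̄ ∈ ℤ_p/p^i ℤ_p` represented by `b` with `1+b ∈ ℤ_p^×`; the double coset of
`ϖ₁^m (1+bθ)` depends only on `b̄`. -/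
theorem double_coset_split (p : ℕ) [Fact p.Prime] (i : ℕ) (hi : 1 ≤ i) :
    (∀ (m : ℤ) (b b' : ℤ_[p]), IsUnit (1 + b) → IsUnit (1 + b') →
        (p : ℤ_[p]) ^ i ∣ (b - b') →
        ∀ x : (E p)ˣ,
          InCoset p i (varpi1 p ^ m * unitOf p (1 + ι p b * θ p)) x ↔
          InCoset p i (varpi1 p ^ m * unitOf p (1 + ι p b' * θ p)) x) ∧
    (∀ x : (E p)ˣ,
      (∃ (m : ℤ) (b : ℤ_[p]), IsUnit (1 + b) ∧
        InCoset p i (varpi1 p ^ m * unitOf p (1 + ι p b * θ p)) x) ∧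
      (∀ (m m' : ℤ) (b b' : ℤ_[p]), IsUnit (1 + b) → IsUnit (1 + b') →
        InCoset p i (varpi1 p ^ m * unitOf p (1 + ι p b * θ p)) x →
        InCoset p i (varpi1 p ^ m' * unitOf p (1 + ι p b' * θ p)) x →
        m = m' ∧ (p : ℤ_[p]) ^ i ∣ (b - b'))) := by
  have key : ∀ (m : ℤ) (b b' : ℤ_[p]), IsUnit (1 + b) → IsUnit (1 + b') →
      (p : ℤ_[p]) ^ i ∣ (b - b') →
      ∀ x : (E p)ˣ,
        InCoset p i (varpi1 p ^ m * unitOf p (1 + ι p b * θ p)) x →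
        InCoset p i (varpi1 p ^ m * unitOf p (1 + ι p b' * θ p)) x := by
    intro m b b' hb hb' ⟨d, hd⟩ x hx
    obtain ⟨w, hw, ⟨e, he⟩, heq⟩ := (inCoset_iff i m hb x).1 hx
    obtain ⟨v, hv⟩ := hb'.exists_right_inv
    refine (inCoset_iff i m hb' x).2 ⟨v * ((1 + b) * w), ?_, ?_, ?_⟩
    · exact ((IsUnit.of_mul_eq_one (a := v) (1 + b') (by rw [mul_comm]; exact hv)).mul (hb.mul hw))
    · refine ⟨v * ((1 + b) * e + d), ?_⟩
      linear_combination v * (1 + b) * he + v * hd + hv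
    · have hkey : ((1:ℤ_[p]) + b') * (v * ((1 + b) * w)) = (1 + b) * w := by
        rw [← mul_assoc, hv, one_mul]
      have hkey' : ((1:ℚ_[p]) + (b':ℚ_[p])) * ((v * ((1 + b) * w) : ℤ_[p]) : ℚ_[p])
          = ((1:ℚ_[p]) + (b:ℚ_[p])) * (w:ℚ_[p]) := by
        exact_mod_cast congrArg (fun z : ℤ_[p] => (z:ℚ_[p])) hkey
      rw [heq]
      linear_combination ((x : E p).2 * (p:ℚ_[p])^m) * hkey'.symm
  constructor
  · intro m b b' hb hb' hdvd x
    exact ⟨key m b b' hb hb' hdvd x,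
      key m b' b hb' hb (by simpa using (dvd_neg.2 hdvd)) x⟩
  · intro x
    constructor
    · -- existence
      set q : ℚ_[p] := (x : E p).1 * ((x : E p).2)⁻¹ with hq
      have hqne : q ≠ 0 := mul_ne_zero (fst_ne_zero x) (inv_ne_zero (snd_ne_zero x))
      set m : ℤ := q.valuation with hm
      have hnorm : ‖q * (p:ℚ_[p])^(-m)‖ = 1 := by
        rw [norm_mul, Padic.norm_eq_zpow_neg_valuation hqne, Padic.norm_p_zpow]
        rw [← zpow_add₀ (by exact_mod_cast (Fact.out : p.Prime).pos.ne' : (p:ℝ) ≠ 0)]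
        simp [hm]
      set a : ℤ_[p] := ⟨q * (p:ℚ_[p])^(-m), le_of_eq hnorm⟩ with hadef
      have haunit : IsUnit a := PadicInt.isUnit_iff.2 hnorm
      have h1b : IsUnit (1 + (a - 1)) := by simpa using haunit
      refine ⟨m, a - 1, h1b, (inCoset_iff i m h1b x).2 ⟨1, isUnit_one, by simp, ?_⟩⟩
      have hca : ((a : ℤ_[p]) : ℚ_[p]) = q * (p:ℚ_[p])^(-m) := rfl
      have hb1 : ((1:ℚ_[p]) + ((a - 1 : ℤ_[p]) : ℚ_[p])) = (a : ℚ_[p]) := by push_cast; ring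
      rw [hb1, hca]
      push_cast
      rw [mul_one]
      have hppow : (p:ℚ_[p])^m * (p:ℚ_[p])^(-m) = 1 := by
        rw [← zpow_add₀ hp_cast_ne]; simp
      have h2 : (x : E p).2 * ((p:ℚ_[p])^m * (q * (p:ℚ_[p])^(-m)))
          = (x : E p).2 * q := by
        calc (x : E p).2 * ((p:ℚ_[p])^m * (q * (p:ℚ_[p])^(-m)))
            = (x : E p).2 * q * ((p:ℚ_[p])^m * (p:ℚ_[p])^(-m)) := by ring
          _ = (x : E p).2 * q := by rw [hppow, mul_one]
      rw [h2, hq, ← mul_assoc, mul_comm ((x : E p).2) ((x : E p).1), mul_assoc,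
        mul_inv_cancel₀ (snd_ne_zero x), mul_one]
    · -- uniqueness
      intro m m' b b' hb hb' hx hx'
      obtain ⟨w, hw, hdw, heq⟩ := (inCoset_iff i m hb x).1 hx
      obtain ⟨w', hw', hdw', heq'⟩ := (inCoset_iff i m' hb' x).1 hx'
      have hmain : (p:ℚ_[p])^m * ((1:ℚ_[p]) + (b:ℚ_[p])) * (w:ℚ_[p])
          = (p:ℚ_[p])^m' * ((1:ℚ_[p]) + (b':ℚ_[p])) * (w':ℚ_[p]) :=
        mul_left_cancel₀ (snd_ne_zero x) (heq.symm.trans heq')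
      -- norms
      have hnb : ‖((1 + b : ℤ_[p]) : ℚ_[p])‖ = 1 := by
        rw [PadicInt.padic_norm_e_of_padicInt]; exact PadicInt.isUnit_iff.1 hb
      have hnb' : ‖((1 + b' : ℤ_[p]) : ℚ_[p])‖ = 1 := by
        rw [PadicInt.padic_norm_e_of_padicInt]; exact PadicInt.isUnit_iff.1 hb'
      have hnw : ‖(w : ℚ_[p])‖ = 1 := by
        rw [PadicInt.padic_norm_e_of_padicInt]; exact PadicInt.isUnit_iff.1 hw
      have hnw' : ‖(w' : ℚ_[p])‖ = 1 := by
        rw [PadicInt.padic_norm_e_of_padicInt]; exact PadicInt.isUnit_iff.1 hw'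
      have hmm : m = m' := by
        have := congrArg norm hmain
        rw [norm_mul, norm_mul, norm_mul, norm_mul] at this
        push_cast at this hnb hnb'
        rw [hnb, hnb', hnw, hnw', Padic.norm_p_zpow, Padic.norm_p_zpow] at this
        simp only [mul_one] at this
        have hp1 : (1:ℝ) < (p:ℝ) := by exact_mod_cast (Fact.out : p.Prime).one_lt
        have := zpow_right_injective₀ (by linarith) (by linarith) this
        omega
      refine ⟨hmm, ?_⟩
      subst hmm
      have hmain2 : ((1:ℤ_[p]) + b) * w = (1 + b') * w' := by
        have h' : (p:ℚ_[p])^m * (((1:ℚ_[p]) + (b:ℚ_[p])) * (w:ℚ_[p]))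
            = (p:ℚ_[p])^m * (((1:ℚ_[p]) + (b':ℚ_[p])) * (w':ℚ_[p])) := by
          rw [← mul_assoc, ← mul_assoc]; exact hmain
        have h := mul_left_cancel₀ (zpow_ne_zero m hp_cast_ne) h'
        apply Subtype.ext
        push_cast
        exact h
      obtain ⟨e, he⟩ := hdw
      obtain ⟨e', he'⟩ := hdw'
      refine ⟨(1 + b') * e' - (1 + b) * e, ?_⟩
      have : b - b' = ((1 + b') * w' - (1 + b')) - ((1 + b) * w - (1 + b)) := by
        rw [← hmain2]; ring
      rw [this]
      have h1 : (1 + b) * w - (1 + b) = (1 + b) * ((p:ℤ_[p])^i * e) := by rw [← he]; ring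
      have h2 : (1 + b') * w' - (1 + b') = (1 + b') * ((p:ℤ_[p])^i * e') := by rw [← he']; ring
      rw [h1, h2]; ring
end

section
/- Let $\chi \colon E^\times \to \mathbb{C}^\times$ be a group homomorphism trivial on $\mathbb{Q}_p^\times$ with conductor exponent $n > 0$. Then (both sums being well defined, the summands depending only on the indicated residue classes) $\sum_{b} \chi(1+b\theta)^{-1} = -\sum_{a} \chi(a+\theta)^{-1}$, where $b$ runs over a complete set of representatives of $\mathbb{Z}_p/p^n\mathbb{Z}_p$ and $a$ runs over a complete set of representatives of $p\mathbb{Z}_p/p^n\mathbb{Z}_p$; moreover this common value equals $-\chi(\theta)^{-1}$ if $n = 1$ and equals $0$ if $n > 1$. -/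
open scoped Classical

namespace ArakawaQuad

variable (p : ℕ) [Fact p.Prime]
variable (E : Type*) [Field E] [Algebra ℚ_[p] E] [Algebra ℤ_[p] E]
  [IsScalarTower ℤ_[p] ℚ_[p] E]

/-- Membership in `𝒪_{E,i} = ℤ_p + p^i 𝒪_E`, where `𝒪_E` is the ring of integers
(the integral closure of `ℤ_p` in `E`). -/
def MemOEi (i : ℕ) (z : E) : Prop :=
  ∃ a : ℤ_[p], ∃ w ∈ integralClosure ℤ_[p] E, z = algebraMap ℤ_[p] E a + (p : E) ^ i * w

/-- Membership of a unit `u ∈ Eˣ` in `𝒪_{E,i}^× = 𝒪_{E,i} ∩ 𝒪_E^×`. -/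
def MemOEiUnits (i : ℕ) (u : Eˣ) : Prop :=
  MemOEi p E i ↑u ∧ (↑u : E) ∈ integralClosure ℤ_[p] E ∧
    ((↑u⁻¹ : E) ∈ integralClosure ℤ_[p] E)

/-- `χ : E^× → ℂ^×` is trivial on `ℚ_p^×`. -/
def TrivialOnQp (χ : Eˣ →* ℂˣ) : Prop :=
  ∀ t : ℚ_[p]ˣ, χ (Units.map (algebraMap ℚ_[p] E).toMonoidHom t) = 1

/-- `χ` has conductor exponent `n`: it is trivial on `𝒪_{E,n}^×` and, when `n > 0`,
nontrivial on `𝒪_{E,n-1}^×`. -/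
def CondExp (χ : Eˣ →* ℂˣ) (n : ℕ) : Prop :=
  (∀ u : Eˣ, MemOEiUnits p E n u → χ u = 1) ∧
  (0 < n → ∃ u : Eˣ, MemOEiUnits p E (n - 1) u ∧ χ u ≠ 1)

/-- The value of `χ : E^× → ℂ^×` at an element of `E`, with junk value `0` at `0`. -/
noncomputable def chiV {F : Type*} [Field F] (χ : Fˣ →* ℂˣ) (z : F) : ℂ :=
  if h : z ≠ 0 then (χ (Units.mk0 z h) : ℂ) else 0

/-- `E` is an unramified quadratic extension of `ℚ_p`: it has degree `2` and the
maximal ideal of its ring of integers `𝒪_E` is `p 𝒪_E` (an element of `𝒪_E` is a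
unit of `𝒪_E` if and only if it does not lie in `p 𝒪_E`). -/
def Unramified : Prop :=
  Module.finrank ℚ_[p] E = 2 ∧
  ∀ z ∈ integralClosure ℤ_[p] E,
    ((∃ w ∈ integralClosure ℤ_[p] E, z * w = 1) ↔
      ¬ ∃ w ∈ integralClosure ℤ_[p] E, z = (p : E) * w)

/-- `E` is a ramified quadratic extension of `ℚ_p` with maximal ideal `𝔭 = θ 𝒪_E`
satisfying `𝔭² = p 𝒪_E`: it has degree `2`, `θ ∈ 𝒪_E` generates the maximal ideal
(an element of `𝒪_E` is a unit of `𝒪_E` iff it is not in `θ 𝒪_E`), and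
`θ² = p u` for a unit `u` of `𝒪_E`. -/
def Ramified (θ : E) : Prop :=
  Module.finrank ℚ_[p] E = 2 ∧
  θ ∈ integralClosure ℤ_[p] E ∧
  (∀ z ∈ integralClosure ℤ_[p] E,
    ((∃ w ∈ integralClosure ℤ_[p] E, z * w = 1) ↔
      ¬ ∃ w ∈ integralClosure ℤ_[p] E, z = θ * w)) ∧
  (∃ u ∈ integralClosure ℤ_[p] E,
    (∃ v ∈ integralClosure ℤ_[p] E, u * v = 1) ∧ θ ^ 2 = (p : E) * u)

/-- `{1, θ}` is a `ℤ_p`-basis of the ring of integers `𝒪_E`. -/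
def IsIntBasis (θ : E) : Prop :=
  θ ∈ integralClosure ℤ_[p] E ∧
  ∀ z ∈ integralClosure ℤ_[p] E, ∃! ab : ℤ_[p] × ℤ_[p],
    z = algebraMap ℤ_[p] E ab.1 + algebraMap ℤ_[p] E ab.2 * θ

/-- `x` lies in the double coset `ℚ_p^× y 𝒪_{E,i}^×` inside `E^×`. -/
def InCoset (i : ℕ) (y x : E) : Prop :=
  ∃ t : ℚ_[p]ˣ, ∃ u : Eˣ, MemOEiUnits p E i u ∧
    x = algebraMap ℚ_[p] E ↑t * y * ↑u

/-- The unit group `𝒪_E^×`, as a subgroup of `E^×`. -/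
def OEUnits : Subgroup Eˣ where
  carrier := {u | (↑u : E) ∈ integralClosure ℤ_[p] E ∧
    ((↑u⁻¹ : E) ∈ integralClosure ℤ_[p] E)}
  one_mem' := ⟨by simpa using (integralClosure ℤ_[p] E).one_mem,
    by simpa using (integralClosure ℤ_[p] E).one_mem⟩
  mul_mem' := by
    rintro a b ⟨ha1, ha2⟩ ⟨hb1, hb2⟩
    refine ⟨?_, ?_⟩
    · simpa [Units.val_mul] using mul_mem ha1 hb1
    · simpa [Units.val_mul, mul_inv_rev] using mul_mem hb2 ha2
  inv_mem' := by
    rintro a ⟨h1, h2⟩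
    exact ⟨h2, by simpa using h1⟩

end ArakawaQuad

open ArakawaQuad

namespace L361

variable {p : ℕ} [Fact p.Prime]

lemma not_isUnit_p : ¬ IsUnit (p : ℤ_[p]) := by
  rw [PadicInt.not_isUnit_iff, PadicInt.norm_p]
  have hp := (Fact.out : p.Prime).one_lt
  have h1 : (1:ℝ) < p := by exact_mod_cast hp
  exact inv_lt_one_of_one_lt₀ h1

lemma dvd_of_not_isUnit {x : ℤ_[p]} (h : ¬ IsUnit x) : (p : ℤ_[p]) ∣ x := by
  rwa [← PadicInt.norm_lt_one_iff_dvd, ← PadicInt.not_isUnit_iff]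

lemma isUnit_of_p_nmid {x : ℤ_[p]} (h : ¬ (p:ℤ_[p]) ∣ x) : IsUnit x := by
  by_contra h'; exact h (dvd_of_not_isUnit h')

lemma not_isUnit_of_dvd {x : ℤ_[p]} (h : (p:ℤ_[p]) ∣ x) (hx : IsUnit x) : False :=
  not_isUnit_p (isUnit_of_dvd_unit h hx)

lemma isUnit_one_add {y : ℤ_[p]} (h : (p:ℤ_[p]) ∣ y) : IsUnit (1 + y) := by
  apply isUnit_of_p_nmid
  intro hd
  have h1 : (p:ℤ_[p]) ∣ 1 := by
    have := dvd_sub hd h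
    simpa using this
  exact not_isUnit_p (isUnit_of_dvd_one h1)

lemma dvd_of_unit_mul {P e x : ℤ_[p]} (he : IsUnit e) (h : P ∣ e * x) : P ∣ x := by
  obtain ⟨u, rfl⟩ := he
  have hx : x = ↑u⁻¹ * (↑u * x) := by rw [← mul_assoc, Units.inv_mul, one_mul]
  rw [hx]
  exact h.mul_left _

variable {E : Type*} [Field E] [Algebra ℚ_[p] E] [Algebra ℤ_[p] E]
  [IsScalarTower ℤ_[p] ℚ_[p] E]

/-- unit of the ring of integers -/
def RU (p : ℕ) [Fact p.Prime] (E : Type*) [Field E] [Algebra ℤ_[p] E] (z : E) : Prop :=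
  z ≠ 0 ∧ z ∈ integralClosure ℤ_[p] E ∧ z⁻¹ ∈ integralClosure ℤ_[p] E

/-- the standard family of units -/
noncomputable def F (p : ℕ) [Fact p.Prime] {E : Type*} [Field E] [Algebra ℤ_[p] E] (θ : E) :
    ℤ_[p] ⊕ ℤ_[p] → E :=
  Sum.elim (fun b => 1 + algebraMap ℤ_[p] E b * θ) (fun a => algebraMap ℤ_[p] E a + θ)

def Good {p : ℕ} [Fact p.Prime] : ℤ_[p] ⊕ ℤ_[p] → Prop :=
  Sum.elim (fun _ => True) (fun a => (p:ℤ_[p]) ∣ a)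

def Jeq {p : ℕ} [Fact p.Prime] (P : ℤ_[p]) : ℤ_[p] ⊕ ℤ_[p] → ℤ_[p] ⊕ ℤ_[p] → Prop
  | Sum.inl b, Sum.inl b' => P ∣ b - b'
  | Sum.inr a, Sum.inr a' => P ∣ a - a'
  | _, _ => False

lemma uniq {θ : E} (hθ : IsIntBasis p E θ) {x y x' y' : ℤ_[p]}
    (h : algebraMap ℤ_[p] E x + algebraMap ℤ_[p] E y * θ
       = algebraMap ℤ_[p] E x' + algebraMap ℤ_[p] E y' * θ) :
    x = x' ∧ y = y' := by
  have hz : algebraMap ℤ_[p] E x + algebraMap ℤ_[p] E y * θ ∈ integralClosure ℤ_[p] E :=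
    add_mem (Subalgebra.algebraMap_mem _ x) (mul_mem (Subalgebra.algebraMap_mem _ y) hθ.1)
  have h1 := (hθ.2 _ hz).unique (y₁ := (x, y)) (y₂ := (x', y')) rfl h
  exact ⟨congrArg Prod.fst h1, congrArg Prod.snd h1⟩

lemma coeff {θ : E} (hθ : IsIntBasis p E θ) {z : E} (hz : z ∈ integralClosure ℤ_[p] E) :
    ∃ s d : ℤ_[p], z = algebraMap ℤ_[p] E s + algebraMap ℤ_[p] E d * θ := by
  obtain ⟨⟨s, d⟩, h, -⟩ := hθ.2 z hz
  exact ⟨s, d, h⟩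

lemma ru_of_unit (hE : Unramified p E) {θ : E} (hθ : IsIntBasis p E θ) (x y : ℤ_[p])
    (hxy : IsUnit x ∨ IsUnit y) :
    RU p E (algebraMap ℤ_[p] E x + algebraMap ℤ_[p] E y * θ) := by
  set z := algebraMap ℤ_[p] E x + algebraMap ℤ_[p] E y * θ with hzdef
  have hz : z ∈ integralClosure ℤ_[p] E :=
    add_mem (Subalgebra.algebraMap_mem _ x) (mul_mem (Subalgebra.algebraMap_mem _ y) hθ.1)
  have hnd : ¬ ∃ w ∈ integralClosure ℤ_[p] E, z = (p:E) * w := by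
    rintro ⟨w, hw, hzw⟩
    obtain ⟨s, d, rfl⟩ := coeff hθ hw
    have hz2 : z = algebraMap ℤ_[p] E ((p:ℤ_[p]) * s) + algebraMap ℤ_[p] E ((p:ℤ_[p]) * d) * θ := by
      rw [hzw]
      simp only [map_mul, map_natCast]
      ring
    obtain ⟨h1, h2⟩ := uniq hθ (hzdef.symm.trans hz2)
    rcases hxy with hx | hy
    · exact not_isUnit_of_dvd ⟨s, h1⟩ hx
    · exact not_isUnit_of_dvd ⟨d, h2⟩ hy
  obtain ⟨w, hw, hzw⟩ := (hE.2 z hz).mpr hnd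
  have hz0 : z ≠ 0 := fun h => by simp [h] at hzw
  have hinv : z⁻¹ = w := inv_eq_of_mul_eq_one_right hzw
  exact ⟨hz0, hz, hinv ▸ hw⟩

lemma unit_of_ru (hE : Unramified p E) {θ : E} (hθ : IsIntBasis p E θ) (x y : ℤ_[p])
    (h : RU p E (algebraMap ℤ_[p] E x + algebraMap ℤ_[p] E y * θ)) :
    IsUnit x ∨ IsUnit y := by
  by_contra h'
  push_neg at h'
  obtain ⟨x₁, rfl⟩ := dvd_of_not_isUnit h'.1
  obtain ⟨y₁, rfl⟩ := dvd_of_not_isUnit h'.2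
  set z := algebraMap ℤ_[p] E ((p:ℤ_[p]) * x₁) + algebraMap ℤ_[p] E ((p:ℤ_[p]) * y₁) * θ with hzdef
  have hz : z ∈ integralClosure ℤ_[p] E :=
    add_mem (Subalgebra.algebraMap_mem _ _) (mul_mem (Subalgebra.algebraMap_mem _ _) hθ.1)
  have hu : ∃ w ∈ integralClosure ℤ_[p] E, z * w = 1 :=
    ⟨z⁻¹, h.2.2, mul_inv_cancel₀ h.1⟩
  apply (hE.2 z hz).mp hu
  refine ⟨algebraMap ℤ_[p] E x₁ + algebraMap ℤ_[p] E y₁ * θ,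
    add_mem (Subalgebra.algebraMap_mem _ _) (mul_mem (Subalgebra.algebraMap_mem _ _) hθ.1), ?_⟩
  rw [hzdef]
  simp only [map_mul, map_natCast]
  ring

lemma ru_F (hE : Unramified p E) {θ : E} (hθ : IsIntBasis p E θ) {j : ℤ_[p] ⊕ ℤ_[p]}
    (hj : Good j) : RU p E (F p θ j) := by
  rcases j with b | a
  · have := ru_of_unit hE hθ 1 b (Or.inl isUnit_one)
    simpa [F] using this
  · have := ru_of_unit hE hθ a 1 (Or.inr isUnit_one)
    simpa [F] using this

lemma ru_mul {z z' : E} (h : RU p E z) (h' : RU p E z') : RU p E (z * z') :=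
  ⟨mul_ne_zero h.1 h'.1, mul_mem h.2.1 h'.2.1, by
    rw [mul_inv]; exact mul_mem h.2.2 h'.2.2⟩


set_option linter.unusedSectionVars false

lemma chiV_ne (χ : Eˣ →* ℂˣ) {z : E} (hz : z ≠ 0) : chiV χ z ≠ 0 := by
  unfold chiV
  rw [dif_pos hz]
  exact Units.ne_zero _

lemma chiV_mul (χ : Eˣ →* ℂˣ) {z w : E} (hz : z ≠ 0) (hw : w ≠ 0) :
    chiV χ (z * w) = chiV χ z * chiV χ w := by
  unfold chiV
  rw [dif_pos hz, dif_pos hw, dif_pos (mul_ne_zero hz hw)]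
  rw [show Units.mk0 (z * w) (mul_ne_zero hz hw) = Units.mk0 z hz * Units.mk0 w hw from
    Units.ext rfl, map_mul, Units.val_mul]

lemma chiV_unit (χ : Eˣ →* ℂˣ) (u : Eˣ) : chiV χ ↑u = (χ u : ℂ) := by
  unfold chiV
  rw [dif_pos u.ne_zero]
  exact congrArg _ (congrArg χ (Units.ext rfl))

lemma chi_triv_zp (χ : Eˣ →* ℂˣ) (hχQ : TrivialOnQp p E χ) {e : ℤ_[p]} (he : IsUnit e) :
    chiV χ (algebraMap ℤ_[p] E e) = 1 := by
  obtain ⟨eu, rfl⟩ := he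
  set t : ℚ_[p]ˣ := Units.map (algebraMap ℤ_[p] ℚ_[p]).toMonoidHom eu with ht
  have h := hχQ t
  have hval : (↑(Units.map (algebraMap ℚ_[p] E).toMonoidHom t) : E) = algebraMap ℤ_[p] E ↑eu := by
    rw [ht]
    simp only [Units.coe_map, MonoidHom.coe_coe]
    exact (IsScalarTower.algebraMap_apply ℤ_[p] ℚ_[p] E (↑eu : ℤ_[p])).symm
  rw [← hval, chiV_unit, h, Units.val_one]

lemma chi_triv_1p (hE : Unramified p E) {θ : E} (hθ : IsIntBasis p E θ)
    (χ : Eˣ →* ℂˣ) (n : ℕ) (hn : 0 < n)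
    (hχ1 : ∀ u : Eˣ, MemOEiUnits p E n u → χ u = 1)
    {w : E} (hw : w ∈ integralClosure ℤ_[p] E) :
    chiV χ (1 + algebraMap ℤ_[p] E ((p:ℤ_[p])^n) * w) = 1 := by
  obtain ⟨s, d, rfl⟩ := coeff hθ hw
  set P : ℤ_[p] := (p:ℤ_[p])^n with hPdef
  have hP : (p:ℤ_[p]) ∣ P := dvd_pow_self _ hn.ne'
  have hz : (1 : E) + algebraMap ℤ_[p] E P * (algebraMap ℤ_[p] E s + algebraMap ℤ_[p] E d * θ)
      = algebraMap ℤ_[p] E (1 + P * s) + algebraMap ℤ_[p] E (P * d) * θ := by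
    simp only [map_mul, map_add, map_one]
    ring
  have hru : RU p E ((1 : E) + algebraMap ℤ_[p] E P *
      (algebraMap ℤ_[p] E s + algebraMap ℤ_[p] E d * θ)) := by
    rw [hz]
    exact ru_of_unit hE hθ _ _ (Or.inl (isUnit_one_add (hP.mul_right s)))
  set u : Eˣ := Units.mk0 _ hru.1 with hu
  have hmem : MemOEiUnits p E n u := by
    refine ⟨⟨1, algebraMap ℤ_[p] E s + algebraMap ℤ_[p] E d * θ,
      add_mem (Subalgebra.algebraMap_mem _ _) (mul_mem (Subalgebra.algebraMap_mem _ _) hθ.1), ?_⟩,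
      hru.2.1, ?_⟩
    · show (1 : E) + algebraMap ℤ_[p] E P * _ = _
      rw [map_one, hPdef, map_pow, map_natCast]
    · rw [Units.val_inv_eq_inv_val]
      exact hru.2.2
  have : chiV χ ↑u = 1 := by rw [chiV_unit, hχ1 u hmem, Units.val_one]
  exact this

lemma jeq_factor (hE : Unramified p E) {θ : E} (hθ : IsIntBasis p E θ) {P : ℤ_[p]}
    {j j' : ℤ_[p] ⊕ ℤ_[p]} (hg : Good j) (hg' : Good j') (hJ : Jeq P j j') :
    ∃ w ∈ integralClosure ℤ_[p] E,
      F p θ j = F p θ j' * (1 + algebraMap ℤ_[p] E P * w) := by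
  rcases j with b | a <;> rcases j' with b' | a'
  · obtain ⟨dd, hdd⟩ := (hJ : P ∣ b - b')
    have hru' := ru_F hE hθ (j := Sum.inl b') trivial
    have h0 : F p θ (Sum.inl b') ≠ 0 := hru'.1
    refine ⟨algebraMap ℤ_[p] E dd * θ * (F p θ (Sum.inl b'))⁻¹,
      mul_mem (mul_mem (Subalgebra.algebraMap_mem _ _) hθ.1) hru'.2.2, ?_⟩
    have hcalc : F p θ (Sum.inl b') * (1 + algebraMap ℤ_[p] E P *
        (algebraMap ℤ_[p] E dd * θ * (F p θ (Sum.inl b'))⁻¹))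
        = F p θ (Sum.inl b') + algebraMap ℤ_[p] E (P * dd) * θ := by
      field_simp
      rw [map_mul]
      ring
    rw [hcalc]
    show (1 : E) + algebraMap ℤ_[p] E b * θ = (1 + algebraMap ℤ_[p] E b' * θ) + _
    rw [show P * dd = b - b' from hdd.symm, map_sub]
    ring
  · exact hJ.elim
  · exact hJ.elim
  · obtain ⟨dd, hdd⟩ := (hJ : P ∣ a - a')
    have hru' := ru_F hE hθ (j := Sum.inr a') (hg' : Good (Sum.inr a'))
    have h0 : F p θ (Sum.inr a') ≠ 0 := hru'.1
    refine ⟨algebraMap ℤ_[p] E dd * (F p θ (Sum.inr a'))⁻¹,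
      mul_mem (Subalgebra.algebraMap_mem _ _) hru'.2.2, ?_⟩
    have hcalc : F p θ (Sum.inr a') * (1 + algebraMap ℤ_[p] E P *
        (algebraMap ℤ_[p] E dd * (F p θ (Sum.inr a'))⁻¹))
        = F p θ (Sum.inr a') + algebraMap ℤ_[p] E (P * dd) := by
      field_simp
      rw [map_mul]
    rw [hcalc]
    show algebraMap ℤ_[p] E a + θ = (algebraMap ℤ_[p] E a' + θ) + _
    rw [show P * dd = a - a' from hdd.symm, map_sub]
    ring

lemma chi_congr (hE : Unramified p E) {θ : E} (hθ : IsIntBasis p E θ)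
    (χ : Eˣ →* ℂˣ) (n : ℕ) (hn : 0 < n)
    (hχ1 : ∀ u : Eˣ, MemOEiUnits p E n u → χ u = 1)
    {j j' : ℤ_[p] ⊕ ℤ_[p]} (hg : Good j) (hg' : Good j')
    (hJ : Jeq ((p:ℤ_[p])^n) j j') :
    chiV χ (F p θ j) = chiV χ (F p θ j') := by
  obtain ⟨w, hw, heq⟩ := jeq_factor hE hθ hg hg' hJ
  have h1 := chi_triv_1p hE hθ χ n hn hχ1 hw
  have hj' : F p θ j' ≠ 0 := (ru_F hE hθ hg').1
  have hne : (1 : E) + algebraMap ℤ_[p] E ((p:ℤ_[p])^n) * w ≠ 0 := by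
    intro h0
    rw [h0] at h1
    unfold chiV at h1
    simp at h1
  rw [heq, chiV_mul χ hj' hne, h1, mul_one]

lemma key {θ : E} (hθ : IsIntBasis p E θ) {P : ℤ_[p]} (hP : (p:ℤ_[p]) ∣ P)
    {e e' : ℤ_[p]} (he : IsUnit e) (he' : IsUnit e')
    {w w' : E} (hw : w ∈ integralClosure ℤ_[p] E) (hw' : w' ∈ integralClosure ℤ_[p] E)
    {j j' : ℤ_[p] ⊕ ℤ_[p]} (hg : Good j) (hg' : Good j')
    (heq : algebraMap ℤ_[p] E e * F p θ j * (1 + algebraMap ℤ_[p] E P * w)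
         = algebraMap ℤ_[p] E e' * F p θ j' * (1 + algebraMap ℤ_[p] E P * w')) :
    Jeq P j j' := by
  obtain ⟨s, d, rfl⟩ := coeff hθ hw
  obtain ⟨s', d', rfl⟩ := coeff hθ hw'
  obtain ⟨α, β, hαβ⟩ := coeff hθ (mul_mem hθ.1 hθ.1)
  have expl : ∀ e b s d : ℤ_[p],
      algebraMap ℤ_[p] E e * F p θ (Sum.inl b) *
        (1 + algebraMap ℤ_[p] E P * (algebraMap ℤ_[p] E s + algebraMap ℤ_[p] E d * θ))
      = algebraMap ℤ_[p] E (e * (1 + P * (s + b * d * α)))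
        + algebraMap ℤ_[p] E (e * (b + P * (d + b * s + b * d * β))) * θ := by
    intro e b s d
    show algebraMap ℤ_[p] E e * (1 + algebraMap ℤ_[p] E b * θ) * _ = _
    simp only [map_mul, map_add, map_one]
    linear_combination (algebraMap ℤ_[p] E e * algebraMap ℤ_[p] E b *
      algebraMap ℤ_[p] E P * algebraMap ℤ_[p] E d) * hαβ
  have expr : ∀ e a s d : ℤ_[p],
      algebraMap ℤ_[p] E e * F p θ (Sum.inr a) *
        (1 + algebraMap ℤ_[p] E P * (algebraMap ℤ_[p] E s + algebraMap ℤ_[p] E d * θ))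
      = algebraMap ℤ_[p] E (e * (a + P * (a * s + d * α)))
        + algebraMap ℤ_[p] E (e * (1 + P * (a * d + s + d * β))) * θ := by
    intro e a s d
    show algebraMap ℤ_[p] E e * (algebraMap ℤ_[p] E a + θ) * _ = _
    simp only [map_mul, map_add, map_one]
    linear_combination (algebraMap ℤ_[p] E e *
      algebraMap ℤ_[p] E P * algebraMap ℤ_[p] E d) * hαβ
  rcases j with b | a <;> rcases j' with b' | a'
  · rw [expl e b s d, expl e' b' s' d'] at heq
    obtain ⟨h1, h2⟩ := uniq hθ heq
    show P ∣ b - b'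
    refine dvd_of_unit_mul he ⟨e' * (d' + b' * s' + b' * d' * β) - e * (d + b * s + b * d * β)
      + b' * (e * (s + b * d * α) - e' * (s' + b' * d' * α)), ?_⟩
    linear_combination h2 - b' * h1
  · rw [expl e b s d, expr e' a' s' d'] at heq
    obtain ⟨h1, -⟩ := uniq hθ heq
    exfalso
    have hun : IsUnit (e * (1 + P * (s + b * d * α))) :=
      he.mul (isUnit_one_add (hP.mul_right _))
    have hdvd : (p:ℤ_[p]) ∣ e' * (a' + P * (a' * s' + d' * α)) :=
      Dvd.dvd.mul_left (dvd_add (hg' : (p:ℤ_[p]) ∣ a') (hP.mul_right _)) e'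
    exact not_isUnit_of_dvd (h1 ▸ hdvd) hun
  · rw [expr e a s d, expl e' b' s' d'] at heq
    obtain ⟨h1, -⟩ := uniq hθ heq
    exfalso
    have hun : IsUnit (e' * (1 + P * (s' + b' * d' * α))) :=
      he'.mul (isUnit_one_add (hP.mul_right _))
    have hdvd : (p:ℤ_[p]) ∣ e * (a + P * (a * s + d * α)) :=
      Dvd.dvd.mul_left (dvd_add (hg : (p:ℤ_[p]) ∣ a) (hP.mul_right _)) e
    exact not_isUnit_of_dvd (h1.symm ▸ hdvd) hun
  · rw [expr e a s d, expr e' a' s' d'] at heq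
    obtain ⟨h1, h2⟩ := uniq hθ heq
    show P ∣ a - a'
    refine dvd_of_unit_mul he ⟨e' * (a' * s' + d' * α) - e * (a * s + d * α)
      + a' * (e * (a * d + s + d * β) - e' * (a' * d' + s' + d' * β)), ?_⟩
    linear_combination h1 - a' * h2

lemma normal (hE : Unramified p E) {θ : E} (hθ : IsIntBasis p E θ) {z : E}
    (hz : RU p E z) :
    ∃ j, Good j ∧ ∃ e : ℤ_[p], IsUnit e ∧ z = algebraMap ℤ_[p] E e * F p θ j := by
  obtain ⟨x, y, rfl⟩ := coeff hθ hz.2.1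
  by_cases hx : IsUnit x
  · refine ⟨Sum.inl (↑hx.unit⁻¹ * y), trivial, x, hx, ?_⟩
    show _ = algebraMap ℤ_[p] E x * (1 + algebraMap ℤ_[p] E (↑hx.unit⁻¹ * y) * θ)
    have hxy : x * (↑hx.unit⁻¹ * y) = y := by
      rw [← mul_assoc]
      rw [hx.mul_val_inv, one_mul]
    rw [mul_add, mul_one, ← mul_assoc, ← map_mul, hxy]
  · have hy : IsUnit y := (unit_of_ru hE hθ x y hz).resolve_left hx
    have hpx := dvd_of_not_isUnit hx
    refine ⟨Sum.inr (↑hy.unit⁻¹ * x), Dvd.dvd.mul_left hpx _, y, hy, ?_⟩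
    show _ = algebraMap ℤ_[p] E y * (algebraMap ℤ_[p] E (↑hy.unit⁻¹ * x) + θ)
    have hyx : y * (↑hy.unit⁻¹ * x) = x := by
      rw [← mul_assoc]
      rw [hy.mul_val_inv, one_mul]
    rw [mul_add, ← map_mul, hyx]


lemma aux_sum_zero (hE : Unramified p E) {θ : E} (hθ : IsIntBasis p E θ)
    (χ : Eˣ →* ℂˣ) (hχQ : TrivialOnQp p E χ) (n : ℕ) (hn : 0 < n)
    (hχ1 : ∀ u : Eˣ, MemOEiUnits p E n u → χ u = 1)
    {v : E} (hv : RU p E v) (hχv : chiV χ v ≠ 1)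
    (s : Finset (ℤ_[p] ⊕ ℤ_[p]))
    (hgood : ∀ i ∈ s, Good i)
    (hcomp : ∀ i ∈ s, ∀ j, Good j →
      (∃ e : ℤ_[p], IsUnit e ∧ v * F p θ i = algebraMap ℤ_[p] E e * F p θ j) →
      ∃ j' ∈ s, Jeq ((p:ℤ_[p])^n) j j')
    (huniq : ∀ j ∈ s, ∀ j' ∈ s, Jeq ((p:ℤ_[p])^n) j j' → j = j') :
    ∑ i ∈ s, (chiV χ (F p θ i))⁻¹ = 0 := by
  classical
  set P : ℤ_[p] := (p:ℤ_[p])^n with hPdef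
  have hP : (p:ℤ_[p]) ∣ P := dvd_pow_self _ hn.ne'
  have hstep : ∀ i : ℤ_[p] ⊕ ℤ_[p], ∃ j, i ∈ s →
      j ∈ s ∧ chiV χ v * chiV χ (F p θ i) = chiV χ (F p θ j) ∧
      ∃ e : ℤ_[p], IsUnit e ∧ ∃ w ∈ integralClosure ℤ_[p] E,
        v * F p θ i = algebraMap ℤ_[p] E e * F p θ j * (1 + algebraMap ℤ_[p] E P * w) := by
    intro i
    by_cases hi : i ∈ s
    swap
    · exact ⟨i, fun h => absurd h hi⟩
    have hgi := hgood i hi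
    have hFi := ru_F hE hθ hgi
    have hvFi : RU p E (v * F p θ i) := ru_mul hv hFi
    obtain ⟨j₀, hg₀, e, heu, hfac⟩ := normal hE hθ hvFi
    obtain ⟨j₁, hj₁s, hJ⟩ := hcomp i hi j₀ hg₀ ⟨e, heu, hfac⟩
    have hg₁ := hgood _ hj₁s
    obtain ⟨w, hw, hF01⟩ := jeq_factor hE hθ hg₀ hg₁ hJ
    have hF₀ : F p θ j₀ ≠ 0 := (ru_F hE hθ hg₀).1
    have hιe : algebraMap ℤ_[p] E e ≠ 0 := by
      intro h0
      exact hvFi.1 (by rw [hfac, h0, zero_mul])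
    refine ⟨j₁, fun _ => ⟨hj₁s, ?_, e, heu, w, hw, ?_⟩⟩
    · have h1 : chiV χ (v * F p θ i) = chiV χ (F p θ j₀) := by
        rw [hfac, chiV_mul χ hιe hF₀, chi_triv_zp χ hχQ heu, one_mul]
      rw [← chiV_mul χ hv.1 hFi.1, h1]
      exact chi_congr hE hθ χ n hn hχ1 hg₀ hg₁ hJ
    · rw [hfac, hF01]
      ring
  choose τ hτ using hstep
  have hmap : ∀ i ∈ s, τ i ∈ s := fun i hi => (hτ i hi).1
  have hinj : ∀ i ∈ s, ∀ i' ∈ s, τ i = τ i' → i = i' := by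
    intro i hi i' hi' hee
    obtain ⟨hjs, -, e, he, w, hw, hrel⟩ := hτ i hi
    obtain ⟨hjs', -, e', he', w', hw', hrel'⟩ := hτ i' hi'
    rw [hee] at hrel
    have hkeyeq : algebraMap ℤ_[p] E e' * F p θ i * (1 + algebraMap ℤ_[p] E P * w')
        = algebraMap ℤ_[p] E e * F p θ i' * (1 + algebraMap ℤ_[p] E P * w) := by
      apply mul_left_cancel₀ hv.1
      linear_combination (algebraMap ℤ_[p] E e' * (1 + algebraMap ℤ_[p] E P * w')) * hrel
        - (algebraMap ℤ_[p] E e * (1 + algebraMap ℤ_[p] E P * w)) * hrel'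
    have hJ := key hθ hP he' he hw' hw (hgood i hi) (hgood i' hi') hkeyeq
    exact huniq i hi i' hi' hJ
  have himg : s.image τ = s := by
    apply Finset.eq_of_subset_of_card_le
    · intro j hj
      obtain ⟨i, hi, rfl⟩ := Finset.mem_image.mp hj
      exact hmap i hi
    · rw [Finset.card_image_of_injOn (fun a ha b hb h => hinj a ha b hb h)]
  have hsum1 : ∑ i ∈ s, (chiV χ (F p θ (τ i)))⁻¹ = ∑ i ∈ s, (chiV χ (F p θ i))⁻¹ := by
    rw [← Finset.sum_image (g := τ) (f := fun j => (chiV χ (F p θ j))⁻¹) hinj, himg]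
  have hsum2 : ∀ i ∈ s, (chiV χ (F p θ (τ i)))⁻¹ = (chiV χ v)⁻¹ * (chiV χ (F p θ i))⁻¹ := by
    intro i hi
    rw [← (hτ i hi).2.1, mul_inv]
  have hS : ∑ i ∈ s, (chiV χ (F p θ i))⁻¹
      = (chiV χ v)⁻¹ * ∑ i ∈ s, (chiV χ (F p θ i))⁻¹ := by
    conv_lhs => rw [← hsum1]
    rw [Finset.sum_congr rfl hsum2, ← Finset.mul_sum]
  by_contra hS0
  have h1 : (1 : ℂ) = (chiV χ v)⁻¹ :=
    mul_right_cancel₀ hS0 (by rw [one_mul]; exact hS)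
  exact hχv (inv_eq_one.mp h1.symm)

end L361

open L361 in
/-- **Lemma 3.6(1)** (inert prime case). Let `E/ℚ_p` be an unramified quadratic
extension, `{1, θ}` a `ℤ_p`-basis of `𝒪_E`, and `χ : E^× → ℂ^×` trivial on `ℚ_p^×`
with conductor exponent `n > 0`. Then (both sums being well defined, the summands
depending only on the indicated residue classes)
`∑_b χ(1+bθ)⁻¹ = -∑_a χ(a+θ)⁻¹`, where `b` runs over representatives of
`ℤ_p/p^n ℤ_p` and `a` over representatives of `p ℤ_p/p^n ℤ_p`; the common value is
`-χ(θ)⁻¹` if `n = 1` and `0` if `n > 1`. -/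
theorem lemma_3_6_1 (p : ℕ) [Fact p.Prime]
    (E : Type*) [Field E] [Algebra ℚ_[p] E] [Algebra ℤ_[p] E]
    [IsScalarTower ℤ_[p] ℚ_[p] E]
    (hE : Unramified p E) (θ : E) (hθ : IsIntBasis p E θ)
    (χ : Eˣ →* ℂˣ) (hχQ : TrivialOnQp p E χ)
    (n : ℕ) (hn : 0 < n) (hχn : CondExp p E χ n)
    (T A : Finset ℤ_[p])
    (hT : ∀ x : ℤ_[p], ∃! b, b ∈ T ∧ (p : ℤ_[p]) ^ n ∣ (x - b))
    (hAmem : ∀ a ∈ A, (p : ℤ_[p]) ∣ a)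
    (hA : ∀ x : ℤ_[p], (p : ℤ_[p]) ∣ x → ∃! a, a ∈ A ∧ (p : ℤ_[p]) ^ n ∣ (x - a)) :
    (∀ b b' : ℤ_[p], (p : ℤ_[p]) ^ n ∣ (b - b') →
        chiV χ (1 + algebraMap ℤ_[p] E b * θ)
          = chiV χ (1 + algebraMap ℤ_[p] E b' * θ)) ∧
    (∀ a a' : ℤ_[p], (p : ℤ_[p]) ∣ a → (p : ℤ_[p]) ∣ a' → (p : ℤ_[p]) ^ n ∣ (a - a') →
        chiV χ (algebraMap ℤ_[p] E a + θ)
          = chiV χ (algebraMap ℤ_[p] E a' + θ)) ∧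
    (∑ b ∈ T, (chiV χ (1 + algebraMap ℤ_[p] E b * θ))⁻¹
      = - ∑ a ∈ A, (chiV χ (algebraMap ℤ_[p] E a + θ))⁻¹) ∧
    (n = 1 → ∑ b ∈ T, (chiV χ (1 + algebraMap ℤ_[p] E b * θ))⁻¹
      = - (chiV χ θ)⁻¹) ∧
    (1 < n → ∑ b ∈ T, (chiV χ (1 + algebraMap ℤ_[p] E b * θ))⁻¹ = 0) := by
  classical
  obtain ⟨hχ1, hχ2⟩ := hχn
  -- Claim 1
  have claim1 : ∀ b b' : ℤ_[p], (p : ℤ_[p]) ^ n ∣ (b - b') →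
      chiV χ (1 + algebraMap ℤ_[p] E b * θ) = chiV χ (1 + algebraMap ℤ_[p] E b' * θ) := by
    intro b b' hd
    exact chi_congr hE hθ χ n hn hχ1 (j := Sum.inl b) (j' := Sum.inl b') trivial trivial hd
  -- Claim 2
  have claim2 : ∀ a a' : ℤ_[p], (p : ℤ_[p]) ∣ a → (p : ℤ_[p]) ∣ a' →
      (p : ℤ_[p]) ^ n ∣ (a - a') →
      chiV χ (algebraMap ℤ_[p] E a + θ) = chiV χ (algebraMap ℤ_[p] E a' + θ) := by
    intro a a' ha ha' hd
    exact chi_congr hE hθ χ n hn hχ1 (j := Sum.inr a) (j' := Sum.inr a') ha ha' hd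
  -- setup for Claim 3
  obtain ⟨u, hu, hχu⟩ := hχ2 hn
  have hRUu : RU p E ↑u := ⟨u.ne_zero, hu.2.1, by
    rw [← Units.val_inv_eq_inv_val]; exact hu.2.2⟩
  have hχuv : chiV χ (↑u : E) ≠ 1 := by
    rw [chiV_unit]
    intro h
    exact hχu (Units.ext (by simpa using h))
  have hTA_good : ∀ i ∈ T.disjSum A, Good i := by
    rintro (b | a) hi
    · trivial
    · exact hAmem a (Finset.inr_mem_disjSum.mp hi)
  have hTA_uniq : ∀ j ∈ T.disjSum A, ∀ j' ∈ T.disjSum A,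
      Jeq ((p:ℤ_[p])^n) j j' → j = j' := by
    rintro (b | a) hj (b' | a') hj' hJ
    · rw [Finset.inl_mem_disjSum] at hj hj'
      have h1 := (hT b).unique ⟨hj, by simp⟩ ⟨hj', (hJ : (p:ℤ_[p])^n ∣ b - b')⟩
      exact congrArg Sum.inl h1
    · exact hJ.elim
    · exact hJ.elim
    · rw [Finset.inr_mem_disjSum] at hj hj'
      have h1 := (hA a (hAmem a hj)).unique ⟨hj, by simp⟩ ⟨hj', (hJ : (p:ℤ_[p])^n ∣ a - a')⟩
      exact congrArg Sum.inr h1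
  have hTA_comp : ∀ i ∈ T.disjSum A, ∀ j, Good j →
      (∃ e : ℤ_[p], IsUnit e ∧ (↑u : E) * F p θ i = algebraMap ℤ_[p] E e * F p θ j) →
      ∃ j' ∈ T.disjSum A, Jeq ((p:ℤ_[p])^n) j j' := by
    rintro i - (b | a) hgj -
    · obtain ⟨b', ⟨hb'T, hb'd⟩, -⟩ := hT b
      exact ⟨Sum.inl b', Finset.inl_mem_disjSum.mpr hb'T, hb'd⟩
    · obtain ⟨a', ⟨ha'A, ha'd⟩, -⟩ := hA a hgj
      exact ⟨Sum.inr a', Finset.inr_mem_disjSum.mpr ha'A, ha'd⟩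
  have hsum0 := aux_sum_zero hE hθ χ hχQ n hn hχ1 hRUu hχuv (T.disjSum A)
    hTA_good hTA_comp hTA_uniq
  rw [Finset.sum_disjSum] at hsum0
  simp only [F, Sum.elim_inl, Sum.elim_inr] at hsum0
  have claim3 : ∑ b ∈ T, (chiV χ (1 + algebraMap ℤ_[p] E b * θ))⁻¹
      = - ∑ a ∈ A, (chiV χ (algebraMap ℤ_[p] E a + θ))⁻¹ :=
    eq_neg_of_add_eq_zero_left hsum0
  refine ⟨claim1, claim2, claim3, ?_, ?_⟩
  · -- n = 1
    intro hn1
    obtain ⟨a₀, ⟨ha₀A, -⟩, ha₀u⟩ := hA 0 (dvd_zero _)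
    have hAeq : A = {a₀} := by
      apply Finset.eq_singleton_iff_unique_mem.mpr
      refine ⟨ha₀A, fun a haA => ha₀u a ⟨haA, ?_⟩⟩
      rw [hn1, pow_one, zero_sub]
      exact (hAmem a haA).neg_right
    rw [claim3, hAeq, Finset.sum_singleton]
    have h2 := claim2 a₀ 0 (hAmem a₀ ha₀A) (dvd_zero _)
      (by rw [hn1, pow_one, sub_zero]; exact hAmem a₀ ha₀A)
    rw [h2, map_zero, zero_add]
  · -- 1 < n
    intro hn2
    obtain ⟨a, w, hwmem, huval⟩ := hu.1
    obtain ⟨s, d, rfl⟩ := coeff hθ hwmem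
    set P1 : ℤ_[p] := (p:ℤ_[p])^(n-1) with hP1def
    have hpP1 : (p:ℤ_[p]) ∣ P1 := dvd_pow_self _ (by omega)
    have hup : (↑u : E) = algebraMap ℤ_[p] E (a + P1 * s)
        + algebraMap ℤ_[p] E (P1 * d) * θ := by
      rw [huval, hP1def]
      simp only [map_mul, map_add, map_pow, map_natCast]
      ring
    have hcases := unit_of_ru hE hθ _ _ (hup ▸ hRUu)
    have hx : IsUnit (a + P1 * s) :=
      hcases.resolve_right (fun h => not_isUnit_of_dvd (hpP1.mul_right d) h)
    set c : ℤ_[p] := ↑hx.unit⁻¹ * d with hcdef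
    set v : E := 1 + algebraMap ℤ_[p] E (P1 * c) * θ with hvdef
    have hxc : (a + P1 * s) * c = d := by
      rw [hcdef, ← mul_assoc, hx.mul_val_inv, one_mul]
    have huv : (↑u : E) = algebraMap ℤ_[p] E (a + P1 * s) * v := by
      rw [hup, hvdef, mul_add, mul_one, ← mul_assoc, ← map_mul]
      rw [show (a + P1 * s) * (P1 * c) = P1 * d by rw [← hxc]; ring]
    have hRUv : RU p E v := by
      have := ru_of_unit hE hθ 1 (P1 * c) (Or.inl isUnit_one)
      rw [map_one] at this
      exact this
    have hιx : algebraMap ℤ_[p] E (a + P1 * s) ≠ 0 := by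
      intro h0
      exact u.ne_zero (by rw [huv, h0, zero_mul])
    have hχv : chiV χ v ≠ 1 := by
      intro h
      apply hχuv
      rw [huv, chiV_mul χ hιx hRUv.1, chi_triv_zp χ hχQ hx, one_mul, h]
    set semb : Finset (ℤ_[p] ⊕ ℤ_[p]) := T.map ⟨Sum.inl, Sum.inl_injective⟩ with hsemb
    have hsgood : ∀ i ∈ semb, Good i := by
      intro i hi
      obtain ⟨b, -, rfl⟩ := Finset.mem_map.mp hi
      trivial
    have hsuniq : ∀ j ∈ semb, ∀ j' ∈ semb, Jeq ((p:ℤ_[p])^n) j j' → j = j' := by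
      intro j hj j' hj' hJ
      obtain ⟨b, hbT, rfl⟩ := Finset.mem_map.mp hj
      obtain ⟨b', hb'T, rfl⟩ := Finset.mem_map.mp hj'
      have h1 := (hT b).unique ⟨hbT, by simp⟩ ⟨hb'T, (hJ : (p:ℤ_[p])^n ∣ b - b')⟩
      exact congrArg _ h1
    have hscomp : ∀ i ∈ semb, ∀ j, Good j →
        (∃ e : ℤ_[p], IsUnit e ∧ v * F p θ i = algebraMap ℤ_[p] E e * F p θ j) →
        ∃ j' ∈ semb, Jeq ((p:ℤ_[p])^n) j j' := by
      rintro i hi (b'' | a'') hgj hrel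
      · obtain ⟨b₁, ⟨hb₁, hd⟩, -⟩ := hT b''
        exact ⟨Sum.inl b₁, Finset.mem_map.mpr ⟨b₁, hb₁, rfl⟩, hd⟩
      · exfalso
        obtain ⟨b, hbT, rfl⟩ := Finset.mem_map.mp hi
        obtain ⟨e, he, heq⟩ := hrel
        obtain ⟨α, β, hαβ⟩ := coeff hθ (mul_mem hθ.1 hθ.1)
        have hexp : v * F p θ (Sum.inl b)
            = algebraMap ℤ_[p] E (1 + P1 * c * b * α)
              + algebraMap ℤ_[p] E (b + P1 * c + P1 * c * b * β) * θ := by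
          show (1 + algebraMap ℤ_[p] E (P1 * c) * θ) * (1 + algebraMap ℤ_[p] E b * θ) = _
          simp only [map_mul, map_add, map_one]
          linear_combination (algebraMap ℤ_[p] E P1 * algebraMap ℤ_[p] E c * algebraMap ℤ_[p] E b) * hαβ
        have hexp2 : algebraMap ℤ_[p] E e * F p θ (Sum.inr a'')
            = algebraMap ℤ_[p] E (e * a'') + algebraMap ℤ_[p] E e * θ := by
          show algebraMap ℤ_[p] E e * (algebraMap ℤ_[p] E a'' + θ) = _
          rw [map_mul]
          ring
        simp only [Function.Embedding.coeFn_mk] at heq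
        rw [hexp, hexp2] at heq
        obtain ⟨h1, -⟩ := uniq hθ heq
        have hd1 : (p:ℤ_[p]) ∣ e * a'' := Dvd.dvd.mul_left (hgj : (p:ℤ_[p]) ∣ a'') e
        have hd2 : (p:ℤ_[p]) ∣ P1 * c * b * α :=
          ((hpP1.mul_right c).mul_right b).mul_right α
        have hone : (p:ℤ_[p]) ∣ 1 := by
          have := dvd_sub (h1.symm ▸ hd1 : (p:ℤ_[p]) ∣ 1 + P1 * c * b * α) hd2
          simpa using this
        exact not_isUnit_p (isUnit_of_dvd_one hone)
    have hsz := aux_sum_zero hE hθ χ hχQ n hn hχ1 hRUv hχv semb hsgood hscomp hsuniq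
    rw [hsemb, Finset.sum_map] at hsz
    simpa only [Function.Embedding.coeFn_mk, F, Sum.elim_inl] using hsz
end

section
/- Let $\chi \colon E^\times \to \mathbb{C}^\times$ be a group homomorphism trivial on $\mathbb{Q}_p^\times$ with conductor exponent $n > 1$. For an integer $k$ with $0 \le k \le n$, let $S_k$ denote the sum $\sum_b \chi(1+b\theta)^{-1}$ taken over a complete set of representatives $b$ of $\mathbb{Z}_p/p^n\mathbb{Z}_p$ with $\mathrm{ord}_p(b) = k$ (where, for $k = n$, the condition means $b \equiv 0 \bmod p^n$). Then $S_k = 0$ if $k < n-1$, $S_{n-1} = -1$, and $S_n = 1$. -/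
open scoped Classical

namespace ArakawaQuad

variable (p : ℕ) [Fact p.Prime]
variable (E : Type*) [Field E] [Algebra ℚ_[p] E] [Algebra ℤ_[p] E]
  [IsScalarTower ℤ_[p] ℚ_[p] E]

-- ### auxiliary lemmas
variable {p E}

lemma aux_not_unit_p : ¬ IsUnit (p : ℤ_[p]) := PadicInt.irreducible_p.not_isUnit

lemma aux_not_dvd_of_isUnit {a : ℤ_[p]} (ha : IsUnit a) : ¬ (p : ℤ_[p]) ∣ a :=
  fun h => aux_not_unit_p (isUnit_of_dvd_unit h ha)

lemma aux_isUnit_of_not_dvd {a : ℤ_[p]} (h : ¬ (p : ℤ_[p]) ∣ a) : IsUnit a := by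
  rw [PadicInt.isUnit_iff]
  refine le_antisymm (PadicInt.norm_le_one a) ?_
  by_contra hlt
  exact h ((PadicInt.norm_lt_one_iff_dvd a).mp (lt_of_not_ge hlt))

lemma aux_isUnit_add {a b : ℤ_[p]} (ha : IsUnit a) (hb : (p : ℤ_[p]) ∣ b) :
    IsUnit (a + b) := by
  apply aux_isUnit_of_not_dvd
  intro h
  exact aux_not_dvd_of_isUnit ha (by simpa using dvd_sub h hb)

lemma aux_nat_dvd_iff {j : ℕ} : (p : ℤ_[p]) ∣ (j : ℤ_[p]) ↔ p ∣ j := by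
  rw [← PadicInt.norm_lt_one_iff_dvd]
  have : ((j : ℤ) : ℤ_[p]) = (j : ℤ_[p]) := by push_cast; ring
  rw [← this, PadicInt.norm_int_lt_one_iff_dvd]
  exact Int.natCast_dvd_natCast

lemma aux_nat_eq_of_cong {a b : ℕ} (ha : a < p) (hb : b < p)
    (h : (p : ℤ_[p]) ∣ ((a : ℤ_[p]) - b)) : a = b := by
  have : ((a : ℤ) - b : ℤ) = ((a : ℤ_[p]) - b : ℤ_[p]) := by push_cast; ring
  have h4 : ‖((((a : ℤ) - b : ℤ)) : ℤ_[p])‖ < 1 := by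
    rw [this]; exact (PadicInt.norm_lt_one_iff_dvd _).mpr h
  have h3 : (p : ℤ) ∣ ((a : ℤ) - b) := by
    exact_mod_cast (PadicInt.norm_int_lt_one_iff_dvd _).mp h4
  have := Int.eq_zero_of_abs_lt_dvd h3 (by rw [abs_lt]; omega)
  omega

lemma aux_toZModPow_eq_iff {m : ℕ} {a b : ℤ_[p]} :
    PadicInt.toZModPow m a = PadicInt.toZModPow m b ↔ (p : ℤ_[p]) ^ m ∣ a - b := by
  rw [← sub_eq_zero, ← map_sub, ← RingHom.mem_ker, PadicInt.ker_toZModPow,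
    Ideal.mem_span_singleton]

lemma aux_appr_one_dvd (x : ℤ_[p]) : (p : ℤ_[p]) ∣ x - (x.appr 1 : ℤ_[p]) := by
  have := PadicInt.appr_spec 1 x
  rwa [Ideal.mem_span_singleton, pow_one] at this


section Main
set_option linter.unusedSectionVars false
variable {θ : E} {χ : Eˣ →* ℂˣ} {n : ℕ}

local notation "O" => integralClosure ℤ_[p] E
local notation "ι" => algebraMap ℤ_[p] E

lemma aux_pmul (m : ℕ) (x : ℤ_[p]) : (p : E) ^ m * ι x = ι ((p : ℤ_[p]) ^ m * x) := by
  rw [map_mul, map_pow, map_natCast]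

lemma aux_iota_mem (x : ℤ_[p]) : ι x ∈ O := Subalgebra.algebraMap_mem _ x

lemma aux_rep_unique (hθ : IsIntBasis p E θ) {a b c d : ℤ_[p]}
    (h : ι a + ι b * θ = ι c + ι d * θ) : a = c ∧ b = d := by
  have hz : ι a + ι b * θ ∈ O :=
    add_mem (aux_iota_mem a) (mul_mem (aux_iota_mem b) hθ.1)
  obtain ⟨ab, -, huniq⟩ := hθ.2 _ hz
  have h1 : (a, b) = ab := huniq (a, b) rfl
  have h2 : (c, d) = ab := huniq (c, d) h
  rw [← h2] at h1
  exact ⟨congrArg Prod.fst h1, congrArg Prod.snd h1⟩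

lemma aux_exists_unit_of (hE : Unramified p E) {z : E} (hz : z ∈ O)
    (hnd : ¬ ∃ w ∈ O, z = (p : E) * w) : ∃ u : Eˣ, (↑u : E) = z ∧ u ∈ OEUnits p E := by
  obtain ⟨w, hw, hzw⟩ := (hE.2 z hz).mpr hnd
  refine ⟨Units.mk z w hzw (by rw [mul_comm] at hzw; exact hzw), rfl, hz, ?_⟩
  exact hw

lemma aux_unit_exists (hE : Unramified p E) (hθ : IsIntBasis p E θ) (b : ℤ_[p]) :
    ∃ u : Eˣ, (↑u : E) = 1 + ι b * θ ∧ u ∈ OEUnits p E := by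
  have hz : 1 + ι b * θ ∈ O :=
    add_mem (one_mem _) (mul_mem (aux_iota_mem b) hθ.1)
  apply aux_exists_unit_of hE hz
  rintro ⟨w, hw, heq⟩
  obtain ⟨⟨c, d⟩, hcd, -⟩ := hθ.2 w hw
  have : ι 1 + ι b * θ = ι ((p : ℤ_[p]) * c) + ι ((p : ℤ_[p]) * d) * θ := by
    rw [map_one, map_mul, map_mul, map_natCast]
    rw [heq, hcd]; ring
  have h1 := (aux_rep_unique hθ this).1
  exact aux_not_unit_p (IsUnit.of_mul_eq_one c h1.symm)

lemma aux_chi_congr (hχn : CondExp p E χ n) {u v : Eˣ}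
    (hu : u ∈ OEUnits p E) (hv : v ∈ OEUnits p E)
    (h : ∃ w ∈ O, (↑u : E) - ↑v = (p : E) ^ n * w) : χ u = χ v := by
  obtain ⟨w, hw, hw2⟩ := h
  have hmem : u * v⁻¹ ∈ OEUnits p E := mul_mem hu (inv_mem hv)
  have key : χ (u * v⁻¹) = 1 := by
    apply hχn.1
    refine ⟨⟨1, w * ↑v⁻¹, mul_mem hw hv.2, ?_⟩, hmem.1, hmem.2⟩
    have hvv : (↑v : E) * ↑v⁻¹ = 1 := by
      rw [← Units.val_mul, mul_inv_cancel, Units.val_one]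
    have : (↑u : E) = ↑v + (p : E) ^ n * w := by rw [← hw2]; ring
    rw [Units.val_mul, this, map_one, add_mul, hvv]
    ring
  have : χ u = χ (u * v⁻¹) * χ v := by rw [← map_mul]; congr 1; group
  rw [this, key, one_mul]

lemma aux_chi_scal (hχQ : TrivialOnQp p E χ) {a : ℤ_[p]} (ha : IsUnit a)
    {u v : Eˣ} (h : (↑v : E) = ι a * ↑u) : χ v = χ u := by
  set t : ℚ_[p]ˣ := Units.map (algebraMap ℤ_[p] ℚ_[p]).toMonoidHom ha.unit with ht
  have htv : algebraMap ℚ_[p] E (↑t : ℚ_[p]) = ι a := by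
    rw [ht]
    show algebraMap ℚ_[p] E (algebraMap ℤ_[p] ℚ_[p] (↑ha.unit : ℤ_[p])) = ι a
    rw [← IsScalarTower.algebraMap_apply, ha.unit_spec]
  have hv : v = (Units.map (algebraMap ℚ_[p] E).toMonoidHom t) * u := by
    ext
    rw [Units.val_mul, h]
    congr 1
    exact htv.symm
  rw [hv, map_mul, hχQ t, one_mul]


section U
variable (hE : Unramified p E) (hθ : IsIntBasis p E θ) (hχQ : TrivialOnQp p E χ)
  (hχn : CondExp p E χ n) (hn : 1 < n)
  {U : ℤ_[p] → Eˣ} (hU : ∀ b : ℤ_[p], (↑(U b) : E) = 1 + algebraMap ℤ_[p] E b * θ)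
  (hUO : ∀ b, U b ∈ OEUnits p E)

include hθ hχn hU hUO in
lemma aux_g_congr {b b' : ℤ_[p]}
    (h : (p : ℤ_[p]) ^ n ∣ b - b') : χ (U b) = χ (U b') := by
  obtain ⟨c, hc⟩ := h
  apply aux_chi_congr hχn (hUO b) (hUO b')
  refine ⟨ι c * θ, mul_mem (aux_iota_mem c) hθ.1, ?_⟩
  calc (↑(U b) : E) - ↑(U b') = ι (b - b') * θ := by
        rw [hU, hU, map_sub]; ring
    _ = (p : E) ^ n * (ι c * θ) := by rw [hc, ← aux_pmul, mul_assoc]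

include hθ hχn hn hU hUO in
lemma aux_psi_mul (y y' : ℤ_[p]) :
    χ (U ((p : ℤ_[p]) ^ (n - 1) * (y + y'))) =
      χ (U ((p : ℤ_[p]) ^ (n - 1) * y)) * χ (U ((p : ℤ_[p]) ^ (n - 1) * y')) := by
  have hmem : U ((p : ℤ_[p]) ^ (n - 1) * y) * U ((p : ℤ_[p]) ^ (n - 1) * y') ∈
      OEUnits p E := mul_mem (hUO _) (hUO _)
  have key : χ (U ((p : ℤ_[p]) ^ (n - 1) * y) * U ((p : ℤ_[p]) ^ (n - 1) * y')) =
      χ (U ((p : ℤ_[p]) ^ (n - 1) * (y + y'))) := by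
    apply aux_chi_congr hχn hmem (hUO _)
    refine ⟨ι ((p : ℤ_[p]) ^ (n - 2) * (y * y')) * (θ * θ),
      mul_mem (aux_iota_mem _) (mul_mem hθ.1 hθ.1), ?_⟩
    rw [Units.val_mul, hU, hU, hU]
    have hpow : ι ((p : ℤ_[p]) ^ (n - 1) * y) * ι ((p : ℤ_[p]) ^ (n - 1) * y') =
        (p : E) ^ n * ι ((p : ℤ_[p]) ^ (n - 2) * (y * y')) := by
      rw [aux_pmul, ← map_mul]
      congr 1
      have e : n - 1 + (n - 1) = n + (n - 2) := by omega
      calc (p : ℤ_[p]) ^ (n-1) * y * ((p : ℤ_[p]) ^ (n-1) * y')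
          = (p : ℤ_[p]) ^ (n - 1 + (n - 1)) * (y * y') := by rw [pow_add]; ring
        _ = (p : ℤ_[p]) ^ n * ((p : ℤ_[p]) ^ (n - 2) * (y * y')) := by
            rw [e, pow_add]; ring
    calc (1 + ι ((p:ℤ_[p]) ^ (n-1) * y) * θ) * (1 + ι ((p:ℤ_[p]) ^ (n-1) * y') * θ)
        - (1 + ι ((p:ℤ_[p]) ^ (n-1) * (y + y')) * θ)
        = ι ((p:ℤ_[p]) ^ (n-1) * y) * ι ((p:ℤ_[p]) ^ (n-1) * y') * (θ * θ)
          + (ι ((p:ℤ_[p])^(n-1) * y) + ι ((p:ℤ_[p])^(n-1) * y')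
             - ι ((p:ℤ_[p])^(n-1) * (y+y'))) * θ := by ring
      _ = (p : E) ^ n * (ι ((p : ℤ_[p]) ^ (n - 2) * (y * y')) * (θ * θ)) := by
          rw [hpow, ← map_add, ← map_sub]
          have : (p:ℤ_[p]) ^ (n-1) * y + (p:ℤ_[p]) ^ (n-1) * y'
              - (p:ℤ_[p]) ^ (n-1) * (y + y') = 0 := by ring
          rw [this, map_zero, zero_mul, add_zero, mul_assoc]
  rw [← key, map_mul]

include hθ hχn hn hU hUO in
lemma aux_psi_congr {y y' : ℤ_[p]} (h : (p : ℤ_[p]) ∣ y - y') :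
    χ (U ((p : ℤ_[p]) ^ (n - 1) * y)) = χ (U ((p : ℤ_[p]) ^ (n - 1) * y')) := by
  apply aux_g_congr hθ hχn hU hUO
  obtain ⟨c, hc⟩ := h
  refine ⟨c, ?_⟩
  have e : n = (n - 1) + 1 := by omega
  calc (p : ℤ_[p]) ^ (n-1) * y - (p : ℤ_[p]) ^ (n-1) * y'
      = (p : ℤ_[p]) ^ ((n-1)+1) * c := by rw [← mul_sub, hc, pow_succ]; ring
    _ = (p : ℤ_[p]) ^ n * c := by rw [← e]

include hθ hχn hU hUO in
lemma aux_U_zero : χ (U 0) = 1 := by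
  have : U 0 = 1 := by
    ext; rw [hU 0, map_zero, zero_mul, add_zero, Units.val_one]
  rw [this, map_one]

include hθ hχn hn hU hUO in
lemma aux_psi_pow (m : ℕ) :
    χ (U ((p : ℤ_[p]) ^ (n - 1) * (m : ℤ_[p]))) = χ (U ((p : ℤ_[p]) ^ (n - 1))) ^ m := by
  induction m with
  | zero =>
    simp only [Nat.cast_zero, mul_zero, pow_zero]
    exact aux_U_zero hθ hχn hU hUO
  | succ m ih =>
    have : ((m + 1 : ℕ) : ℤ_[p]) = (m : ℤ_[p]) + 1 := by push_cast; ring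
    rw [this, aux_psi_mul hθ hχn hn hU hUO, ih, mul_one, pow_succ]

include hθ hχn hn hU hUO in
lemma aux_zeta_pow_p : χ (U ((p : ℤ_[p]) ^ (n - 1))) ^ p = 1 := by
  rw [← aux_psi_pow hθ hχn hn hU hUO]
  have h1 : χ (U ((p : ℤ_[p]) ^ (n - 1) * ((p : ℕ) : ℤ_[p]))) =
      χ (U ((p : ℤ_[p]) ^ (n - 1) * 0)) :=
    aux_psi_congr hθ hχn hn hU hUO (by simp)
  rw [h1, mul_zero]
  exact aux_U_zero hθ hχn hU hUO


lemma aux_p_mem : ((p : ℕ) : E) ∈ O := by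
  exact_mod_cast Subalgebra.natCast_mem O p

include hE hθ hχQ hχn hn hU hUO in
lemma aux_zeta_ne_one : χ (U ((p : ℤ_[p]) ^ (n - 1))) ≠ 1 := by
  intro h1
  -- all psi values are 1
  have allpsi : ∀ y : ℤ_[p], χ (U ((p : ℤ_[p]) ^ (n - 1) * y)) = 1 := by
    intro y
    have h2 : χ (U ((p : ℤ_[p]) ^ (n - 1) * y)) =
        χ (U ((p : ℤ_[p]) ^ (n - 1) * ((y.appr 1 : ℕ) : ℤ_[p]))) :=
      aux_psi_congr hθ hχn hn hU hUO (aux_appr_one_dvd y)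
    rw [h2, aux_psi_pow hθ hχn hn hU hUO, h1, one_pow]
  obtain ⟨u, ⟨⟨a, w, hwO, hval⟩, huO, huiO⟩, hune⟩ := hχn.2 (by omega)
  apply hune
  -- a is a unit
  have ha : IsUnit a := by
    apply aux_isUnit_of_not_dvd
    rintro ⟨a₂, ha₂⟩
    have hnotp := (hE.2 (↑u) huO).mp ⟨↑u⁻¹, huiO, by
      rw [← Units.val_mul, mul_inv_cancel, Units.val_one]⟩
    apply hnotp
    refine ⟨ι a₂ + (p : E) ^ (n - 2) * w, add_mem (aux_iota_mem a₂)
      (mul_mem (pow_mem aux_p_mem _) hwO), ?_⟩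
    have hp1 : ((p : E)) ^ (n - 1) = (p : E) * (p : E) ^ (n - 2) := by
      rw [← pow_succ']
      congr 1
      omega
    rw [hval, ha₂, map_mul, map_natCast, hp1]
    ring
  -- decompose w
  obtain ⟨⟨c, d⟩, hcd, -⟩ := hθ.2 w hwO
  set A : ℤ_[p] := a + (p : ℤ_[p]) ^ (n - 1) * c with hA
  have hpd : (p : ℤ_[p]) ∣ (p : ℤ_[p]) ^ (n - 1) * c :=
    dvd_mul_of_dvd_left (dvd_pow_self _ (by omega)) c
  have hAu : IsUnit A := aux_isUnit_add ha hpd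
  set A' : ℤ_[p] := ↑hAu.unit⁻¹ with hA'
  have hAA' : A * A' = 1 := hAu.mul_val_inv
  have hi4 : ι A * ι A' = 1 := by rw [← map_mul, hAA', map_one]
  have hi3 : ι A = ι a + (p : E) ^ (n - 1) * ι c := by
    rw [hA]; simp only [map_add, map_mul, map_pow, map_natCast]
  -- key equation
  have hkey : (↑u : E) = ι A * ↑(U ((p : ℤ_[p]) ^ (n - 1) * (d * A'))) := by
    rw [hU, hval, hcd]
    simp only [map_add, map_mul, map_pow, map_natCast]
    linear_combination (-1 : E) * hi3 - (p : E) ^ (n - 1) * ι d * θ * hi4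
  have := aux_chi_scal hχQ hAu hkey
  rw [this, allpsi]

include hE hθ hχQ hχn hn hU hUO in
lemma aux_shift (b : ℤ_[p]) : ∃ y : ℤ_[p], IsUnit y ∧ ∀ c : ℤ_[p],
    χ (U (b + (p : ℤ_[p]) ^ (n - 1) * c)) =
      χ (U b) * χ (U ((p : ℤ_[p]) ^ (n - 1) * (c * y))) := by
  set e : E := ↑(U b)⁻¹ with he
  have heO : e ∈ O := (hUO b).2
  have hbe : (1 + ι b * θ) * e = 1 := by
    rw [← hU b, he, ← Units.val_mul, mul_inv_cancel, Units.val_one]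
  have hθe : θ * e ∈ O := mul_mem hθ.1 heO
  obtain ⟨⟨x, y⟩, hxy, -⟩ := hθ.2 _ hθe
  obtain ⟨⟨s, t⟩, hst, -⟩ := hθ.2 (θ * θ) (mul_mem hθ.1 hθ.1)
  -- y is a unit
  have hyu : IsUnit y := by
    apply aux_isUnit_of_not_dvd
    intro hpy
    have hrep : ι 0 + ι 1 * θ = ι (x + y * b * s) + ι (y + x * b + y * b * t) * θ := by
      rw [map_zero, map_one, zero_add, one_mul]
      calc θ = θ * (e * (1 + ι b * θ)) := by
            rw [mul_comm e, hbe, mul_one]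
        _ = (ι x + ι y * θ) * (1 + ι b * θ) := by rw [← mul_assoc, hxy]
        _ = ι x + (ι y + ι x * ι b) * θ + ι y * ι b * (θ * θ) := by ring
        _ = ι x + (ι y + ι x * ι b) * θ + ι y * ι b * (ι s + ι t * θ) := by rw [hst]
        _ = ι (x + y * b * s) + ι (y + x * b + y * b * t) * θ := by
            rw [map_add, map_add, map_add, map_mul, map_mul, map_mul, map_mul,
              map_mul]
            ring
    obtain ⟨h0, h1⟩ := aux_rep_unique hθ hrep
    have hpx : (p : ℤ_[p]) ∣ x := by
      have hx : x = -(y * b * s) := eq_neg_of_add_eq_zero_left h0.symm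
      rw [hx]
      exact dvd_neg.mpr (dvd_mul_of_dvd_left (dvd_mul_of_dvd_left hpy b) s)
    have hp1 : (p : ℤ_[p]) ∣ 1 := by
      rw [h1]
      exact dvd_add (dvd_add hpy (dvd_mul_of_dvd_left hpx b))
        (dvd_mul_of_dvd_left (dvd_mul_of_dvd_left hpy b) t)
    exact aux_not_unit_p (isUnit_of_dvd_one hp1)
  refine ⟨y, hyu, fun c => ?_⟩
  set A : ℤ_[p] := 1 + (p : ℤ_[p]) ^ (n - 1) * (c * x) with hA
  have hpd : (p : ℤ_[p]) ∣ (p : ℤ_[p]) ^ (n - 1) * (c * x) :=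
    dvd_mul_of_dvd_left (dvd_pow_self _ (by omega)) _
  have hAu : IsUnit A := aux_isUnit_add isUnit_one hpd
  set A' : ℤ_[p] := ↑hAu.unit⁻¹ with hA'
  have hAA' : A * A' = 1 := hAu.mul_val_inv
  have hi4 : ι A * ι A' = 1 := by rw [← map_mul, hAA', map_one]
  have hi3 : ι A = 1 + (p : E) ^ (n - 1) * (ι c * ι x) := by
    rw [hA]; simp only [map_add, map_mul, map_pow, map_natCast, map_one]
  have hxye : θ * e = ι x + ι y * θ := hxy
  have hkey : (↑(U (b + (p : ℤ_[p]) ^ (n - 1) * c)) : E) =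
      ι A * ↑(U b * U ((p : ℤ_[p]) ^ (n - 1) * (c * (y * A')))) := by
    rw [Units.val_mul, hU, hU, hU]
    simp only [map_add, map_mul, map_pow, map_natCast]
    linear_combination (-(1 + ι b * θ) : E) * hi3 -
      ((p : E) ^ (n - 1) * ι c * θ) * hbe +
      ((p : E) ^ (n - 1) * ι c * (1 + ι b * θ)) * hxye -
      ((1 + ι b * θ) * (p : E) ^ (n - 1) * ι c * ι y * θ) * hi4
  have hchi := aux_chi_scal hχQ hAu hkey
  rw [hchi, map_mul]
  congr 1
  apply aux_psi_congr hθ hχn hn hU hUO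
  have : c * (y * A') - c * y = c * y * (A' - 1) := by ring
  rw [this]
  apply dvd_mul_of_dvd_right
  have hA'm : A' - 1 = A' * (1 - A) := by
    calc A' - 1 = A' - A * A' := by rw [hAA']
      _ = A' * (1 - A) := by ring
  rw [hA'm]
  apply dvd_mul_of_dvd_right
  have h1A : 1 - A = -((p : ℤ_[p]) ^ (n - 1) * (c * x)) := by rw [hA]; ring
  rw [h1A]
  exact dvd_neg.mpr hpd

end U
end Main

end ArakawaQuad

open ArakawaQuad

/-- **Lemma 3.6(2)** (inert prime case). Let `E/ℚ_p` be an unramified quadratic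
extension, `{1, θ}` a `ℤ_p`-basis of `𝒪_E`, and `χ : E^× → ℂ^×` trivial on `ℚ_p^×`
with conductor exponent `n > 1`. For `0 ≤ k ≤ n`, the sum `S_k = ∑_b χ(1+bθ)⁻¹` over
a complete set of representatives `b` of `ℤ_p/p^n ℤ_p` with `ord_p(b) = k` (for
`k = n` this means `b ≡ 0 mod p^n`) satisfies `S_k = 0` if `k < n-1`, `S_{n-1} = -1`,
and `S_n = 1`. -/
theorem lemma_3_6_2 (p : ℕ) [Fact p.Prime]
    (E : Type*) [Field E] [Algebra ℚ_[p] E] [Algebra ℤ_[p] E]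
    [IsScalarTower ℤ_[p] ℚ_[p] E]
    (hE : Unramified p E) (θ : E) (hθ : IsIntBasis p E θ)
    (χ : Eˣ →* ℂˣ) (hχQ : TrivialOnQp p E χ)
    (n : ℕ) (hn : 1 < n) (hχn : CondExp p E χ n)
    (k : ℕ) (hk : k ≤ n) (T : Finset ℤ_[p])
    (hTmem : ∀ b ∈ T, (p : ℤ_[p]) ^ k ∣ b ∧ (k < n → ¬ (p : ℤ_[p]) ^ (k + 1) ∣ b))
    (hTrep : ∀ x : ℤ_[p], (p : ℤ_[p]) ^ k ∣ x → (k < n → ¬ (p : ℤ_[p]) ^ (k + 1) ∣ x) →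
      ∃! b, b ∈ T ∧ (p : ℤ_[p]) ^ n ∣ (x - b)) :
    (k + 1 < n → ∑ b ∈ T, (chiV χ (1 + algebraMap ℤ_[p] E b * θ))⁻¹ = 0) ∧
    (k + 1 = n → ∑ b ∈ T, (chiV χ (1 + algebraMap ℤ_[p] E b * θ))⁻¹ = -1) ∧
    (k = n → ∑ b ∈ T, (chiV χ (1 + algebraMap ℤ_[p] E b * θ))⁻¹ = 1) := by

  classical
  have hp : p.Prime := Fact.out
  have hp0 : (p : ℤ_[p]) ≠ 0 := Nat.cast_ne_zero.mpr hp.ne_zero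
  choose U hU hUO using aux_unit_exists hE hθ
  -- evaluation of chiV
  have hchiV : ∀ b : ℤ_[p],
      (chiV χ (1 + algebraMap ℤ_[p] E b * θ))⁻¹ = (((χ (U b)) : ℂ))⁻¹ := by
    intro b
    have hne : (1 + algebraMap ℤ_[p] E b * θ) ≠ 0 := by
      rw [← hU b]; exact Units.ne_zero _
    rw [chiV, dif_pos hne]
    have : Units.mk0 _ hne = U b := Units.ext (by rw [Units.val_mk0, hU b])
    rw [this]
  have hsum : ∀ s : Finset ℤ_[p],
      ∑ b ∈ s, (chiV χ (1 + algebraMap ℤ_[p] E b * θ))⁻¹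
        = ∑ b ∈ s, (((χ (U b)) : ℂ))⁻¹ :=
    fun s => Finset.sum_congr rfl fun b _ => hchiV b
  -- injectivity of representatives
  have TInj : ∀ b ∈ T, ∀ b' ∈ T, (p : ℤ_[p]) ^ n ∣ b - b' → b = b' := by
    intro b hb b' hb' hd
    obtain ⟨hk1, hk2⟩ := hTmem b hb
    obtain ⟨c, hc, huniq⟩ := hTrep b hk1 hk2
    have h1 := huniq b ⟨hb, by simp⟩
    have h2 := huniq b' ⟨hb', hd⟩
    rw [h1, h2]
  -- the character value ζ and ξ := (ζ : ℂ)⁻¹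
  set ζ : ℂˣ := χ (U ((p : ℤ_[p]) ^ (n - 1))) with hζdef
  have hζp : ζ ^ p = 1 := aux_zeta_pow_p hθ hχn hn hU hUO
  have hζ1 : ζ ≠ 1 := aux_zeta_ne_one hE hθ hχQ hχn hn hU hUO
  set ξ : ℂ := ((ζ : ℂ))⁻¹ with hξdef
  have hξ1 : ξ ≠ 1 := by
    intro h
    apply hζ1
    apply Units.ext
    have : ((ζ : ℂ))⁻¹ = 1 := h
    rw [inv_eq_one] at this
    simpa using this
  have hξp : ξ ^ p = 1 := by
    rw [hξdef, inv_pow, ← Units.val_pow_eq_pow_val, hζp, Units.val_one, inv_one]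
  have hgeom : ∑ j ∈ Finset.range p, ξ ^ j = 0 := by
    rw [geom_sum_eq hξ1, hξp, sub_self, zero_div]
  -- value as power of ζ
  have hval : ∀ z : ℤ_[p], χ (U ((p : ℤ_[p]) ^ (n - 1) * z)) = ζ ^ (z.appr 1) := by
    intro z
    have h2 : χ (U ((p : ℤ_[p]) ^ (n - 1) * z)) =
        χ (U ((p : ℤ_[p]) ^ (n - 1) * ((z.appr 1 : ℕ) : ℤ_[p]))) :=
      aux_psi_congr hθ hχn hn hU hUO (aux_appr_one_dvd z)
    rw [h2, aux_psi_pow hθ hχn hn hU hUO, hζdef]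
  have happr_lt : ∀ z : ℤ_[p], z.appr 1 < p := by
    intro z
    have := PadicInt.appr_lt z 1
    simpa using this
  refine ⟨?_, ?_, ?_⟩
  · -- k + 1 < n
    intro hklt
    rw [hsum]
    set G : ℤ_[p] →+* ZMod (p ^ (n - 1)) := PadicInt.toZModPow (n - 1) with hGdef
    rw [← Finset.sum_fiberwise_of_maps_to (fun b hb => Finset.mem_image_of_mem G hb)
      (fun b => (((χ (U b)) : ℂ))⁻¹)]
    apply Finset.sum_eq_zero
    intro c hc
    obtain ⟨b₀, hb₀T, hGb₀⟩ := Finset.mem_image.mp hc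
    obtain ⟨y, hyu, hsh⟩ := aux_shift hE hθ hχQ hχn hn hU hUO b₀
    set y' : ℤ_[p] := ↑hyu.unit⁻¹ with hy'def
    have hyy' : y * y' = 1 := hyu.mul_val_inv
    set df : ℤ_[p] → ℤ_[p] := fun b =>
      if h : (p : ℤ_[p]) ^ (n - 1) ∣ (b - b₀) then Classical.choose h else 0 with hdfdef
    have hdf : ∀ b ∈ T.filter (fun b => G b = c),
        b - b₀ = (p : ℤ_[p]) ^ (n - 1) * df b := by
      intro b hb
      obtain ⟨hbT, hGb⟩ := Finset.mem_filter.mp hb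
      have hdvd : (p : ℤ_[p]) ^ (n - 1) ∣ (b - b₀) := by
        rw [← aux_toZModPow_eq_iff]
        show G b = G b₀
        rw [hGb, hGb₀]
      simp only [hdfdef, dif_pos hdvd]
      exact Classical.choose_spec hdvd
    have hpn : (p : ℤ_[p]) ^ n = (p : ℤ_[p]) ^ (n - 1) * p := by
      rw [← pow_succ]; congr 1; omega
    set mf : ℤ_[p] → ℕ := fun b => ((df b * y).appr 1) with hmfdef
    set C : ℂ := (((χ (U b₀)) : ℂ))⁻¹ with hCdef
    have key : ∑ b ∈ T.filter (fun b => G b = c), (((χ (U b)) : ℂ))⁻¹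
        = ∑ j ∈ Finset.range p, C * ξ ^ j := by
      refine Finset.sum_bij (fun b _ => mf b) ?_ ?_ ?_ ?_
      · intro b hb
        exact Finset.mem_range.mpr (happr_lt _)
      · -- injectivity
        intro b hb b' hb' heq0
        have heq : mf b = mf b' := heq0
        obtain ⟨hbT, -⟩ := Finset.mem_filter.mp hb
        obtain ⟨hbT', -⟩ := Finset.mem_filter.mp hb'
        apply TInj b hbT b' hbT'
        have d1 := aux_appr_one_dvd (df b * y)
        have d2 := aux_appr_one_dvd (df b' * y)
        have d3 : (p : ℤ_[p]) ∣ (df b - df b') * y := by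
          have hrw : (df b - df b') * y =
              (df b * y - ((mf b : ℕ) : ℤ_[p])) - (df b' * y - ((mf b' : ℕ) : ℤ_[p]))
                + (((mf b : ℕ) : ℤ_[p]) - ((mf b' : ℕ) : ℤ_[p])) := by ring
          rw [hrw]
          exact dvd_add (dvd_sub d1 d2) (by rw [heq]; simp)
        have d4 : (p : ℤ_[p]) ∣ df b - df b' := by
          have hrw : df b - df b' = ((df b - df b') * y) * y' := by
            rw [mul_assoc, hyy', mul_one]
          rw [hrw]
          exact dvd_mul_of_dvd_left d3 y'
        obtain ⟨c₂, hc₂⟩ := d4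
        refine ⟨c₂, ?_⟩
        calc b - b' = (p : ℤ_[p]) ^ (n - 1) * (df b - df b') := by
              rw [mul_sub, ← hdf b hb, ← hdf b' hb']; ring
          _ = (p : ℤ_[p]) ^ n * c₂ := by rw [hc₂, hpn]; ring
      · -- surjectivity
        intro j hj
        have hjp : j < p := Finset.mem_range.mp hj
        set x : ℤ_[p] := b₀ + (p : ℤ_[p]) ^ (n - 1) * ((j : ℤ_[p]) * y') with hxdef
        have cond1 : (p : ℤ_[p]) ^ k ∣ x :=
          dvd_add (hTmem b₀ hb₀T).1
            (dvd_mul_of_dvd_left (pow_dvd_pow _ (by omega : k ≤ n - 1)) _)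
        have cond2 : k < n → ¬ (p : ℤ_[p]) ^ (k + 1) ∣ x := by
          intro _ h
          apply (hTmem b₀ hb₀T).2 (by omega)
          have hb₀x : b₀ = x - (p : ℤ_[p]) ^ (n - 1) * ((j : ℤ_[p]) * y') := by
            rw [hxdef]; ring
          rw [hb₀x]
          exact dvd_sub h
            (dvd_mul_of_dvd_left (pow_dvd_pow _ (by omega : k + 1 ≤ n - 1)) _)
        obtain ⟨b, ⟨hbT, hdvd⟩, -⟩ := hTrep x cond1 cond2
        have hbF : b ∈ T.filter (fun b => G b = c) := by
          refine Finset.mem_filter.mpr ⟨hbT, ?_⟩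
          have h1 : (p : ℤ_[p]) ^ (n - 1) ∣ x - b :=
            dvd_trans (pow_dvd_pow _ (by omega : n - 1 ≤ n)) hdvd
          have h2 : (p : ℤ_[p]) ^ (n - 1) ∣ b - b₀ := by
            have hrw : b - b₀ = -(x - b) + (p : ℤ_[p]) ^ (n - 1) * ((j : ℤ_[p]) * y') := by
              rw [hxdef]; ring
            rw [hrw]
            exact dvd_add (dvd_neg.mpr h1) (dvd_mul_right _ _)
          have : G b = G b₀ := aux_toZModPow_eq_iff.mpr h2
          rw [this, hGb₀]
        refine ⟨b, hbF, ?_⟩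
        obtain ⟨c₂, hc₂⟩ := hdvd
        have e3 : df b - (j : ℤ_[p]) * y' = -(p * c₂) := by
          apply mul_left_cancel₀ (pow_ne_zero (n - 1) hp0)
          calc (p : ℤ_[p]) ^ (n - 1) * (df b - (j : ℤ_[p]) * y')
              = (b - b₀) - (p : ℤ_[p]) ^ (n - 1) * ((j : ℤ_[p]) * y') := by
                rw [mul_sub, ← hdf b hbF]
            _ = -(x - b) := by rw [hxdef]; ring
            _ = -((p : ℤ_[p]) ^ n * c₂) := by rw [hc₂]
            _ = (p : ℤ_[p]) ^ (n - 1) * -(p * c₂) := by rw [hpn]; ring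
        have hy'y : y' * y = 1 := by rw [mul_comm]; exact hyy'
        have e4 : (p : ℤ_[p]) ∣ df b * y - (j : ℤ_[p]) := by
          have hrw : df b * y - (j : ℤ_[p]) = (df b - (j : ℤ_[p]) * y') * y
              + (j : ℤ_[p]) * (y' * y) - (j : ℤ_[p]) := by ring
          rw [hrw, hy'y, mul_one, e3]
          refine ⟨-(c₂ * y), ?_⟩; ring
        have d5 : (p : ℤ_[p]) ∣ ((mf b : ℕ) : ℤ_[p]) - (j : ℤ_[p]) := by
          have d1 := aux_appr_one_dvd (df b * y)
          have hrw : ((mf b : ℕ) : ℤ_[p]) - (j : ℤ_[p]) =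
              -(df b * y - ((mf b : ℕ) : ℤ_[p])) + (df b * y - (j : ℤ_[p])) := by ring
          rw [hrw]
          exact dvd_add (dvd_neg.mpr d1) e4
        exact aux_nat_eq_of_cong (happr_lt _) hjp d5
      · -- values
        intro b hb
        have hb2 : b₀ + (p : ℤ_[p]) ^ (n - 1) * df b = b := by
          have h := hdf b hb
          rw [← h]; ring
        have h1 : χ (U b) = χ (U b₀) * ζ ^ (mf b) := by
          have step : χ (U (b₀ + (p : ℤ_[p]) ^ (n - 1) * df b))
              = χ (U b₀) * ζ ^ (mf b) := by
            rw [hsh (df b), hval]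
          rwa [hb2] at step
        show (((χ (U b)) : ℂ))⁻¹ = C * ξ ^ (mf b)
        rw [h1, Units.val_mul, mul_inv, Units.val_pow_eq_pow_val, ← inv_pow]
    rw [key, ← Finset.mul_sum, hgeom, mul_zero]
  · -- k + 1 = n
    intro hkn
    have hk1 : k = n - 1 := by omega
    subst hk1
    rw [hsum]
    have hpn : (p : ℤ_[p]) ^ n = (p : ℤ_[p]) ^ (n - 1) * p := by
      rw [← pow_succ]; congr 1; omega
    set cf : ℤ_[p] → ℤ_[p] := fun b =>
      if h : (p : ℤ_[p]) ^ (n - 1) ∣ b then Classical.choose h else 0 with hcfdef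
    have hcf : ∀ b ∈ T, b = (p : ℤ_[p]) ^ (n - 1) * cf b := by
      intro b hb
      have h := (hTmem b hb).1
      simp only [hcfdef, dif_pos h]
      exact Classical.choose_spec h
    set mf : ℤ_[p] → ℕ := fun b => ((cf b).appr 1) with hmfdef
    have key : ∑ b ∈ T, (((χ (U b)) : ℂ))⁻¹ = ∑ j ∈ (Finset.range p).erase 0, ξ ^ j := by
      refine Finset.sum_bij (fun b _ => mf b) ?_ ?_ ?_ ?_
      · intro b hb
        refine Finset.mem_erase.mpr ⟨?_, Finset.mem_range.mpr (happr_lt _)⟩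
        intro h0
        have hd : (p : ℤ_[p]) ∣ cf b := by
          have h := aux_appr_one_dvd (cf b)
          have h0' : ((cf b).appr 1) = 0 := h0
          rw [h0'] at h
          simpa using h
        apply (hTmem b hb).2 (by omega)
        obtain ⟨c₂, hc₂⟩ := hd
        refine ⟨c₂, ?_⟩
        rw [hcf b hb, hc₂, pow_succ]
        ring
      · intro b hb b' hb' heq0
        have heq : mf b = mf b' := heq0
        apply TInj b hb b' hb'
        have d1 := aux_appr_one_dvd (cf b)
        have d2 := aux_appr_one_dvd (cf b')
        have d3 : (p : ℤ_[p]) ∣ cf b - cf b' := by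
          have hrw : cf b - cf b' =
              (cf b - ((mf b : ℕ) : ℤ_[p])) - (cf b' - ((mf b' : ℕ) : ℤ_[p]))
                + (((mf b : ℕ) : ℤ_[p]) - ((mf b' : ℕ) : ℤ_[p])) := by ring
          rw [hrw]
          exact dvd_add (dvd_sub d1 d2) (by rw [heq]; simp)
        obtain ⟨c₂, hc₂⟩ := d3
        refine ⟨c₂, ?_⟩
        calc b - b' = (p : ℤ_[p]) ^ (n - 1) * (cf b - cf b') := by
              rw [mul_sub, ← hcf b hb, ← hcf b' hb']
          _ = (p : ℤ_[p]) ^ n * c₂ := by rw [hc₂, hpn]; ring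
      · intro j hj
        obtain ⟨hj0, hjp⟩ := Finset.mem_erase.mp hj
        have hjp' := Finset.mem_range.mp hjp
        have cond1 : (p : ℤ_[p]) ^ (n - 1) ∣ (p : ℤ_[p]) ^ (n - 1) * (j : ℤ_[p]) :=
          dvd_mul_right _ _
        have cond2 : n - 1 < n → ¬ (p : ℤ_[p]) ^ (n - 1 + 1) ∣
            (p : ℤ_[p]) ^ (n - 1) * (j : ℤ_[p]) := by
          intro _
          rintro ⟨c₂, hc₂⟩
          have hjc : (j : ℤ_[p]) = p * c₂ := by
            apply mul_left_cancel₀ (pow_ne_zero (n - 1) hp0)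
            rw [← mul_assoc, ← pow_succ, ← hc₂]
          have hdj : (p : ℤ_[p]) ∣ (j : ℤ_[p]) := ⟨c₂, hjc⟩
          have := Nat.le_of_dvd (Nat.pos_of_ne_zero hj0) (aux_nat_dvd_iff.mp hdj)
          omega
        obtain ⟨b, ⟨hbT, hdvd⟩, -⟩ := hTrep _ cond1 cond2
        refine ⟨b, hbT, ?_⟩
        obtain ⟨c₂, hc₂⟩ := hdvd
        have e3 : cf b - (j : ℤ_[p]) = -(p * c₂) := by
          apply mul_left_cancel₀ (pow_ne_zero (n - 1) hp0)
          calc (p : ℤ_[p]) ^ (n - 1) * (cf b - (j : ℤ_[p]))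
              = -((p : ℤ_[p]) ^ (n - 1) * (j : ℤ_[p]) - (p : ℤ_[p]) ^ (n - 1) * cf b) := by
                ring
            _ = -((p : ℤ_[p]) ^ (n - 1) * (j : ℤ_[p]) - b) := by rw [← hcf b hbT]
            _ = -((p : ℤ_[p]) ^ n * c₂) := by rw [hc₂]
            _ = (p : ℤ_[p]) ^ (n - 1) * -(p * c₂) := by rw [hpn]; ring
        have d5 : (p : ℤ_[p]) ∣ ((mf b : ℕ) : ℤ_[p]) - (j : ℤ_[p]) := by
          have d1 := aux_appr_one_dvd (cf b)
          have hrw : ((mf b : ℕ) : ℤ_[p]) - (j : ℤ_[p]) =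
              -(cf b - ((mf b : ℕ) : ℤ_[p])) + (cf b - (j : ℤ_[p])) := by ring
          rw [hrw, e3]
          exact dvd_add (dvd_neg.mpr d1) ⟨-c₂, by ring⟩
        exact aux_nat_eq_of_cong (happr_lt _) hjp' d5
      · intro b hb
        have h1 : χ (U b) = ζ ^ (mf b) := by
          conv_lhs => rw [hcf b hb]
          rw [hval]
        rw [h1, Units.val_pow_eq_pow_val, ← inv_pow]
    rw [key]
    have h : ξ ^ 0 + ∑ j ∈ (Finset.range p).erase 0, ξ ^ j
        = ∑ j ∈ Finset.range p, ξ ^ j :=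
      Finset.add_sum_erase _ _ (Finset.mem_range.mpr hp.pos)
    rw [hgeom, pow_zero] at h
    have h2 := eq_neg_of_add_eq_zero_right h
    simpa using h2
  · -- k = n
    intro hkn
    subst hkn
    obtain ⟨b₀, ⟨hb₀T, -⟩, -⟩ := hTrep 0 (dvd_zero _) (fun h => absurd h (lt_irrefl _))
    have hT : T = {b₀} := by
      apply Finset.eq_singleton_iff_unique_mem.mpr
      refine ⟨hb₀T, fun b hb => TInj b hb b₀ hb₀T ?_⟩
      exact dvd_sub (hTmem b hb).1 (hTmem b₀ hb₀T).1
    rw [hsum, hT, Finset.sum_singleton]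
    have hone : χ (U b₀) = 1 := by
      obtain ⟨c, hcc⟩ := (hTmem b₀ hb₀T).1
      apply hχn.1
      refine ⟨⟨1, algebraMap ℤ_[p] E c * θ,
        mul_mem (aux_iota_mem c) hθ.1, ?_⟩, (hUO b₀).1, (hUO b₀).2⟩
      rw [hU b₀, hcc, map_one]
      simp only [map_mul, map_pow, map_natCast]
      ring
    rw [hone]
    simp
end

section
/- Fix an integer $i \ge 1$. Then every $x \in E^\times$ belongs to the double coset $\mathbb{Q}_p^\times\, y\, \mathcal{O}_{E,i}^\times$ for exactly one element $y$ of the following list: $y = 1 + b\theta$ with $b$ ranging over a complete set of representatives of $\mathbb{Z}_p/p^i\mathbb{Z}_p$, or $y = a + \theta$ with $a$ ranging over a complete set of representatives of $p\mathbb{Z}_p/p^i\mathbb{Z}_p$ (the double coset of $y$ depending only on the residue class of $b$, respectively $a$). -/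
open scoped Classical

open ArakawaQuad

theorem padic_isUnit_iff_not_dvd {p : ℕ} [Fact p.Prime] (s : ℤ_[p]) :
    IsUnit s ↔ ¬ (p : ℤ_[p]) ∣ s := by
  rw [← PadicInt.norm_lt_one_iff_dvd, ← PadicInt.not_isUnit_iff, not_not]

theorem padic_exists_not_pow_dvd {p : ℕ} [Fact p.Prime] (a : ℤ_[p]) (ha : a ≠ 0) :
    ∃ k : ℕ, ¬ (p : ℤ_[p]) ^ k ∣ a := by
  by_contra h
  push_neg at h
  have hp1 : (1:ℝ) < p := by exact_mod_cast (Fact.out : p.Prime).one_lt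
  have hpos : (0:ℝ) < ‖a‖ := by simpa [norm_pos_iff] using ha
  obtain ⟨k, hk⟩ := exists_pow_lt_of_lt_one hpos (by
    rw [inv_lt_one_iff₀]; right; exact hp1 : (p:ℝ)⁻¹ < 1)
  have hd := h k
  rw [← Ideal.mem_span_singleton, ← PadicInt.norm_le_pow_iff_mem_span_pow] at hd
  have : (p:ℝ) ^ (-(k:ℤ)) = ((p:ℝ)⁻¹) ^ k := by
    rw [zpow_neg, zpow_natCast, inv_pow]
  rw [this] at hd
  exact absurd (lt_of_le_of_lt hd hk) (lt_irrefl _)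

theorem padic_den_aux {p : ℕ} [Fact p.Prime] (q : ℚ_[p]) {m : ℕ}
    (h : ‖q‖ ≤ (p:ℝ) ^ m) : ∃ a : ℤ_[p], (a : ℚ_[p]) = q * (p:ℚ_[p]) ^ m := by
  have hp0 : (0:ℝ) < p := by exact_mod_cast (Fact.out : p.Prime).pos
  have hn : ‖q * (p:ℚ_[p]) ^ m‖ ≤ 1 := by
    rw [norm_mul, norm_pow, Padic.norm_p]
    calc ‖q‖ * ((p:ℝ)⁻¹) ^ m ≤ (p:ℝ) ^ m * ((p:ℝ)⁻¹) ^ m := by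
          apply mul_le_mul_of_nonneg_right h (by positivity)
      _ = 1 := by rw [← mul_pow, mul_inv_cancel₀ (ne_of_gt hp0), one_pow]
  exact ⟨⟨_, hn⟩, rfl⟩

theorem padic_den {p : ℕ} [Fact p.Prime] (q r : ℚ_[p]) :
    ∃ (m : ℕ) (a b : ℤ_[p]), (a : ℚ_[p]) = q * (p:ℚ_[p]) ^ m ∧
      (b : ℚ_[p]) = r * (p:ℚ_[p]) ^ m := by
  have hp1 : (1:ℝ) < p := by exact_mod_cast (Fact.out : p.Prime).one_lt
  obtain ⟨m₁, hm₁⟩ := pow_unbounded_of_one_lt ‖q‖ hp1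
  obtain ⟨m₂, hm₂⟩ := pow_unbounded_of_one_lt ‖r‖ hp1
  refine ⟨max m₁ m₂, ?_⟩
  have h1 : ‖q‖ ≤ (p:ℝ) ^ (max m₁ m₂) :=
    le_trans hm₁.le (pow_le_pow_right₀ hp1.le (le_max_left _ _))
  have h2 : ‖r‖ ≤ (p:ℝ) ^ (max m₁ m₂) :=
    le_trans hm₂.le (pow_le_pow_right₀ hp1.le (le_max_right _ _))
  obtain ⟨a, ha⟩ := padic_den_aux q h1
  obtain ⟨b, hb⟩ := padic_den_aux r h2
  exact ⟨a, b, ha, hb⟩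

section Coords
set_option linter.unusedSectionVars false

variable {p : ℕ} [Fact p.Prime]
variable {E : Type*} [Field E] [Algebra ℚ_[p] E] [Algebra ℤ_[p] E]
  [IsScalarTower ℤ_[p] ℚ_[p] E]

theorem algZ_eq (a : ℤ_[p]) :
    algebraMap ℤ_[p] E a = algebraMap ℚ_[p] E (a : ℚ_[p]) := by
  rw [IsScalarTower.algebraMap_apply ℤ_[p] ℚ_[p] E, PadicInt.algebraMap_apply]

theorem pE_pow_eq (i : ℕ) : (p : E) ^ i = algebraMap ℤ_[p] E ((p:ℤ_[p])^i) := by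
  rw [map_pow, map_natCast]

theorem mem_R_coords {θ : E} (hθm : θ ∈ integralClosure ℤ_[p] E) (a b : ℤ_[p]) :
    algebraMap ℤ_[p] E a + algebraMap ℤ_[p] E b * θ ∈ integralClosure ℤ_[p] E :=
  add_mem (Subalgebra.algebraMap_mem _ a) (mul_mem (Subalgebra.algebraMap_mem _ b) hθm)

theorem coords_inj {θ : E} (hθ : IsIntBasis p E θ) {a b a' b' : ℤ_[p]}
    (h : algebraMap ℤ_[p] E a + algebraMap ℤ_[p] E b * θ
       = algebraMap ℤ_[p] E a' + algebraMap ℤ_[p] E b' * θ) : a = a' ∧ b = b' := by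
  obtain ⟨⟨c, d⟩, -, huniq⟩ := hθ.2 _ (mem_R_coords hθ.1 a b)
  have h1 := huniq (a, b) rfl
  have h2 := huniq (a', b') h
  rw [← h2] at h1
  exact ⟨congrArg Prod.fst h1, congrArg Prod.snd h1⟩

theorem coordsQ_zero {θ : E} (hθ : IsIntBasis p E θ) {q r : ℚ_[p]}
    (h : algebraMap ℚ_[p] E q + algebraMap ℚ_[p] E r * θ = 0) : q = 0 ∧ r = 0 := by
  obtain ⟨m, a, b, ha, hb⟩ := padic_den q r
  have hm0 : (p:ℚ_[p]) ^ m ≠ 0 := by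
    apply pow_ne_zero
    exact_mod_cast (Nat.cast_ne_zero (R := ℚ_[p])).2 (Fact.out : p.Prime).ne_zero
  have key : algebraMap ℤ_[p] E a + algebraMap ℤ_[p] E b * θ
      = algebraMap ℤ_[p] E 0 + algebraMap ℤ_[p] E 0 * θ := by
    rw [algZ_eq a, algZ_eq b, ha, hb]
    simp only [map_mul, map_zero]
    calc algebraMap ℚ_[p] E q * algebraMap ℚ_[p] E ((p:ℚ_[p])^m)
        + algebraMap ℚ_[p] E r * algebraMap ℚ_[p] E ((p:ℚ_[p])^m) * θ
        = (algebraMap ℚ_[p] E q + algebraMap ℚ_[p] E r * θ)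
            * algebraMap ℚ_[p] E ((p:ℚ_[p])^m) := by ring
      _ = 0 + 0 * θ := by rw [h]; ring
  obtain ⟨ea, eb⟩ := coords_inj hθ key
  constructor
  · have : (a : ℚ_[p]) = 0 := by rw [ea]; simp
    rw [ha] at this
    exact (mul_eq_zero.1 this).resolve_right hm0
  · have : (b : ℚ_[p]) = 0 := by rw [eb]; simp
    rw [hb] at this
    exact (mul_eq_zero.1 this).resolve_right hm0

theorem coordsQ_inj {θ : E} (hθ : IsIntBasis p E θ) {q r q' r' : ℚ_[p]}
    (h : algebraMap ℚ_[p] E q + algebraMap ℚ_[p] E r * θ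
       = algebraMap ℚ_[p] E q' + algebraMap ℚ_[p] E r' * θ) : q = q' ∧ r = r' := by
  have h0 : algebraMap ℚ_[p] E (q - q') + algebraMap ℚ_[p] E (r - r') * θ = 0 := by
    rw [map_sub, map_sub]
    rw [← sub_eq_zero] at h
    calc _ = (algebraMap ℚ_[p] E q + algebraMap ℚ_[p] E r * θ)
        - (algebraMap ℚ_[p] E q' + algebraMap ℚ_[p] E r' * θ) := by ring
      _ = 0 := h
  obtain ⟨h1, h2⟩ := coordsQ_zero hθ h0
  exact ⟨sub_eq_zero.1 h1, sub_eq_zero.1 h2⟩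

theorem reprQ (hE2 : Module.finrank ℚ_[p] E = 2) {θ : E} (hθ : IsIntBasis p E θ) (x : E) :
    ∃ q r : ℚ_[p], x = algebraMap ℚ_[p] E q + algebraMap ℚ_[p] E r * θ := by
  have : FiniteDimensional ℚ_[p] E := FiniteDimensional.of_finrank_eq_succ hE2
  have hli : LinearIndependent ℚ_[p] ![(1:E), θ] := by
    rw [LinearIndependent.pair_iff]
    intro s t hst
    apply coordsQ_zero hθ
    rw [Algebra.smul_def, Algebra.smul_def, mul_one] at hst
    exact hst
  have hsp := hli.span_eq_top_of_card_eq_finrank (by simp [hE2])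
  have hx : x ∈ Submodule.span ℚ_[p] (Set.range ![(1:E), θ]) := by rw [hsp]; trivial
  rw [Submodule.mem_span_range_iff_exists_fun] at hx
  obtain ⟨c, hc⟩ := hx
  refine ⟨c 0, c 1, ?_⟩
  rw [← hc]
  simp [Fin.sum_univ_two, Algebra.smul_def]

end Coords

section Units
set_option linter.unusedSectionVars false

variable {p : ℕ} [Fact p.Prime]
variable {E : Type*} [Field E] [Algebra ℚ_[p] E] [Algebra ℤ_[p] E]
  [IsScalarTower ℤ_[p] ℚ_[p] E]

theorem pE_mul_coords {θ : E} (a b : ℤ_[p]) :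
    (p : E) * (algebraMap ℤ_[p] E a + algebraMap ℤ_[p] E b * θ)
      = algebraMap ℤ_[p] E ((p:ℤ_[p]) * a) + algebraMap ℤ_[p] E ((p:ℤ_[p]) * b) * θ := by
  simp only [map_mul, map_natCast]
  ring

theorem invR_iff (hE : Unramified p E) {θ : E} (hθ : IsIntBasis p E θ) (a b : ℤ_[p]) :
    (∃ w ∈ integralClosure ℤ_[p] E,
        (algebraMap ℤ_[p] E a + algebraMap ℤ_[p] E b * θ) * w = 1)
      ↔ ¬ ((p:ℤ_[p]) ∣ a ∧ (p:ℤ_[p]) ∣ b) := by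
  rw [hE.2 _ (mem_R_coords hθ.1 a b)]
  apply not_congr
  constructor
  · rintro ⟨w, hwR, he⟩
    obtain ⟨⟨c, d⟩, hcd, -⟩ := hθ.2 w hwR
    rw [hcd, pE_mul_coords] at he
    obtain ⟨h1, h2⟩ := coords_inj hθ he
    exact ⟨⟨c, h1⟩, ⟨d, h2⟩⟩
  · rintro ⟨⟨c, hc⟩, ⟨d, hd⟩⟩
    refine ⟨algebraMap ℤ_[p] E c + algebraMap ℤ_[p] E d * θ, mem_R_coords hθ.1 c d, ?_⟩
    rw [pE_mul_coords, ← hc, ← hd]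

theorem unitR_ne_zero {z w : E} (h : z * w = 1) : z ≠ 0 := by
  intro h0; rw [h0, zero_mul] at h; exact zero_ne_one h

/-- An element of `𝒪_{E,i}^×` (i ≥ 1) has integral coordinates `s + e θ` with
`p ∤ s` and `p^i ∣ e`. -/
theorem decompose_u (hE : Unramified p E) {θ : E} (hθ : IsIntBasis p E θ)
    {i : ℕ} (hi : 1 ≤ i) {u : Eˣ} (hu : MemOEiUnits p E i u) :
    ∃ s e : ℤ_[p], (↑u : E) = algebraMap ℤ_[p] E s + algebraMap ℤ_[p] E e * θ ∧
      ¬ (p:ℤ_[p]) ∣ s ∧ (p:ℤ_[p]) ^ i ∣ e := by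
  obtain ⟨⟨a, w, hwR, hw⟩, huR, huiR⟩ := hu
  obtain ⟨⟨c, d⟩, hcd, -⟩ := hθ.2 w hwR
  refine ⟨a + (p:ℤ_[p])^i * c, (p:ℤ_[p])^i * d, ?_, ?_, ⟨d, rfl⟩⟩
  · rw [hw, hcd, pE_pow_eq]
    simp only [map_add, map_mul]
    ring
  · intro hdvd
    -- then u ∈ p 𝒪_E, contradicting invertibility
    have hinv : ∃ v ∈ integralClosure ℤ_[p] E, (↑u : E) * v = 1 :=
      ⟨(↑u⁻¹ : E), huiR, by
        rw [← Units.val_mul, mul_inv_cancel, Units.val_one]⟩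
    rw [hE.2 _ huR] at hinv
    apply hinv
    obtain ⟨s₁, hs₁⟩ := hdvd
    obtain ⟨e₁, he₁⟩ : (p:ℤ_[p]) ∣ (p:ℤ_[p])^i * d :=
      Dvd.dvd.mul_right (dvd_pow_self _ (by omega)) d
    refine ⟨algebraMap ℤ_[p] E s₁ + algebraMap ℤ_[p] E e₁ * θ, mem_R_coords hθ.1 s₁ e₁, ?_⟩
    have : (↑u : E) = algebraMap ℤ_[p] E (a + (p:ℤ_[p])^i * c)
        + algebraMap ℤ_[p] E ((p:ℤ_[p])^i * d) * θ := by
      rw [hw, hcd, pE_pow_eq]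
      simp only [map_add, map_mul]
      ring
    rw [this, hs₁, he₁, pE_mul_coords]

theorem memOEiUnits_one (i : ℕ) : MemOEiUnits p E i (1 : Eˣ) := by
  refine ⟨⟨1, 0, Subalgebra.zero_mem _, by simp⟩, by simpa using (integralClosure ℤ_[p] E).one_mem,
    by simpa using (integralClosure ℤ_[p] E).one_mem⟩

theorem memOEiUnits_mul {i : ℕ} {u v : Eˣ} (hu : MemOEiUnits p E i u)
    (hv : MemOEiUnits p E i v) : MemOEiUnits p E i (u * v) := by
  obtain ⟨⟨a, w, hwR, hw⟩, huR, huiR⟩ := hu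
  obtain ⟨⟨a', w', hwR', hw'⟩, hvR, hviR⟩ := hv
  refine ⟨⟨a * a', algebraMap ℤ_[p] E a * w' + algebraMap ℤ_[p] E a' * w + (p:E)^i * (w * w'),
      ?_, ?_⟩, ?_, ?_⟩
  · refine add_mem (add_mem (mul_mem (Subalgebra.algebraMap_mem _ _) hwR')
      (mul_mem (Subalgebra.algebraMap_mem _ _) hwR)) (mul_mem ?_ (mul_mem hwR hwR'))
    rw [pE_pow_eq]
    exact Subalgebra.algebraMap_mem _ _
  · rw [Units.val_mul, hw, hw', map_mul]
    ring
  · rw [Units.val_mul]; exact mul_mem huR hvR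
  · rw [mul_inv_rev, Units.val_mul]; exact mul_mem hviR huiR

theorem memOEiUnits_inv (hE : Unramified p E) {θ : E} (hθ : IsIntBasis p E θ)
    {i : ℕ} (hi : 1 ≤ i) {u : Eˣ} (hu : MemOEiUnits p E i u) :
    MemOEiUnits p E i u⁻¹ := by
  obtain ⟨⟨a, w, hwR, hw⟩, huR, huiR⟩ := hu
  have hu1 : (↑u : E) * (↑u⁻¹ : E) = 1 := by
    rw [← Units.val_mul, mul_inv_cancel, Units.val_one]
  have hpa : ¬ (p:ℤ_[p]) ∣ a := by
    intro hdvd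
    have hinv : ∃ v ∈ integralClosure ℤ_[p] E, (↑u : E) * v = 1 := ⟨_, huiR, hu1⟩
    rw [hE.2 _ huR] at hinv
    apply hinv
    obtain ⟨a₁, ha₁⟩ := hdvd
    obtain ⟨j, hj⟩ : ∃ j, i = 1 + j := ⟨i - 1, by omega⟩
    have hmem : algebraMap ℤ_[p] E a₁ + (p:E)^j * w ∈ integralClosure ℤ_[p] E := by
      refine add_mem (Subalgebra.algebraMap_mem _ _) (mul_mem ?_ hwR)
      rw [pE_pow_eq]
      exact Subalgebra.algebraMap_mem _ _
    refine ⟨_, hmem, ?_⟩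
    rw [hw, ha₁, hj, pow_add, pow_one]
    simp only [map_mul, map_natCast]
    ring
  obtain ⟨a', ha'⟩ := ((padic_isUnit_iff_not_dvd a).2 hpa).exists_right_inv
  have key : (↑u⁻¹ : E) = algebraMap ℤ_[p] E a'
      + (p:E)^i * (-(algebraMap ℤ_[p] E a' * w * (↑u⁻¹ : E))) := by
    have h2 : (↑u : E) * (algebraMap ℤ_[p] E a'
        + (p:E)^i * (-(algebraMap ℤ_[p] E a' * w * (↑u⁻¹ : E)))) = 1 := by
      have e1 : (↑u : E) * (algebraMap ℤ_[p] E a'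
          + (p:E)^i * (-(algebraMap ℤ_[p] E a' * w * (↑u⁻¹ : E))))
          = algebraMap ℤ_[p] E a' * ((↑u:E) - (p:E)^i * w)
            + (p:E)^i * algebraMap ℤ_[p] E a' * w * (1 - (↑u:E)*(↑u⁻¹:E)) := by ring
      rw [e1, hu1, hw]
      have e2 : (algebraMap ℤ_[p] E a + (p:E)^i*w - (p:E)^i*w) = algebraMap ℤ_[p] E a := by
        ring
      rw [e2, ← map_mul, mul_comm a' a, ha', map_one]
      ring
    rw [Units.val_inv_eq_inv_val] at h2 ⊢
    exact inv_eq_of_mul_eq_one_right h2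
  refine ⟨⟨a', -(algebraMap ℤ_[p] E a' * w * (↑u⁻¹ : E)), ?_, key⟩, huiR, by simpa using huR⟩
  exact neg_mem (mul_mem (mul_mem (Subalgebra.algebraMap_mem _ _) hwR) huiR)

end Units

section Cosets
set_option linter.unusedSectionVars false

variable {p : ℕ} [Fact p.Prime]
variable {E : Type*} [Field E] [Algebra ℚ_[p] E] [Algebra ℤ_[p] E]
  [IsScalarTower ℤ_[p] ℚ_[p] E]

/-- If `z, z'` are units of `𝒪_E` with `z = z' + p^i c`, `c ∈ 𝒪_E`, then
`z = z' u` for some `u ∈ 𝒪_{E,i}^×`. -/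
theorem unit_quot {i : ℕ} {z z' w w' c : E}
    (hzR : z ∈ integralClosure ℤ_[p] E) (hz'R : z' ∈ integralClosure ℤ_[p] E)
    (hwR : w ∈ integralClosure ℤ_[p] E) (hw'R : w' ∈ integralClosure ℤ_[p] E)
    (hzw : z * w = 1) (hz'w' : z' * w' = 1)
    (hcR : c ∈ integralClosure ℤ_[p] E) (hc : z = z' + (p:E)^i * c) :
    ∃ u : Eˣ, MemOEiUnits p E i u ∧ z = z' * ↑u := by
  have hz0 : z ≠ 0 := unitR_ne_zero hzw
  have hz'0 : z' ≠ 0 := unitR_ne_zero hz'w'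
  have hw'0 : w' ≠ 0 := unitR_ne_zero (by rw [mul_comm] at hz'w'; exact hz'w')
  refine ⟨Units.mk0 (w' * z) (mul_ne_zero hw'0 hz0), ⟨⟨1, w' * c, mul_mem hw'R hcR, ?_⟩,
      ?_, ?_⟩, ?_⟩
  · show w' * z = algebraMap ℤ_[p] E 1 + (p:E)^i * (w' * c)
    rw [map_one, hc]
    calc w' * (z' + (p:E)^i * c) = z' * w' + (p:E)^i * (w' * c) := by ring
      _ = 1 + (p:E)^i * (w' * c) := by rw [hz'w']
  · exact mul_mem hw'R hzR
  · show ((Units.mk0 (w' * z) _)⁻¹ : Eˣ).val ∈ integralClosure ℤ_[p] E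
    have : ((Units.mk0 (w' * z) (mul_ne_zero hw'0 hz0))⁻¹ : Eˣ).val = w * z' := by
      rw [Units.val_inv_eq_inv_val, Units.val_mk0]
      apply inv_eq_of_mul_eq_one_right
      calc w' * z * (w * z') = (z * w) * (z' * w') := by ring
        _ = 1 := by rw [hzw, hz'w', one_mul]
    rw [this]
    exact mul_mem hwR hz'R
  · show z = z' * (w' * z)
    calc z = (z' * w') * z := by rw [hz'w', one_mul]
      _ = z' * (w' * z) := by ring

theorem incoset_mul_unit (hE : Unramified p E) {θ : E} (hθ : IsIntBasis p E θ)
    {i : ℕ} (hi : 1 ≤ i) {u₀ : Eˣ} (hu₀ : MemOEiUnits p E i u₀) (y x : E) :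
    InCoset p E i (y * ↑u₀) x ↔ InCoset p E i y x := by
  constructor
  · rintro ⟨t, u, hu, hx⟩
    refine ⟨t, u₀ * u, memOEiUnits_mul hu₀ hu, ?_⟩
    rw [hx, Units.val_mul]; ring
  · rintro ⟨t, u, hu, hx⟩
    refine ⟨t, u₀⁻¹ * u, memOEiUnits_mul (memOEiUnits_inv hE hθ hi hu₀) hu, ?_⟩
    rw [hx, Units.val_mul, Units.val_inv_eq_inv_val]
    field_simp

theorem p_not_dvd_one' {p : ℕ} [Fact p.Prime] : ¬ (p:ℤ_[p]) ∣ 1 := fun h =>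
  (mem_nonunits_iff.1 PadicInt.p_nonunit) (isUnit_of_dvd_one h)

/-- Claim 1: congruent `b`'s give the same coset. -/
theorem claim_b (hE : Unramified p E) {θ : E} (hθ : IsIntBasis p E θ)
    {i : ℕ} (hi : 1 ≤ i) {b b' : ℤ_[p]} (hbb : (p:ℤ_[p])^i ∣ (b - b')) (x : E) :
    InCoset p E i (1 + algebraMap ℤ_[p] E b * θ) x ↔
      InCoset p E i (1 + algebraMap ℤ_[p] E b' * θ) x := by
  obtain ⟨d, hd⟩ := hbb
  have e1 : (1:E) + algebraMap ℤ_[p] E b * θ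
      = algebraMap ℤ_[p] E 1 + algebraMap ℤ_[p] E b * θ := by rw [map_one]
  have e1' : (1:E) + algebraMap ℤ_[p] E b' * θ
      = algebraMap ℤ_[p] E 1 + algebraMap ℤ_[p] E b' * θ := by rw [map_one]
  obtain ⟨w, hwR, hw⟩ := (invR_iff hE hθ 1 b).2 (by rintro ⟨h, -⟩; exact p_not_dvd_one' h)
  obtain ⟨w', hw'R, hw'⟩ := (invR_iff hE hθ 1 b').2 (by rintro ⟨h, -⟩; exact p_not_dvd_one' h)
  have hc : (1:E) + algebraMap ℤ_[p] E b * θ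
      = ((1:E) + algebraMap ℤ_[p] E b' * θ) + (p:E)^i * (algebraMap ℤ_[p] E d * θ) := by
    have hb : b = (p:ℤ_[p])^i * d + b' := sub_eq_iff_eq_add.mp hd
    rw [hb, pE_pow_eq]
    simp only [map_add, map_mul]
    ring
  obtain ⟨u₀, hu₀, hzz⟩ := unit_quot (i := i)
    (by rw [e1]; exact mem_R_coords hθ.1 1 b)
    (by rw [e1']; exact mem_R_coords hθ.1 1 b') hwR hw'R
    (by rw [e1]; exact hw) (by rw [e1']; exact hw')
    (mul_mem (Subalgebra.algebraMap_mem _ d) hθ.1) hc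
  rw [hzz]
  exact incoset_mul_unit hE hθ hi hu₀ _ x

/-- Claim 2: congruent `a`'s give the same coset. -/
theorem claim_a (hE : Unramified p E) {θ : E} (hθ : IsIntBasis p E θ)
    {i : ℕ} (hi : 1 ≤ i) {a a' : ℤ_[p]} (haa : (p:ℤ_[p])^i ∣ (a - a')) (x : E) :
    InCoset p E i (algebraMap ℤ_[p] E a + θ) x ↔
      InCoset p E i (algebraMap ℤ_[p] E a' + θ) x := by
  obtain ⟨d, hd⟩ := haa
  have e1 : algebraMap ℤ_[p] E a + θ
      = algebraMap ℤ_[p] E a + algebraMap ℤ_[p] E 1 * θ := by rw [map_one, one_mul]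
  have e1' : algebraMap ℤ_[p] E a' + θ
      = algebraMap ℤ_[p] E a' + algebraMap ℤ_[p] E 1 * θ := by rw [map_one, one_mul]
  obtain ⟨w, hwR, hw⟩ := (invR_iff hE hθ a 1).2 (by rintro ⟨-, h⟩; exact p_not_dvd_one' h)
  obtain ⟨w', hw'R, hw'⟩ := (invR_iff hE hθ a' 1).2 (by rintro ⟨-, h⟩; exact p_not_dvd_one' h)
  have hc : algebraMap ℤ_[p] E a + θ
      = (algebraMap ℤ_[p] E a' + θ) + (p:E)^i * (algebraMap ℤ_[p] E d) := by
    have ha : a = (p:ℤ_[p])^i * d + a' := sub_eq_iff_eq_add.mp hd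
    rw [ha, pE_pow_eq]
    simp only [map_add, map_mul]
    ring
  obtain ⟨u₀, hu₀, hzz⟩ := unit_quot (i := i)
    (by rw [e1]; exact mem_R_coords hθ.1 a 1)
    (by rw [e1']; exact mem_R_coords hθ.1 a' 1) hwR hw'R
    (by rw [e1]; exact hw) (by rw [e1']; exact hw')
    (Subalgebra.algebraMap_mem _ d) hc
  rw [hzz]
  exact incoset_mul_unit hE hθ hi hu₀ _ x

/-- If `x` lies in two cosets, the representatives are related. -/
theorem cross (hE : Unramified p E) {θ : E} (hθ : IsIntBasis p E θ)
    {i : ℕ} (hi : 1 ≤ i) {y y' x : E}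
    (h1 : InCoset p E i y x) (h2 : InCoset p E i y' x) :
    ∃ t : ℚ_[p]ˣ, ∃ u : Eˣ, MemOEiUnits p E i u ∧
      y' = algebraMap ℚ_[p] E ↑t * y * ↑u := by
  obtain ⟨t1, u1, hu1, he1⟩ := h1
  obtain ⟨t2, u2, hu2, he2⟩ := h2
  have key : algebraMap ℚ_[p] E ↑t2 * y' * ↑u2 = algebraMap ℚ_[p] E ↑t1 * y * ↑u1 := by
    rw [← he1, ← he2]
  have ht2 : algebraMap ℚ_[p] E (↑t2 : ℚ_[p]) ≠ 0 := by
    intro h0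
    exact t2.ne_zero ((algebraMap ℚ_[p] E).injective (by rw [h0, map_zero]))
  have hu2' : (↑u2 : E) ≠ 0 := u2.ne_zero
  refine ⟨t1 * t2⁻¹, u1 * u2⁻¹, memOEiUnits_mul hu1 (memOEiUnits_inv hE hθ hi hu2), ?_⟩
  rw [Units.val_mul, Units.val_mul, Units.val_inv_eq_inv_val, Units.val_inv_eq_inv_val,
    map_mul, map_inv₀]
  field_simp
  linear_combination key

end Cosets

section Uniq
set_option linter.unusedSectionVars false

variable {p : ℕ} [Fact p.Prime]
variable {E : Type*} [Field E] [Algebra ℚ_[p] E] [Algebra ℤ_[p] E]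
  [IsScalarTower ℤ_[p] ℚ_[p] E]

theorem theta_sq {θ : E} (hθ : IsIntBasis p E θ) : ∃ α β : ℤ_[p],
    θ^2 = algebraMap ℤ_[p] E α + algebraMap ℤ_[p] E β * θ := by
  obtain ⟨⟨α, β⟩, h, -⟩ := hθ.2 (θ^2) (pow_mem hθ.1 2)
  exact ⟨α, β, h⟩

theorem expand_mul {θ : E} {α β : ℤ_[p]}
    (hsq : θ^2 = algebraMap ℤ_[p] E α + algebraMap ℤ_[p] E β * θ) (a b s e : ℤ_[p]) :
    (algebraMap ℤ_[p] E a + algebraMap ℤ_[p] E b * θ)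
        * (algebraMap ℤ_[p] E s + algebraMap ℤ_[p] E e * θ)
      = algebraMap ℤ_[p] E (a*s + b*e*α)
        + algebraMap ℤ_[p] E (a*e + b*s + b*e*β) * θ := by
  have h : (algebraMap ℤ_[p] E a + algebraMap ℤ_[p] E b * θ)
        * (algebraMap ℤ_[p] E s + algebraMap ℤ_[p] E e * θ)
      = algebraMap ℤ_[p] E a * algebraMap ℤ_[p] E s
        + algebraMap ℤ_[p] E b * algebraMap ℤ_[p] E e * θ^2
        + (algebraMap ℤ_[p] E a * algebraMap ℤ_[p] E e
          + algebraMap ℤ_[p] E b * algebraMap ℤ_[p] E s) * θ := by ring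
  rw [h, hsq]
  simp only [map_add, map_mul]
  ring

/-- Extract integral coordinate identities from a double-coset relation. -/
theorem coords_of_rel (hE : Unramified p E) {θ : E} (hθ : IsIntBasis p E θ)
    {i : ℕ} (hi : 1 ≤ i) {t : ℚ_[p]ˣ} {u : Eˣ} (hu : MemOEiUnits p E i u)
    {a b a' b' : ℤ_[p]}
    (heq : algebraMap ℤ_[p] E a' + algebraMap ℤ_[p] E b' * θ
      = algebraMap ℚ_[p] E ↑t * (algebraMap ℤ_[p] E a + algebraMap ℤ_[p] E b * θ) * ↑u) :
    ∃ s e α β : ℤ_[p], ¬ (p:ℤ_[p]) ∣ s ∧ (p:ℤ_[p])^i ∣ e ∧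
      ((a':ℚ_[p]) = ↑t * ((a*s + b*e*α : ℤ_[p]) : ℚ_[p])) ∧
      ((b':ℚ_[p]) = ↑t * ((a*e + b*s + b*e*β : ℤ_[p]) : ℚ_[p])) := by
  obtain ⟨s, e, hse, hps, hpe⟩ := decompose_u hE hθ hi hu
  obtain ⟨α, β, hsq⟩ := theta_sq hθ
  have h3 : algebraMap ℤ_[p] E a' + algebraMap ℤ_[p] E b' * θ
      = algebraMap ℚ_[p] E ↑t * (algebraMap ℤ_[p] E (a*s + b*e*α)
        + algebraMap ℤ_[p] E (a*e + b*s + b*e*β) * θ) := by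
    rw [heq, mul_assoc, mul_assoc, hse, ← mul_assoc, ← mul_assoc, mul_assoc,
      ← expand_mul hsq a b s e]
  have h4 : algebraMap ℚ_[p] E ((a':ℤ_[p]):ℚ_[p])
        + algebraMap ℚ_[p] E ((b':ℤ_[p]):ℚ_[p]) * θ
      = algebraMap ℚ_[p] E (↑t * ((a*s + b*e*α : ℤ_[p]):ℚ_[p]))
        + algebraMap ℚ_[p] E (↑t * ((a*e + b*s + b*e*β : ℤ_[p]):ℚ_[p])) * θ := by
    rw [map_mul, map_mul, ← algZ_eq, ← algZ_eq, ← algZ_eq, ← algZ_eq, h3]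
    ring
  obtain ⟨h5, h6⟩ := coordsQ_inj hθ h4
  exact ⟨s, e, α, β, hps, hpe, h5, h6⟩

theorem cross_mul {p : ℕ} [Fact p.Prime] {t : ℚ_[p]} {x y A B : ℤ_[p]}
    (hA : (x:ℚ_[p]) = t * A) (hB : (y:ℚ_[p]) = t * B) : x * B = y * A := by
  have h : ((x*B : ℤ_[p]) : ℚ_[p]) = ((y*A : ℤ_[p]) : ℚ_[p]) := by
    push_cast
    rw [hA, hB]; ring
  exact Subtype.coe_injective h

theorem uniq_bb (hE : Unramified p E) {θ : E} (hθ : IsIntBasis p E θ)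
    {i : ℕ} (hi : 1 ≤ i) {b b' : ℤ_[p]} {t : ℚ_[p]ˣ} {u : Eˣ}
    (hu : MemOEiUnits p E i u)
    (heq : 1 + algebraMap ℤ_[p] E b' * θ
      = algebraMap ℚ_[p] E ↑t * (1 + algebraMap ℤ_[p] E b * θ) * ↑u) :
    (p:ℤ_[p])^i ∣ (b - b') := by
  have heq' : algebraMap ℤ_[p] E 1 + algebraMap ℤ_[p] E b' * θ
      = algebraMap ℚ_[p] E ↑t * (algebraMap ℤ_[p] E 1 + algebraMap ℤ_[p] E b * θ) * ↑u := by
    rw [map_one]; exact heq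
  obtain ⟨s, e, α, β, hps, hpe, hA, hB⟩ := coords_of_rel hE hθ hi hu heq'
  have hpe1 : (p:ℤ_[p]) ∣ e :=
    dvd_trans (dvd_pow_self _ (Nat.one_le_iff_ne_zero.mp hi)) hpe
  have hpA : ¬ (p:ℤ_[p]) ∣ (1*s + b*e*α) := by
    intro h
    have h2 : (p:ℤ_[p]) ∣ (1*s + b*e*α) - b*e*α := dvd_sub h ((hpe1.mul_left b).mul_right α)
    have h3 : (1*s + b*e*α) - b*e*α = s := by ring
    exact hps (h3 ▸ h2)
  obtain ⟨A', hA'⟩ := ((padic_isUnit_iff_not_dvd _).2 hpA).exists_right_inv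
  have hkey : (1:ℤ_[p]) * (1*e + b*s + b*e*β) = b' * (1*s + b*e*α) := cross_mul hA hB
  have h7 : (b' - b) * (1*s + b*e*α) = e * (1 + b*β - b*b*α) := by
    have h8 : b' * (1*s + b*e*α) = 1*e + b*s + b*e*β := by rw [← hkey]; ring
    calc (b' - b) * (1*s + b*e*α)
        = b' * (1*s + b*e*α) - b * (1*s + b*e*α) := by ring
      _ = (1*e + b*s + b*e*β) - b * (1*s + b*e*α) := by rw [h8]
      _ = e * (1 + b*β - b*b*α) := by ring
  have h9 : (p:ℤ_[p])^i ∣ (b' - b) * (1*s + b*e*α) := h7 ▸ (hpe.mul_right _)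
  have h10 : (p:ℤ_[p])^i ∣ (b' - b) := by
    have h11 := h9.mul_right A'
    have e3 : (b' - b) * (1*s + b*e*α) * A' = b' - b := by
      rw [mul_assoc, hA', mul_one]
    rwa [e3] at h11
  exact dvd_sub_comm.mp h10

theorem uniq_aa (hE : Unramified p E) {θ : E} (hθ : IsIntBasis p E θ)
    {i : ℕ} (hi : 1 ≤ i) {a a' : ℤ_[p]} {t : ℚ_[p]ˣ} {u : Eˣ}
    (hu : MemOEiUnits p E i u)
    (heq : algebraMap ℤ_[p] E a' + θ
      = algebraMap ℚ_[p] E ↑t * (algebraMap ℤ_[p] E a + θ) * ↑u) :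
    (p:ℤ_[p])^i ∣ (a - a') := by
  have heq' : algebraMap ℤ_[p] E a' + algebraMap ℤ_[p] E 1 * θ
      = algebraMap ℚ_[p] E ↑t * (algebraMap ℤ_[p] E a + algebraMap ℤ_[p] E 1 * θ) * ↑u := by
    rw [map_one, one_mul]; exact heq
  obtain ⟨s, e, α, β, hps, hpe, hA, hB⟩ := coords_of_rel hE hθ hi hu heq'
  have hpe1 : (p:ℤ_[p]) ∣ e :=
    dvd_trans (dvd_pow_self _ (Nat.one_le_iff_ne_zero.mp hi)) hpe
  have hpB : ¬ (p:ℤ_[p]) ∣ (a*e + 1*s + 1*e*β) := by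
    intro h
    have h2 : (p:ℤ_[p]) ∣ (a*e + 1*s + 1*e*β) - (a*e + 1*e*β) :=
      dvd_sub h (dvd_add (hpe1.mul_left a) ((hpe1.mul_left 1).mul_right β))
    have h3 : (a*e + 1*s + 1*e*β) - (a*e + 1*e*β) = s := by ring
    exact hps (h3 ▸ h2)
  obtain ⟨B', hB'⟩ := ((padic_isUnit_iff_not_dvd _).2 hpB).exists_right_inv
  have hkey : a' * (a*e + 1*s + 1*e*β) = 1 * (a*s + 1*e*α) := cross_mul hA hB
  have h7 : (a' - a) * (a*e + 1*s + 1*e*β) = e * (α - a*a - a*β) := by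
    calc (a' - a) * (a*e + 1*s + 1*e*β)
        = a' * (a*e + 1*s + 1*e*β) - a * (a*e + 1*s + 1*e*β) := by ring
      _ = 1 * (a*s + 1*e*α) - a * (a*e + 1*s + 1*e*β) := by rw [hkey]
      _ = e * (α - a*a - a*β) := by ring
  have h9 : (p:ℤ_[p])^i ∣ (a' - a) * (a*e + 1*s + 1*e*β) := h7 ▸ (hpe.mul_right _)
  have h10 : (p:ℤ_[p])^i ∣ (a' - a) := by
    have h11 := h9.mul_right B'
    have e3 : (a' - a) * (a*e + 1*s + 1*e*β) * B' = a' - a := by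
      rw [mul_assoc, hB', mul_one]
    rwa [e3] at h11
  exact dvd_sub_comm.mp h10

theorem uniq_ab (hE : Unramified p E) {θ : E} (hθ : IsIntBasis p E θ)
    {i : ℕ} (hi : 1 ≤ i) {b a : ℤ_[p]} (hpa : (p:ℤ_[p]) ∣ a) {t : ℚ_[p]ˣ} {u : Eˣ}
    (hu : MemOEiUnits p E i u)
    (heq : algebraMap ℤ_[p] E a + θ
      = algebraMap ℚ_[p] E ↑t * (1 + algebraMap ℤ_[p] E b * θ) * ↑u) :
    False := by
  have heq' : algebraMap ℤ_[p] E a + algebraMap ℤ_[p] E 1 * θ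
      = algebraMap ℚ_[p] E ↑t * (algebraMap ℤ_[p] E 1 + algebraMap ℤ_[p] E b * θ) * ↑u := by
    rw [map_one, one_mul]; exact heq
  obtain ⟨s, e, α, β, hps, hpe, hA, hB⟩ := coords_of_rel hE hθ hi hu heq'
  have hpe1 : (p:ℤ_[p]) ∣ e :=
    dvd_trans (dvd_pow_self _ (Nat.one_le_iff_ne_zero.mp hi)) hpe
  have hpA : ¬ (p:ℤ_[p]) ∣ (1*s + b*e*α) := by
    intro h
    have h2 : (p:ℤ_[p]) ∣ (1*s + b*e*α) - b*e*α := dvd_sub h ((hpe1.mul_left b).mul_right α)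
    have h3 : (1*s + b*e*α) - b*e*α = s := by ring
    exact hps (h3 ▸ h2)
  have hkey : a * (1*e + b*s + b*e*β) = 1 * (1*s + b*e*α) := cross_mul hA hB
  apply hpA
  have : (p:ℤ_[p]) ∣ a * (1*e + b*s + b*e*β) := hpa.mul_right _
  rw [hkey, one_mul] at this
  exact this

end Uniq

section Exist
set_option linter.unusedSectionVars false

variable {p : ℕ} [Fact p.Prime]
variable {E : Type*} [Field E] [Algebra ℚ_[p] E] [Algebra ℤ_[p] E]
  [IsScalarTower ℤ_[p] ℚ_[p] E]

theorem strip (θ : E) : ∀ k : ℕ, ∀ a b : ℤ_[p],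
    (¬ (p:ℤ_[p])^k ∣ a ∨ ¬ (p:ℤ_[p])^k ∣ b) →
    ∃ (m : ℕ) (a' b' : ℤ_[p]), (¬ (p:ℤ_[p]) ∣ a' ∨ ¬ (p:ℤ_[p]) ∣ b') ∧
      algebraMap ℤ_[p] E a + algebraMap ℤ_[p] E b * θ
        = (p:E)^m * (algebraMap ℤ_[p] E a' + algebraMap ℤ_[p] E b' * θ) := by
  intro k
  induction k with
  | zero =>
    intro a b h
    rcases h with h | h <;> rw [pow_zero] at h
    · exact absurd (one_dvd a) h
    · exact absurd (one_dvd b) h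
  | succ k ih =>
    intro a b h
    by_cases hab : (p:ℤ_[p]) ∣ a ∧ (p:ℤ_[p]) ∣ b
    · obtain ⟨⟨a₁, ha₁⟩, ⟨b₁, hb₁⟩⟩ := hab
      have h' : ¬ (p:ℤ_[p])^k ∣ a₁ ∨ ¬ (p:ℤ_[p])^k ∣ b₁ := by
        rcases h with h | h
        · left
          intro hd
          exact h (by rw [ha₁, pow_succ']; exact mul_dvd_mul_left _ hd)
        · right
          intro hd
          exact h (by rw [hb₁, pow_succ']; exact mul_dvd_mul_left _ hd)
      obtain ⟨m, a', b', hab', he⟩ := ih a₁ b₁ h'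
      refine ⟨m+1, a', b', hab', ?_⟩
      calc algebraMap ℤ_[p] E a + algebraMap ℤ_[p] E b * θ
          = (p:E) * (algebraMap ℤ_[p] E a₁ + algebraMap ℤ_[p] E b₁ * θ) := by
            rw [ha₁, hb₁, pE_mul_coords]
        _ = (p:E) * ((p:E)^m * (algebraMap ℤ_[p] E a' + algebraMap ℤ_[p] E b' * θ)) := by
            rw [he]
        _ = (p:E)^(m+1) * (algebraMap ℤ_[p] E a' + algebraMap ℤ_[p] E b' * θ) := by ring
    · exact ⟨0, a, b, not_and_or.mp hab, by rw [pow_zero, one_mul]⟩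

theorem exists_rep (hE : Unramified p E) {θ : E} (hθ : IsIntBasis p E θ)
    {i : ℕ} (x : E) (hx : x ≠ 0) :
    (∃ b : ℤ_[p], InCoset p E i (1 + algebraMap ℤ_[p] E b * θ) x) ∨
    (∃ a : ℤ_[p], (p:ℤ_[p]) ∣ a ∧ InCoset p E i (algebraMap ℤ_[p] E a + θ) x) := by
  have hp0 : ((p:ℚ_[p])) ≠ 0 := by exact_mod_cast (Fact.out : p.Prime).ne_zero
  obtain ⟨q, r, hqr⟩ := reprQ hE.1 hθ x
  obtain ⟨m, a₀, b₀, ha₀, hb₀⟩ := padic_den q r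
  have hxm : x * algebraMap ℚ_[p] E ((p:ℚ_[p])^m)
      = algebraMap ℤ_[p] E a₀ + algebraMap ℤ_[p] E b₀ * θ := by
    rw [hqr, algZ_eq, algZ_eq, ha₀, hb₀, map_mul, map_mul]
    ring
  have hpm : ((p:ℚ_[p])^m) ≠ 0 := pow_ne_zero _ hp0
  have hpmE : algebraMap ℚ_[p] E ((p:ℚ_[p])^m) ≠ 0 := fun h =>
    hpm ((algebraMap ℚ_[p] E).injective (by rw [h, map_zero]))
  have hk : ∃ k, ¬ (p:ℤ_[p])^k ∣ a₀ ∨ ¬ (p:ℤ_[p])^k ∣ b₀ := by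
    have hab0 : a₀ ≠ 0 ∨ b₀ ≠ 0 := by
      by_contra h
      push_neg at h
      rw [h.1, h.2] at hxm
      simp only [map_zero, zero_add, zero_mul, add_zero] at hxm
      exact hx ((mul_eq_zero.1 hxm).resolve_right hpmE)
    rcases hab0 with h | h
    · obtain ⟨k, hk⟩ := padic_exists_not_pow_dvd a₀ h
      exact ⟨k, Or.inl hk⟩
    · obtain ⟨k, hk⟩ := padic_exists_not_pow_dvd b₀ h
      exact ⟨k, Or.inr hk⟩
  obtain ⟨k, hk⟩ := hk
  obtain ⟨m', a, b, hab, he⟩ := strip θ k a₀ b₀ hk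
  set c : ℚ_[p] := (p:ℚ_[p])^m' * ((p:ℚ_[p])^m)⁻¹ with hcdef
  have hc0 : c ≠ 0 := mul_ne_zero (pow_ne_zero _ hp0) (inv_ne_zero hpm)
  have hx2 : x = algebraMap ℚ_[p] E c
      * (algebraMap ℤ_[p] E a + algebraMap ℤ_[p] E b * θ) := by
    have h1 : (p:E)^m' = algebraMap ℚ_[p] E ((p:ℚ_[p])^m') := by rw [map_pow, map_natCast]
    have h2 : x * algebraMap ℚ_[p] E ((p:ℚ_[p])^m)
        = algebraMap ℚ_[p] E ((p:ℚ_[p])^m')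
          * (algebraMap ℤ_[p] E a + algebraMap ℤ_[p] E b * θ) := by
      rw [hxm, he, h1]
    calc x = (x * algebraMap ℚ_[p] E ((p:ℚ_[p])^m))
          * (algebraMap ℚ_[p] E ((p:ℚ_[p])^m))⁻¹ := by
            rw [mul_assoc, mul_inv_cancel₀ hpmE, mul_one]
      _ = (algebraMap ℚ_[p] E ((p:ℚ_[p])^m')
          * (algebraMap ℤ_[p] E a + algebraMap ℤ_[p] E b * θ))
          * (algebraMap ℚ_[p] E ((p:ℚ_[p])^m))⁻¹ := by rw [h2]
      _ = algebraMap ℚ_[p] E c * (algebraMap ℤ_[p] E a + algebraMap ℤ_[p] E b * θ) := by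
          rw [hcdef, map_mul, map_inv₀]; ring
  by_cases hpa : (p:ℤ_[p]) ∣ a
  · have hpb : ¬ (p:ℤ_[p]) ∣ b := by tauto
    obtain ⟨b', hb'⟩ := ((padic_isUnit_iff_not_dvd b).2 hpb).exists_right_inv
    have hb0 : b ≠ 0 := by
      intro h0
      rw [h0, zero_mul] at hb'
      exact zero_ne_one hb'
    have hbQ : ((b:ℤ_[p]):ℚ_[p]) ≠ 0 := (PadicInt.coe_ne_zero (x := b)).mpr hb0
    right
    refine ⟨a * b', hpa.mul_right b', Units.mk0 (c * (b:ℚ_[p])) (mul_ne_zero hc0 hbQ), 1,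
      memOEiUnits_one _, ?_⟩
    have e : algebraMap ℤ_[p] E b * (algebraMap ℤ_[p] E (a*b') + θ)
        = algebraMap ℤ_[p] E a + algebraMap ℤ_[p] E b * θ := by
      have e2 : b * (a * b') = a := by
        calc b * (a*b') = (b*b') * a := by ring
          _ = a := by rw [hb', one_mul]
      calc algebraMap ℤ_[p] E b * (algebraMap ℤ_[p] E (a*b') + θ)
          = algebraMap ℤ_[p] E (b*(a*b')) + algebraMap ℤ_[p] E b * θ := by
            simp only [map_mul]; ring
        _ = _ := by rw [e2]
    rw [Units.val_one, mul_one, Units.val_mk0, map_mul, ← algZ_eq, hx2, ← e]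
    ring
  · obtain ⟨a', ha'⟩ := ((padic_isUnit_iff_not_dvd a).2 hpa).exists_right_inv
    have ha0 : a ≠ 0 := by
      intro h0
      rw [h0, zero_mul] at ha'
      exact zero_ne_one ha'
    have haQ : ((a:ℤ_[p]):ℚ_[p]) ≠ 0 := (PadicInt.coe_ne_zero (x := a)).mpr ha0
    left
    refine ⟨b * a', Units.mk0 (c * (a:ℚ_[p])) (mul_ne_zero hc0 haQ), 1,
      memOEiUnits_one _, ?_⟩
    have e : algebraMap ℤ_[p] E a * (1 + algebraMap ℤ_[p] E (b*a') * θ)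
        = algebraMap ℤ_[p] E a + algebraMap ℤ_[p] E b * θ := by
      have e2 : a * (b * a') = b := by
        calc a * (b*a') = (a*a') * b := by ring
          _ = b := by rw [ha', one_mul]
      calc algebraMap ℤ_[p] E a * (1 + algebraMap ℤ_[p] E (b*a') * θ)
          = algebraMap ℤ_[p] E a + algebraMap ℤ_[p] E (a*(b*a')) * θ := by
            simp only [map_mul]; ring
        _ = _ := by rw [e2]
    rw [Units.val_one, mul_one, Units.val_mk0, map_mul, ← algZ_eq, hx2, ← e]
    ring

end Exist

/-- **Double coset decomposition `ℚ_p^× \ E^× / 𝒪_{E,i}^×`** (Section 3.2(2), inert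
prime case). Let `E/ℚ_p` be an unramified quadratic extension and `{1, θ}` a
`ℤ_p`-basis of `𝒪_E`. For `i ≥ 1`, every `x ∈ E^×` lies in the double coset
`ℚ_p^× y 𝒪_{E,i}^×` for exactly one `y` of the list: `y = 1+bθ` with `b` over
representatives of `ℤ_p/p^i ℤ_p`, or `y = a+θ` with `a` over representatives of
`p ℤ_p/p^i ℤ_p` (the double coset of `y` depending only on the class of `b`,
respectively `a`). -/
theorem double_coset_inert (p : ℕ) [Fact p.Prime]
    (E : Type*) [Field E] [Algebra ℚ_[p] E] [Algebra ℤ_[p] E]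
    [IsScalarTower ℤ_[p] ℚ_[p] E]
    (hE : Unramified p E) (θ : E) (hθ : IsIntBasis p E θ) (i : ℕ) (hi : 1 ≤ i) :
    (∀ b b' : ℤ_[p], (p : ℤ_[p]) ^ i ∣ (b - b') →
      ∀ x : E, InCoset p E i (1 + algebraMap ℤ_[p] E b * θ) x ↔
        InCoset p E i (1 + algebraMap ℤ_[p] E b' * θ) x) ∧
    (∀ a a' : ℤ_[p], (p : ℤ_[p]) ∣ a → (p : ℤ_[p]) ∣ a' → (p : ℤ_[p]) ^ i ∣ (a - a') →
      ∀ x : E, InCoset p E i (algebraMap ℤ_[p] E a + θ) x ↔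
        InCoset p E i (algebraMap ℤ_[p] E a' + θ) x) ∧
    (∀ x : E, x ≠ 0 →
      ((∃ b : ℤ_[p], InCoset p E i (1 + algebraMap ℤ_[p] E b * θ) x) ∨
        (∃ a : ℤ_[p], (p : ℤ_[p]) ∣ a ∧ InCoset p E i (algebraMap ℤ_[p] E a + θ) x)) ∧
      (∀ b b' : ℤ_[p], InCoset p E i (1 + algebraMap ℤ_[p] E b * θ) x →
        InCoset p E i (1 + algebraMap ℤ_[p] E b' * θ) x → (p : ℤ_[p]) ^ i ∣ (b - b')) ∧
      (∀ a a' : ℤ_[p], (p : ℤ_[p]) ∣ a → (p : ℤ_[p]) ∣ a' →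
        InCoset p E i (algebraMap ℤ_[p] E a + θ) x →
        InCoset p E i (algebraMap ℤ_[p] E a' + θ) x → (p : ℤ_[p]) ^ i ∣ (a - a')) ∧
      (∀ b a : ℤ_[p], (p : ℤ_[p]) ∣ a →
        InCoset p E i (1 + algebraMap ℤ_[p] E b * θ) x →
        ¬ InCoset p E i (algebraMap ℤ_[p] E a + θ) x)) := by
  refine ⟨fun b b' h x => claim_b hE hθ hi h x,
    fun a a' _ _ h x => claim_a hE hθ hi h x,
    fun x hx => ⟨exists_rep hE hθ x hx, ?_, ?_, ?_⟩⟩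
  · intro b b' h1 h2
    obtain ⟨t, u, hu, heq⟩ := cross hE hθ hi h1 h2
    exact uniq_bb hE hθ hi hu heq
  · intro a a' hpa hpa' h1 h2
    obtain ⟨t, u, hu, heq⟩ := cross hE hθ hi h1 h2
    exact uniq_aa hE hθ hi hu heq
  · intro b a hpa h1 h2
    obtain ⟨t, u, hu, heq⟩ := cross hE hθ hi h1 h2
    exact uniq_ab hE hθ hi hpa hu heq
end
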